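/- arXiv:1102.4587 — 3 statements merged into one kernel-verified Lean document; each statement's English description precedes it below -/
import Mathlib

section
/- For any function f : [0,T]^2 → ℝ and any rectangle R ⊆ [0,T]^2, the controlled 1-variation equals the grid 1-variation: |f|_{1-var;R} = V_1(f;R). -/
open Set
open scoped ENNReal NNReal

/-- A closed rectangle `[a,b] × [c,d] ⊆ ℝ²`, encoded by its four corner coordinates. -/
structure Rect where
  a : ℝ
  b : ℝ
  c : ℝ
  d : ℝ

noncomputable instance : DecidableEq Rect := fun _ _ => Classical.dec _

/-- The closed rectangle as a subset of the plane. -/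
def Rect.toSet (R : Rect) : Set (ℝ × ℝ) := Set.Icc R.a R.b ×ˢ Set.Icc R.c R.d

/-- The open interior of the rectangle. -/
def Rect.openSet (R : Rect) : Set (ℝ × ℝ) := Set.Ioo R.a R.b ×ˢ Set.Ioo R.c R.d

/-- The rectangle is well formed: `a ≤ b`, `c ≤ d`. -/
def Rect.Valid (R : Rect) : Prop := R.a ≤ R.b ∧ R.c ≤ R.d

/-- Rectangular increment of `f` over `[a,b] × [c,d]`. -/
def Rect.inc (f : ℝ × ℝ → ℝ) (R : Rect) : ℝ :=
  f (R.b, R.d) - f (R.a, R.d) - f (R.b, R.c) + f (R.a, R.c)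

/-- `P` is a partition of `R` into essentially disjoint rectangles. -/
def IsPartition (R : Rect) (P : Finset Rect) : Prop :=
  (∀ Q ∈ P, Q.Valid) ∧
  ((P : Set Rect).Pairwise fun Q Q' => Disjoint Q.openSet Q'.openSet) ∧
  (⋃ Q ∈ P, Q.toSet) = R.toSet

/-- The controlled `p`-variation of `f` over `R`, raised to the power `p`:
`sup` over all partitions of `R` into essentially disjoint rectangles of
`Σ |f(A)|^p`.  So `|f|_{p-var;R} = (cVarSum p f R) ^ (1/p)`. -/
noncomputable def cVarSum (p : ℝ) (f : ℝ × ℝ → ℝ) (R : Rect) : ℝ≥0∞ :=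
  ⨆ (P : Finset Rect) (_ : IsPartition R P),
    ∑ Q ∈ P, ENNReal.ofReal |Rect.inc f Q| ^ p

/-- The grid `p`-variation of `f` over `R`, raised to the power `p`:
`sup` over grid-like partitions (products of dissections of the two sides)
of `Σ_{i,j} |f([t_i,t_{i+1}] × [s_j,s_{j+1}])|^p`.
So `V_p(f;R) = (gridVarSum p f R) ^ (1/p)`. -/
noncomputable def gridVarSum (p : ℝ) (f : ℝ × ℝ → ℝ) (R : Rect) : ℝ≥0∞ :=
  ⨆ (n : ℕ) (m : ℕ) (t : Fin (n+1) → ℝ) (s : Fin (m+1) → ℝ)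
    (_ : Monotone t) (_ : Monotone s)
    (_ : t 0 = R.a) (_ : t (Fin.last n) = R.b)
    (_ : s 0 = R.c) (_ : s (Fin.last m) = R.d),
    ∑ i : Fin n, ∑ j : Fin m,
      ENNReal.ofReal |Rect.inc f ⟨t i.castSucc, t i.succ, s j.castSucc, s j.succ⟩| ^ p

/- ### Auxiliary lemmas -/

lemma tele1 (n : ℕ) (t : Fin (n+1) → ℝ) (ht : Monotone t) {a b : ℝ} (hab : a ≤ b)
    (i0 i1 : Fin (n+1)) (h0 : t i0 = a) (h1 : t i1 = b) (g : ℝ → ℝ) :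
    ∑ i ∈ Finset.univ.filter (fun i : Fin n => a ≤ t i.castSucc ∧ t i.succ ≤ b),
      (g (t i.succ) - g (t i.castSucc)) = g b - g a := by
  set h : Fin (n+1) → ℝ := fun i => g (max a (min b (t i))) with hh
  have key : ∀ i : Fin n,
      (if a ≤ t i.castSucc ∧ t i.succ ≤ b then g (t i.succ) - g (t i.castSucc) else 0)
      = h i.succ - h i.castSucc := by
    intro i
    have hle : t i.castSucc ≤ t i.succ := ht (le_of_lt (Fin.castSucc_lt_succ (i := i)))
    by_cases hc : a ≤ t i.castSucc ∧ t i.succ ≤ b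
    · obtain ⟨h1', h2'⟩ := hc
      have e1 : max a (min b (t i.castSucc)) = t i.castSucc := by
        rw [min_eq_right (hle.trans h2'), max_eq_right h1']
      have e2 : max a (min b (t i.succ)) = t i.succ := by
        rw [min_eq_right h2', max_eq_right (h1'.trans hle)]
      rw [if_pos ⟨h1', h2'⟩, hh]
      simp only []
      rw [e1, e2]
    · rw [if_neg hc]
      rw [not_and_or, not_le, not_le] at hc
      rcases hc with hc | hc
      · have hcs : i.castSucc < i0 := by
          by_contra hcon
          push_neg at hcon
          exact absurd (h0 ▸ ht hcon) (not_le.mpr hc)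
        have hsucc : t i.succ ≤ a := by
          refine h0 ▸ ht ?_
          rw [Fin.le_def]
          rw [Fin.lt_def] at hcs
          simp at hcs ⊢
          omega
        have e1 : max a (min b (t i.castSucc)) = a :=
          max_eq_left (min_le_of_right_le hc.le)
        have e2 : max a (min b (t i.succ)) = a :=
          max_eq_left (min_le_of_right_le hsucc)
        rw [hh]; simp only []; rw [e1, e2, sub_self]
      · have hcs : i1 < i.succ := by
          by_contra hcon
          push_neg at hcon
          exact absurd (h1 ▸ ht hcon) (not_le.mpr hc)
        have hpre : b ≤ t i.castSucc := by
          refine h1 ▸ ht ?_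
          rw [Fin.le_def]
          rw [Fin.lt_def] at hcs
          simp at hcs ⊢
          omega
        have e1 : max a (min b (t i.castSucc)) = b := by
          rw [min_eq_left hpre, max_eq_right hab]
        have e2 : max a (min b (t i.succ)) = b := by
          rw [min_eq_left hc.le, max_eq_right hab]
        rw [hh]; simp only []; rw [e1, e2, sub_self]
  rw [Finset.sum_filter]
  rw [Finset.sum_congr rfl (fun i _ => key i)]
  set H : ℕ → ℝ := fun k => h ⟨min k n, by omega⟩ with hHdef
  have step : ∀ i : Fin n, h i.succ - h i.castSucc = H (↑i + 1) - H ↑i := by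
    intro i
    have e1 : (⟨min (↑i + 1) n, by omega⟩ : Fin (n+1)) = i.succ := by
      ext; simp
    have e2 : (⟨min (↑i : ℕ) n, by omega⟩ : Fin (n+1)) = i.castSucc := by
      ext; simp
    rw [hHdef]; simp only []; rw [e1, e2]
  rw [Finset.sum_congr rfl (fun i _ => step i)]
  rw [Fin.sum_univ_eq_sum_range (fun k => H (k+1) - H k) n, Finset.sum_range_sub H n]
  have eN : H n = h (Fin.last n) := by simp [hHdef, Fin.last]
  have e0 : H 0 = h 0 := by
    rw [hHdef]; simp only []; congr 1
  rw [eN, e0]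
  have hlastb : b ≤ t (Fin.last n) := h1 ▸ ht (Fin.le_last i1)
  have h0a : t 0 ≤ a := h0 ▸ ht (Fin.zero_le i0)
  have eb : max a (min b (t (Fin.last n))) = b := by rw [min_eq_left hlastb, max_eq_right hab]
  have ea : max a (min b (t 0)) = a := by rw [min_eq_right (h0a.trans hab), max_eq_left h0a]
  rw [hh]; simp only []; rw [eb, ea]

lemma exists_cell (n : ℕ) (hn : 0 < n) (t : Fin (n+1) → ℝ) (ht : Monotone t) {x : ℝ}
    (h0 : t 0 ≤ x) (h1 : x ≤ t (Fin.last n)) :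
    ∃ i : Fin n, t i.castSucc ≤ x ∧ x ≤ t i.succ := by
  classical
  set S : Finset (Fin (n+1)) := Finset.univ.filter (fun i => t i ≤ x) with hS
  have h0S : (0 : Fin (n+1)) ∈ S := by simp [hS, h0]
  set i' := S.max' ⟨0, h0S⟩ with hi'
  have hmem : i' ∈ S := S.max'_mem _
  have hti' : t i' ≤ x := by simpa [hS] using hmem
  by_cases hc : (i' : ℕ) < n
  · refine ⟨⟨i', hc⟩, ?_, ?_⟩
    · have : (⟨i', hc⟩ : Fin n).castSucc = i' := by ext; simp
      rw [this]; exact hti'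
    · by_contra hcon
      push_neg at hcon
      have hmem2 : (⟨i', hc⟩ : Fin n).succ ∈ S := by
        simp only [hS, Finset.mem_filter, Finset.mem_univ, true_and]
        exact hcon.le
      have := S.le_max' _ hmem2
      rw [← hi'] at this
      rw [Fin.le_def] at this
      simp at this
  · push_neg at hc
    have hlast : i' = Fin.last n := by
      ext; simp [Fin.last]; omega
    refine ⟨⟨n-1, by omega⟩, ?_, ?_⟩
    · calc t (⟨n-1, by omega⟩ : Fin n).castSucc ≤ t i' := ht (by
          rw [Fin.le_def]; simp; omega)
        _ ≤ x := hti'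
    · have : (⟨n-1, by omega⟩ : Fin n).succ = Fin.last n := by ext; simp [Fin.last]; omega
      rw [this]; exact h1

lemma deg_inc (f : ℝ × ℝ → ℝ) (Q : Rect) (h : Q.a = Q.b ∨ Q.c = Q.d) :
    Rect.inc f Q = 0 := by
  rcases h with h | h <;> (rw [Rect.inc, h]; ring)

lemma inc_eq_sum (n m : ℕ) (t : Fin (n+1) → ℝ) (s : Fin (m+1) → ℝ)
    (ht : Monotone t) (hs : Monotone s) (f : ℝ × ℝ → ℝ) (Q : Rect)
    (hab : Q.a ≤ Q.b) (hcd : Q.c ≤ Q.d)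
    (ia ib : Fin (n+1)) (jc jd : Fin (m+1))
    (ha : t ia = Q.a) (hb : t ib = Q.b) (hc : s jc = Q.c) (hd : s jd = Q.d) :
    Rect.inc f Q =
      ∑ p ∈ (Finset.univ : Finset (Fin n × Fin m)).filter
        (fun p => (Q.a ≤ t p.1.castSucc ∧ t p.1.succ ≤ Q.b) ∧
                  (Q.c ≤ s p.2.castSucc ∧ s p.2.succ ≤ Q.d)),
        Rect.inc f ⟨t p.1.castSucc, t p.1.succ, s p.2.castSucc, s p.2.succ⟩ := by
  classical
  rw [show (Finset.univ : Finset (Fin n × Fin m)) = Finset.univ ×ˢ Finset.univ from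
    (Finset.univ_product_univ).symm]
  rw [Finset.filter_product (fun i : Fin n => Q.a ≤ t i.castSucc ∧ t i.succ ≤ Q.b)
      (fun j : Fin m => Q.c ≤ s j.castSucc ∧ s j.succ ≤ Q.d)]
  rw [Finset.sum_product]
  have inner : ∀ i : Fin n,
      ∑ j ∈ Finset.univ.filter (fun j : Fin m => Q.c ≤ s j.castSucc ∧ s j.succ ≤ Q.d),
        Rect.inc f ⟨t i.castSucc, t i.succ, s j.castSucc, s j.succ⟩
      = (fun x => f (t i.succ, x) - f (t i.castSucc, x)) Q.d
        - (fun x => f (t i.succ, x) - f (t i.castSucc, x)) Q.c := by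
    intro i
    rw [← tele1 m s hs hcd jc jd hc hd (fun x => f (t i.succ, x) - f (t i.castSucc, x))]
    refine Finset.sum_congr rfl fun j _ => ?_
    simp only [Rect.inc]
    ring
  rw [Finset.sum_congr rfl fun i _ => inner i]
  have tt := tele1 n t ht hab ia ib ha hb (fun x => f (x, Q.d) - f (x, Q.c))
  simp only [] at tt ⊢
  rw [Finset.sum_congr rfl (fun i _ => show
    (f (t i.succ, Q.d) - f (t i.castSucc, Q.d)) - (f (t i.succ, Q.c) - f (t i.castSucc, Q.c))
    = (f (t i.succ, Q.d) - f (t i.succ, Q.c)) - (f (t i.castSucc, Q.d) - f (t i.castSucc, Q.c))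
    by ring), tt, Rect.inc]
  ring

lemma prodDisj {s s' t t' : Set ℝ} (h : Disjoint s s' ∨ Disjoint t t') :
    Disjoint (s ×ˢ t) (s' ×ˢ t') := by
  rw [Set.disjoint_left]
  rintro ⟨x, y⟩ ⟨hx, hy⟩ ⟨hx', hy'⟩
  rcases h with h | h
  · exact Set.disjoint_left.mp h hx hx'
  · exact Set.disjoint_left.mp h hy hy'

lemma disj1D (n : ℕ) (t : Fin (n+1) → ℝ) (ht : Monotone t) {i i' : Fin n} (h : i ≠ i') :
    Disjoint (Set.Ioo (t i.castSucc) (t i.succ)) (Set.Ioo (t i'.castSucc) (t i'.succ)) := by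
  rcases lt_or_gt_of_ne h with h | h
  · have : t i.succ ≤ t i'.castSucc := ht (by
      rw [Fin.le_def]; rw [Fin.lt_def] at h; simp at h ⊢; omega)
    rw [Set.disjoint_left]
    rintro x ⟨_, h2⟩ ⟨h3, _⟩
    linarith
  · have : t i'.succ ≤ t i.castSucc := ht (by
      rw [Fin.le_def]; rw [Fin.lt_def] at h; simp at h ⊢; omega)
    rw [Set.disjoint_left]
    rintro x ⟨h2, _⟩ ⟨_, h3⟩
    linarith

set_option maxHeartbeats 1000000 in
/-- `|f|_{1-var;R} = V_1(f;R)` for every rectangle `R ⊆ [0,T]²`. -/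
theorem controlled_one_var_eq_grid_one_var (T : ℝ) (hT : 0 < T)
    (f : ℝ × ℝ → ℝ) (R : Rect) (hR : R.Valid)
    (hsub : R.toSet ⊆ (Rect.mk 0 T 0 T).toSet) :
    cVarSum 1 f R = gridVarSum 1 f R := by
  classical
  apply le_antisymm
  · rw [cVarSum]
    refine iSup₂_le fun P hP => ?_
    obtain ⟨hval, hdisj, hcover⟩ := hP
    have hQsub : ∀ Q ∈ P, Q.toSet ⊆ R.toSet := by
      intro Q hQ
      rw [← hcover]
      exact Set.subset_biUnion_of_mem hQ
    have hcorner : ∀ Q ∈ P, R.a ≤ Q.a ∧ Q.b ≤ R.b ∧ R.c ≤ Q.c ∧ Q.d ≤ R.d := by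
      intro Q hQ
      obtain ⟨h1, h2⟩ := hval Q hQ
      have m1 : ((Q.a, Q.c) : ℝ × ℝ) ∈ Q.toSet :=
        ⟨Set.mem_Icc.mpr ⟨le_refl _, h1⟩, Set.mem_Icc.mpr ⟨le_refl _, h2⟩⟩
      have m2 : ((Q.b, Q.d) : ℝ × ℝ) ∈ Q.toSet :=
        ⟨Set.mem_Icc.mpr ⟨h1, le_refl _⟩, Set.mem_Icc.mpr ⟨h2, le_refl _⟩⟩
      have r1 := hQsub Q hQ m1
      have r2 := hQsub Q hQ m2
      exact ⟨(Set.mem_Icc.mp r1.1).1, (Set.mem_Icc.mp r2.1).2,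
        (Set.mem_Icc.mp r1.2).1, (Set.mem_Icc.mp r2.2).2⟩
    set xs : Finset ℝ := (P.image Rect.a ∪ P.image Rect.b) ∪ {R.a, R.b} with hxs
    set ys : Finset ℝ := (P.image Rect.c ∪ P.image Rect.d) ∪ {R.c, R.d} with hys
    have hxa : R.a ∈ xs := by rw [hxs]; simp
    have hxb : R.b ∈ xs := by rw [hxs]; simp
    have hyc : R.c ∈ ys := by rw [hys]; simp
    have hyd : R.d ∈ ys := by rw [hys]; simp
    have hxbound : ∀ x ∈ xs, R.a ≤ x ∧ x ≤ R.b := by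
      intro x hx
      rw [hxs] at hx
      simp only [Finset.mem_union, Finset.mem_image, Finset.mem_insert,
        Finset.mem_singleton] at hx
      rcases hx with (⟨Q, hQ, rfl⟩ | ⟨Q, hQ, rfl⟩) | (rfl | rfl)
      · exact ⟨(hcorner Q hQ).1, (hval Q hQ).1.trans (hcorner Q hQ).2.1⟩
      · exact ⟨(hcorner Q hQ).1.trans (hval Q hQ).1, (hcorner Q hQ).2.1⟩
      · exact ⟨le_refl _, hR.1⟩
      · exact ⟨hR.1, le_refl _⟩
    have hybound : ∀ y ∈ ys, R.c ≤ y ∧ y ≤ R.d := by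
      intro y hy
      rw [hys] at hy
      simp only [Finset.mem_union, Finset.mem_image, Finset.mem_insert,
        Finset.mem_singleton] at hy
      rcases hy with (⟨Q, hQ, rfl⟩ | ⟨Q, hQ, rfl⟩) | (rfl | rfl)
      · exact ⟨(hcorner Q hQ).2.2.1, (hval Q hQ).2.trans (hcorner Q hQ).2.2.2⟩
      · exact ⟨(hcorner Q hQ).2.2.1.trans (hval Q hQ).2, (hcorner Q hQ).2.2.2⟩
      · exact ⟨le_refl _, hR.2⟩
      · exact ⟨hR.2, le_refl _⟩
    have hxpos : 0 < xs.card := Finset.card_pos.mpr ⟨R.a, hxa⟩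
    have hypos : 0 < ys.card := Finset.card_pos.mpr ⟨R.c, hyc⟩
    set n := xs.card - 1 with hn
    set m := ys.card - 1 with hm
    have hcardx : xs.card = n + 1 := by omega
    have hcardy : ys.card = m + 1 := by omega
    obtain ⟨t, ht, htmem, htself⟩ : ∃ t : Fin (n+1) → ℝ, Monotone t ∧
        (∀ x ∈ xs, ∃ i, t i = x) ∧ (∀ i, t i ∈ xs) := by
      refine ⟨fun i => (xs.orderIsoOfFin hcardx i : ℝ),
        fun i j hij => Subtype.coe_le_coe.mpr ((xs.orderIsoOfFin hcardx).monotone hij),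
        fun x hx => ⟨(xs.orderIsoOfFin hcardx).symm ⟨x, hx⟩, by simp⟩,
        fun i => (xs.orderIsoOfFin hcardx i).2⟩
    obtain ⟨s, hs, hsmem, hsself⟩ : ∃ s : Fin (m+1) → ℝ, Monotone s ∧
        (∀ y ∈ ys, ∃ j, s j = y) ∧ (∀ j, s j ∈ ys) := by
      refine ⟨fun j => (ys.orderIsoOfFin hcardy j : ℝ),
        fun i j hij => Subtype.coe_le_coe.mpr ((ys.orderIsoOfFin hcardy).monotone hij),
        fun y hy => ⟨(ys.orderIsoOfFin hcardy).symm ⟨y, hy⟩, by simp⟩,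
        fun j => (ys.orderIsoOfFin hcardy j).2⟩
    have ht0 : t 0 = R.a := by
      obtain ⟨i, hi⟩ := htmem R.a hxa
      exact le_antisymm (hi ▸ ht (Fin.zero_le i)) (hxbound _ (htself 0)).1
    have htl : t (Fin.last n) = R.b := by
      obtain ⟨i, hi⟩ := htmem R.b hxb
      exact le_antisymm (hxbound _ (htself _)).2 (hi ▸ ht (Fin.le_last i))
    have hs0 : s 0 = R.c := by
      obtain ⟨j, hj⟩ := hsmem R.c hyc
      exact le_antisymm (hj ▸ hs (Fin.zero_le j)) (hybound _ (hsself 0)).1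
    have hsl : s (Fin.last m) = R.d := by
      obtain ⟨j, hj⟩ := hsmem R.d hyd
      exact le_antisymm (hybound _ (hsself _)).2 (hj ▸ hs (Fin.le_last j))
    set g : Fin n × Fin m → ℝ≥0∞ := fun p =>
      ENNReal.ofReal |Rect.inc f ⟨t p.1.castSucc, t p.1.succ, s p.2.castSucc, s p.2.succ⟩|
      with hg
    set F : Rect → Finset (Fin n × Fin m) := fun Q =>
      (Finset.univ : Finset (Fin n × Fin m)).filter
        (fun p => (Q.a ≤ t p.1.castSucc ∧ t p.1.succ ≤ Q.b) ∧
                  (Q.c ≤ s p.2.castSucc ∧ s p.2.succ ≤ Q.d)) with hF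
    have claimA : ∀ Q ∈ P, ENNReal.ofReal |Rect.inc f Q| ≤ ∑ p ∈ F Q, g p := by
      intro Q hQ
      have hQa : Q.a ∈ xs := by
        rw [hxs]
        exact Finset.mem_union_left _
          (Finset.mem_union_left _ (Finset.mem_image_of_mem _ hQ))
      have hQb : Q.b ∈ xs := by
        rw [hxs]
        exact Finset.mem_union_left _
          (Finset.mem_union_right _ (Finset.mem_image_of_mem _ hQ))
      have hQc : Q.c ∈ ys := by
        rw [hys]
        exact Finset.mem_union_left _
          (Finset.mem_union_left _ (Finset.mem_image_of_mem _ hQ))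
      have hQd : Q.d ∈ ys := by
        rw [hys]
        exact Finset.mem_union_left _
          (Finset.mem_union_right _ (Finset.mem_image_of_mem _ hQ))
      obtain ⟨ia, hia⟩ := htmem Q.a hQa
      obtain ⟨ib, hib⟩ := htmem Q.b hQb
      obtain ⟨jc, hjc⟩ := hsmem Q.c hQc
      obtain ⟨jd, hjd⟩ := hsmem Q.d hQd
      rw [inc_eq_sum n m t s ht hs f Q (hval Q hQ).1 (hval Q hQ).2 ia ib jc jd hia hib hjc hjd]
      calc ENNReal.ofReal |∑ p ∈ F Q,
            Rect.inc f ⟨t p.1.castSucc, t p.1.succ, s p.2.castSucc, s p.2.succ⟩|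
          ≤ ENNReal.ofReal (∑ p ∈ F Q,
            |Rect.inc f ⟨t p.1.castSucc, t p.1.succ, s p.2.castSucc, s p.2.succ⟩|) :=
            ENNReal.ofReal_le_ofReal (Finset.abs_sum_le_sum_abs _ _)
        _ = ∑ p ∈ F Q, g p :=
            ENNReal.ofReal_sum_of_nonneg (fun p _ => abs_nonneg _)
    have uniq : ∀ p : Fin n × Fin m,
        Rect.inc f (⟨t p.1.castSucc, t p.1.succ, s p.2.castSucc, s p.2.succ⟩ : Rect) ≠ 0 →
        ∀ Q ∈ P, ∀ Q' ∈ P, p ∈ F Q → p ∈ F Q' → Q = Q' := by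
      intro p hnz Q hQ Q' hQ' hpQ hpQ'
      by_contra hne
      have lt1 : t p.1.castSucc < t p.1.succ :=
        lt_of_le_of_ne (ht (Fin.castSucc_lt_succ (i := _)).le) (fun h => hnz (deg_inc f _ (Or.inl h)))
      have lt2 : s p.2.castSucc < s p.2.succ :=
        lt_of_le_of_ne (hs (Fin.castSucc_lt_succ (i := _)).le) (fun h => hnz (deg_inc f _ (Or.inr h)))
      rw [hF] at hpQ hpQ'
      simp only [Finset.mem_filter, Finset.mem_univ, true_and] at hpQ hpQ'
      obtain ⟨⟨ha1, ha2⟩, ha3, ha4⟩ := hpQ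
      obtain ⟨⟨hb1, hb2⟩, hb3, hb4⟩ := hpQ'
      set z : ℝ × ℝ := ((t p.1.castSucc + t p.1.succ)/2, (s p.2.castSucc + s p.2.succ)/2)
        with hz
      have hzQ : z ∈ Q.openSet :=
        ⟨Set.mem_Ioo.mpr ⟨by simp only [hz]; linarith, by simp only [hz]; linarith⟩,
         Set.mem_Ioo.mpr ⟨by simp only [hz]; linarith, by simp only [hz]; linarith⟩⟩
      have hzQ' : z ∈ Q'.openSet :=
        ⟨Set.mem_Ioo.mpr ⟨by simp only [hz]; linarith, by simp only [hz]; linarith⟩,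
         Set.mem_Ioo.mpr ⟨by simp only [hz]; linarith, by simp only [hz]; linarith⟩⟩
      exact Set.disjoint_left.mp
        (hdisj (Finset.mem_coe.mpr hQ) (Finset.mem_coe.mpr hQ') hne) hzQ hzQ'
    have claimB : ∑ Q ∈ P, ∑ p ∈ F Q, g p ≤ ∑ p : Fin n × Fin m, g p := by
      rw [hF]
      rw [Finset.sum_congr rfl fun Q _ => Finset.sum_filter
        (fun p : Fin n × Fin m => (Q.a ≤ t p.1.castSucc ∧ t p.1.succ ≤ Q.b) ∧
          (Q.c ≤ s p.2.castSucc ∧ s p.2.succ ≤ Q.d)) g]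
      rw [Finset.sum_comm]
      refine Finset.sum_le_sum fun p _ => ?_
      by_cases hz : Rect.inc f
          (⟨t p.1.castSucc, t p.1.succ, s p.2.castSucc, s p.2.succ⟩ : Rect) = 0
      · have hg0 : g p = 0 := by rw [hg]; simp only [hz, abs_zero, ENNReal.ofReal_zero]
        rw [Finset.sum_congr rfl fun Q _ => by rw [hg0, ite_self]]
        rw [Finset.sum_const_zero]
        exact zero_le
      · rw [← Finset.sum_filter]
        rw [Finset.sum_const]
        have hcard1 : (P.filter (fun Q =>
            (Q.a ≤ t p.1.castSucc ∧ t p.1.succ ≤ Q.b) ∧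
            (Q.c ≤ s p.2.castSucc ∧ s p.2.succ ≤ Q.d))).card ≤ 1 := by
          refine Finset.card_le_one.mpr fun Q hQf Q' hQf' => ?_
          obtain ⟨hQm, hQc⟩ := Finset.mem_filter.mp hQf
          obtain ⟨hQm', hQc'⟩ := Finset.mem_filter.mp hQf'
          refine uniq p hz Q hQm Q' hQm' ?_ ?_ <;>
            (rw [hF]; simp only [Finset.mem_filter, Finset.mem_univ, true_and])
          · exact hQc
          · exact hQc'
        rcases Nat.le_one_iff_eq_zero_or_eq_one.mp hcard1 with h | h <;> rw [h]
        · simp only [zero_smul]; exact zero_le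
        · simp only [one_smul]; exact le_refl _
    calc ∑ Q ∈ P, ENNReal.ofReal |Rect.inc f Q| ^ (1:ℝ)
        = ∑ Q ∈ P, ENNReal.ofReal |Rect.inc f Q| := by simp [ENNReal.rpow_one]
      _ ≤ ∑ Q ∈ P, ∑ p ∈ F Q, g p := Finset.sum_le_sum claimA
      _ ≤ ∑ p : Fin n × Fin m, g p := claimB
      _ = ∑ i : Fin n, ∑ j : Fin m, ENNReal.ofReal
            |Rect.inc f ⟨t i.castSucc, t i.succ, s j.castSucc, s j.succ⟩| ^ (1:ℝ) := by
          simp only [ENNReal.rpow_one]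
          rw [show (Finset.univ : Finset (Fin n × Fin m)) = Finset.univ ×ˢ Finset.univ from
            Finset.univ_product_univ.symm]
          simp only [hg]
          exact Finset.sum_product' Finset.univ Finset.univ (fun (i : Fin n) (j : Fin m) =>
            ENNReal.ofReal |Rect.inc f ⟨t i.castSucc, t i.succ, s j.castSucc, s j.succ⟩|)
      _ ≤ gridVarSum 1 f R := by
          rw [gridVarSum]
          exact le_iSup_of_le n (le_iSup_of_le m (le_iSup_of_le t (le_iSup_of_le s
            (le_iSup_of_le ht (le_iSup_of_le hs (le_iSup_of_le ht0 (le_iSup_of_le htl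
            (le_iSup_of_le hs0 (le_iSup_of_le hsl (le_refl _))))))))))
  · rw [gridVarSum]
    refine iSup_le fun n => iSup_le fun m => iSup_le fun t => iSup_le fun s =>
      iSup_le fun ht => iSup_le fun hs => iSup_le fun hta => iSup_le fun htb =>
      iSup_le fun hsc => iSup_le fun hsd => ?_
    rcases Nat.eq_zero_or_pos n with hn | hn
    · subst hn; simp
    rcases Nat.eq_zero_or_pos m with hm | hm
    · subst hm; simp
    set c : Fin n × Fin m → Rect :=
      fun p => ⟨t p.1.castSucc, t p.1.succ, s p.2.castSucc, s p.2.succ⟩ with hcdef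
    set P : Finset Rect := Finset.univ.image c with hPdef
    have hopen : ∀ p : Fin n × Fin m, (c p).openSet
        = Set.Ioo (t p.1.castSucc) (t p.1.succ) ×ˢ Set.Ioo (s p.2.castSucc) (s p.2.succ) := by
      intro p; rfl
    have htoSet : ∀ p : Fin n × Fin m, (c p).toSet
        = Set.Icc (t p.1.castSucc) (t p.1.succ) ×ˢ Set.Icc (s p.2.castSucc) (s p.2.succ) := by
      intro p; rfl
    have hPart : IsPartition R P := by
      refine ⟨?_, ?_, ?_⟩
      · intro Q hQ
        obtain ⟨p, -, rfl⟩ := Finset.mem_image.mp hQ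
        exact ⟨ht (Fin.castSucc_lt_succ (i := p.1)).le, hs (Fin.castSucc_lt_succ (i := p.2)).le⟩
      · intro Q hQ Q' hQ' hne
        obtain ⟨p, -, rfl⟩ := Finset.mem_image.mp (Finset.mem_coe.mp hQ)
        obtain ⟨p', -, rfl⟩ := Finset.mem_image.mp (Finset.mem_coe.mp hQ')
        have hpp : p.1 ≠ p'.1 ∨ p.2 ≠ p'.2 := by
          by_contra hcon; push_neg at hcon
          exact hne (by rw [Prod.ext hcon.1 hcon.2])
        rw [hopen, hopen]
        refine prodDisj ?_
        rcases hpp with h | h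
        · exact Or.inl (disj1D n t ht h)
        · exact Or.inr (disj1D m s hs h)
      · ext z
        simp only [Set.mem_iUnion, exists_prop]
        constructor
        · rintro ⟨Q, hQ, hz⟩
          obtain ⟨p, -, rfl⟩ := Finset.mem_image.mp hQ
          rw [htoSet] at hz
          obtain ⟨hz1, hz2⟩ := hz
          rw [Set.mem_Icc] at hz1 hz2
          refine ⟨?_, ?_⟩ <;> rw [Set.mem_Icc]
          · exact ⟨hta ▸ (ht (Fin.zero_le _)).trans hz1.1,
              hz1.2.trans (htb ▸ ht (Fin.le_last _))⟩
          · exact ⟨hsc ▸ (hs (Fin.zero_le _)).trans hz2.1,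
              hz2.2.trans (hsd ▸ hs (Fin.le_last _))⟩
        · rintro ⟨hz1, hz2⟩
          rw [Set.mem_Icc] at hz1 hz2
          obtain ⟨i, hi1, hi2⟩ := exists_cell n hn t ht (hta ▸ hz1.1) (htb ▸ hz1.2)
          obtain ⟨j, hj1, hj2⟩ := exists_cell m hm s hs (hsc ▸ hz2.1) (hsd ▸ hz2.2)
          refine ⟨c (i, j), Finset.mem_image_of_mem c (Finset.mem_univ _), ?_⟩
          rw [htoSet]
          exact ⟨Set.mem_Icc.mpr ⟨hi1, hi2⟩, Set.mem_Icc.mpr ⟨hj1, hj2⟩⟩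
    have hsum : ∑ i : Fin n, ∑ j : Fin m,
        ENNReal.ofReal |Rect.inc f ⟨t i.castSucc, t i.succ, s j.castSucc, s j.succ⟩| ^ (1:ℝ)
        ≤ ∑ Q ∈ P, ENNReal.ofReal |Rect.inc f Q| ^ (1:ℝ) := by
      simp only [ENNReal.rpow_one]
      rw [show (∑ i : Fin n, ∑ j : Fin m,
          ENNReal.ofReal |Rect.inc f ⟨t i.castSucc, t i.succ, s j.castSucc, s j.succ⟩|)
          = ∑ p ∈ (Finset.univ ×ˢ Finset.univ : Finset (Fin n × Fin m)),
            ENNReal.ofReal |Rect.inc f (c p)| from (Finset.sum_product' _ _ _).symm]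
      set D := (Finset.univ ×ˢ Finset.univ : Finset (Fin n × Fin m)).filter
        (fun p => Rect.inc f (c p) ≠ 0) with hD
      have h1 : ∑ p ∈ (Finset.univ ×ˢ Finset.univ : Finset (Fin n × Fin m)),
          ENNReal.ofReal |Rect.inc f (c p)| = ∑ p ∈ D, ENNReal.ofReal |Rect.inc f (c p)| := by
        refine (Finset.sum_filter_of_ne ?_).symm
        intro p _ hne hz
        exact hne (by rw [hz]; simp)
      have hinj : ∀ p ∈ D, ∀ p' ∈ D, c p = c p' → p = p' := by
        intro p hp p' hp' heq
        have hnz : Rect.inc f (c p) ≠ 0 := (Finset.mem_filter.mp hp).2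
        have lt1 : t p.1.castSucc < t p.1.succ := by
          refine lt_of_le_of_ne (ht (Fin.castSucc_lt_succ (i := p.1)).le) fun h => hnz ?_
          exact deg_inc f (c p) (Or.inl h)
        have lt2 : s p.2.castSucc < s p.2.succ := by
          refine lt_of_le_of_ne (hs (Fin.castSucc_lt_succ (i := p.2)).le) fun h => hnz ?_
          exact deg_inc f (c p) (Or.inr h)
        have ea : t p.1.castSucc = t p'.1.castSucc := congrArg Rect.a heq
        have eb : t p.1.succ = t p'.1.succ := congrArg Rect.b heq
        have ec : s p.2.castSucc = s p'.2.castSucc := congrArg Rect.c heq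
        have ed : s p.2.succ = s p'.2.succ := congrArg Rect.d heq
        refine Prod.ext ?_ ?_
        · by_contra hne1
          obtain ⟨x, hx⟩ := Set.nonempty_Ioo.mpr lt1
          have hx' : x ∈ Set.Ioo (t p'.1.castSucc) (t p'.1.succ) := by
            rw [← ea, ← eb]; exact hx
          exact Set.disjoint_left.mp (disj1D n t ht hne1) hx hx'
        · by_contra hne2
          obtain ⟨x, hx⟩ := Set.nonempty_Ioo.mpr lt2
          have hx' : x ∈ Set.Ioo (s p'.2.castSucc) (s p'.2.succ) := by
            rw [← ec, ← ed]; exact hx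
          exact Set.disjoint_left.mp (disj1D m s hs hne2) hx hx'
      rw [h1, ← Finset.sum_image (f := fun Q => ENNReal.ofReal |Rect.inc f Q|) hinj]
      refine Finset.sum_le_sum_of_subset ?_
      rw [hPdef]
      refine Finset.image_subset_image ?_
      rw [← Finset.univ_product_univ]
      exact Finset.filter_subset _ _
    refine hsum.trans ?_
    rw [cVarSum]
    exact le_iSup₂_of_le P hPart le_rfl
end

section
/- For every p ≥ 1 and ε > 0 there exists a constant c = c(p,ε) ≥ 1 such that for every function f : [0,T]^2 → ℝ and every rectangle R ⊆ [0,T]^2, one has |f|_{(p+ε)-var;R} ≤ c(p,ε) · V_p(f;R). -/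
open Set
open scoped ENNReal NNReal

lemma inc_deg_x (f : ℝ × ℝ → ℝ) (Q : Rect) (h : Q.a = Q.b) : Rect.inc f Q = 0 := by
  simp only [Rect.inc, h]; ring

lemma inc_deg_y (f : ℝ × ℝ → ℝ) (Q : Rect) (h : Q.c = Q.d) : Rect.inc f Q = 0 := by
  simp only [Rect.inc, h]; ring

lemma nondeg_of_inc_ne (f : ℝ × ℝ → ℝ) (Q : Rect) (hv : Q.Valid) (h : Rect.inc f Q ≠ 0) :
    Q.a < Q.b ∧ Q.c < Q.d := by
  constructor
  · rcases lt_or_eq_of_le hv.1 with h1 | h1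
    · exact h1
    · exact absurd (inc_deg_x f Q h1) h
  · rcases lt_or_eq_of_le hv.2 with h1 | h1
    · exact h1
    · exact absurd (inc_deg_y f Q h1) h

/-- Additivity of the rectangular increment over a grid decomposition. -/
lemma inc_grid (f : ℝ × ℝ → ℝ) (x y : ℕ → ℝ) (s s' : ℕ) :
    Rect.inc f ⟨x 0, x s, y 0, y s'⟩ =
      ∑ i ∈ Finset.range s, ∑ j ∈ Finset.range s',
        Rect.inc f ⟨x i, x (i+1), y j, y (j+1)⟩ := by
  have h1 : ∀ j : ℕ, ∑ i ∈ Finset.range s, Rect.inc f ⟨x i, x (i+1), y j, y (j+1)⟩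
      = Rect.inc f ⟨x 0, x s, y j, y (j+1)⟩ := by
    intro j
    have h := Finset.sum_range_sub
      (fun i => f (x i, y (j+1)) - f (x i, y j) - (f (x 0, y (j+1)) - f (x 0, y j))) s
    have e1 : ∀ i ∈ Finset.range s, Rect.inc f ⟨x i, x (i+1), y j, y (j+1)⟩ =
        (fun i => f (x i, y (j+1)) - f (x i, y j) - (f (x 0, y (j+1)) - f (x 0, y j))) (i+1)
        - (fun i => f (x i, y (j+1)) - f (x i, y j) - (f (x 0, y (j+1)) - f (x 0, y j))) i := by
      intro i _; simp only [Rect.inc]; ring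
    rw [Finset.sum_congr rfl e1, h]
    simp only [Rect.inc]; ring
  rw [Finset.sum_comm]
  simp only [h1]
  have h := Finset.sum_range_sub
    (fun j => f (x s, y j) - f (x 0, y j) - (f (x s, y 0) - f (x 0, y 0))) s'
  have e1 : ∀ j ∈ Finset.range s', Rect.inc f ⟨x 0, x s, y j, y (j+1)⟩ =
      (fun j => f (x s, y j) - f (x 0, y j) - (f (x s, y 0) - f (x 0, y 0))) (j+1)
      - (fun j => f (x s, y j) - f (x 0, y j) - (f (x s, y 0) - f (x 0, y 0))) j := by
    intro j _; simp only [Rect.inc]; ring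
  rw [Finset.sum_congr rfl e1, h]
  simp only [Rect.inc]; ring

/-- A dyadic chain from `l` to `r` with `s` steps, each step a dyadic block of level `≤ k`. -/
def DChain (k l r s : ℕ) (m : ℕ → ℕ) : Prop :=
  m 0 = l ∧ m s = r ∧ ∀ i < s, ∃ u j, u ≤ k ∧ m i = j * 2^u ∧ m (i+1) = (j+1) * 2^u

lemma dchain_step {k l r s m} (h : DChain k l r s m) : ∀ i < s, m i < m (i + 1) := by
  intro i hi
  obtain ⟨u, j, _, h1, h2⟩ := h.2.2 i hi
  rw [h1, h2]
  have : (0:ℕ) < 2^u := Nat.pow_pos (by norm_num)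
  nlinarith

lemma dchain_mono {k l r s m} (h : DChain k l r s m) :
    ∀ a b, a ≤ b → b ≤ s → m a ≤ m b := by
  intro a b hab hbs
  induction b, hab using Nat.le_induction with
  | base => exact le_refl _
  | succ b hb ih =>
    exact le_trans (ih (by omega)) (le_of_lt (dchain_step h b (by omega)))

lemma dchain_mono_k {k k' l r s m} (hk : k ≤ k') (h : DChain k l r s m) :
    DChain k' l r s m := by
  refine ⟨h.1, h.2.1, fun i hi => ?_⟩
  obtain ⟨u, j, hu, h1, h2⟩ := h.2.2 i hi
  exact ⟨u, j, le_trans hu hk, h1, h2⟩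

lemma dchain_shift {k l r s m} (c : ℕ) (h : DChain k l r s m) :
    DChain k (l + 2^k * c) (r + 2^k * c) s (fun i => m i + 2^k * c) := by
  refine ⟨by simp [h.1], by simp [h.2.1], fun i hi => ?_⟩
  obtain ⟨u, j, hu, h1, h2⟩ := h.2.2 i hi
  have e : 2^(k-u) * c * 2^u = 2^k * c := by
    rw [mul_right_comm, ← pow_add, Nat.sub_add_cancel hu]
  refine ⟨u, j + 2^(k-u) * c, hu, ?_, ?_⟩
  · show m i + 2^k * c = _
    rw [h1, add_mul, e]
  · show m (i+1) + 2^k * c = _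
    have e2 : (j + 2^(k-u)*c + 1) * 2^u = (j+1)*2^u + 2^k*c := by
      rw [show j + 2^(k-u)*c + 1 = (j+1) + 2^(k-u)*c by ring, add_mul, e]
    rw [h2, e2]

lemma dchain_concat {k l mid r s₁ s₂ m₁ m₂} (h1 : DChain k l mid s₁ m₁)
    (h2 : DChain k mid r s₂ m₂) :
    DChain k l r (s₁ + s₂) (fun i => if i < s₁ then m₁ i else m₂ (i - s₁)) := by
  refine ⟨?_, ?_, fun i hi => ?_⟩
  · by_cases h : 0 < s₁
    · simpa [h] using h1.1
    · have hs : s₁ = 0 := by omega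
      have : mid = l := by rw [← h1.2.1, hs, h1.1]
      simp [hs, h2.1, this]
  · by_cases h : s₁ + s₂ < s₁
    · omega
    · simp only [h, if_false, Nat.add_sub_cancel_left]
      exact h2.2.1
  · by_cases h : i + 1 < s₁
    · obtain ⟨u, j, hu, e1, e2⟩ := h1.2.2 i (by omega)
      exact ⟨u, j, hu, by simp [show i < s₁ by omega, e1], by simp [h, e2]⟩
    · by_cases h' : i < s₁
      · -- i + 1 = s₁
        have hi1 : i + 1 = s₁ := by omega
        obtain ⟨u, j, hu, e1, e2⟩ := h1.2.2 i (by omega)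
        refine ⟨u, j, hu, by simp [h', e1], ?_⟩
        have hv : m₂ (i + 1 - s₁) = (j+1) * 2^u := by
          rw [show i + 1 - s₁ = 0 by omega, h2.1, ← h1.2.1, ← hi1, e2]
        simp [h, hv]
      · -- i ≥ s₁
        obtain ⟨u, j, hu, e1, e2⟩ := h2.2.2 (i - s₁) (by omega)
        refine ⟨u, j, hu, by simp [h', e1], ?_⟩
        have : i + 1 - s₁ = i - s₁ + 1 := by omega
        simp only [show ¬ (i+1 < s₁) by omega, if_false, this, e2]

lemma dchain_unit : DChain 0 0 1 1 (fun i => i) := by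
  refine ⟨rfl, rfl, fun i hi => ⟨0, 0, le_refl _, ?_, ?_⟩⟩
  · show i = 0 * 2^0
    simp; omega
  · show i + 1 = (0+1) * 2^0
    simp; omega

lemma dchain_L0 : ∀ k r, r ≤ 2^k → ∃ s m, s ≤ k + 1 ∧ DChain k 0 r s m := by
  intro k
  induction k with
  | zero =>
    intro r hr
    interval_cases r
    · exact ⟨0, fun _ => 0, by norm_num, rfl, rfl, by omega⟩
    · exact ⟨1, fun i => i, by norm_num, dchain_unit⟩
  | succ k ih =>
    intro r hr
    by_cases h : r ≤ 2^k
    · obtain ⟨s, m, hs, hc⟩ := ih r h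
      exact ⟨s, m, by omega, dchain_mono_k (Nat.le_succ k) hc⟩
    · obtain ⟨s, m, hs, hc⟩ := ih (r - 2^k) (by rw [pow_succ] at hr; omega)
      have hsh := dchain_shift 1 hc
      simp only [mul_one, Nat.zero_add] at hsh
      have hr2 : r - 2^k + 2^k = r := by omega
      rw [hr2] at hsh
      have hone : DChain (k+1) 0 (2^k) 1 (fun i => if i = 0 then 0 else 2^k) := by
        refine ⟨rfl, rfl, fun i hi => ⟨k, 0, Nat.le_succ k, ?_, ?_⟩⟩
        · simp [show i = 0 by omega]
        · simp [show i = 0 by omega]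
      have := dchain_concat hone (dchain_mono_k (Nat.le_succ k) hsh)
      exact ⟨1 + s, _, by omega, this⟩

lemma dchain_R0 : ∀ k l, l ≤ 2^k → ∃ s m, s ≤ k + 1 ∧ DChain k l (2^k) s m := by
  intro k
  induction k with
  | zero =>
    intro l hl
    interval_cases l
    · exact ⟨1, fun i => i, by norm_num, dchain_unit⟩
    · exact ⟨0, fun _ => 1, by norm_num, rfl, rfl, by omega⟩
  | succ k ih =>
    intro l hl
    by_cases h : 2^k ≤ l
    · obtain ⟨s, m, hs, hc⟩ := ih (l - 2^k) (by rw [pow_succ] at hl; omega)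
      have hsh := dchain_shift 1 hc
      simp only [mul_one] at hsh
      have h2 : 2^k + 2^k = 2^(k+1) := by rw [pow_succ]; omega
      rw [show l - 2^k + 2^k = l by omega, h2] at hsh
      exact ⟨s, _, by omega, dchain_mono_k (Nat.le_succ k) hsh⟩
    · obtain ⟨s, m, hs, hc⟩ := ih l (by omega)
      have hone : DChain (k+1) (2^k) (2^(k+1)) 1
          (fun i => if i = 0 then 2^k else 2^(k+1)) := by
        refine ⟨rfl, rfl, fun i hi => ⟨k, 1, Nat.le_succ k, ?_, ?_⟩⟩
        · simp [show i = 0 by omega]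
        · show (if i + 1 = 0 then 2^k else 2^(k+1)) = (1+1) * 2^k
          rw [if_neg (by omega : ¬ (i+1 = 0)), pow_succ]; ring
      have := dchain_concat (dchain_mono_k (Nat.le_succ k) hc) hone
      exact ⟨s + 1, _, by omega, this⟩

lemma dchain_main : ∀ k l r, l ≤ r → r ≤ 2^k → ∃ s m, s ≤ 2*k + 2 ∧ DChain k l r s m := by
  intro k
  induction k with
  | zero =>
    intro l r hlr hr
    interval_cases r <;> interval_cases l
    · exact ⟨0, fun _ => 0, by norm_num, rfl, rfl, by omega⟩
    · exact ⟨1, fun i => i, by norm_num, dchain_unit⟩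
    · exact ⟨0, fun _ => 1, by norm_num, rfl, rfl, by omega⟩
  | succ k ih =>
    intro l r hlr hr
    by_cases h : r ≤ 2^k
    · obtain ⟨s, m, hs, hc⟩ := ih l r hlr h
      exact ⟨s, m, by omega, dchain_mono_k (Nat.le_succ k) hc⟩
    by_cases h' : 2^k ≤ l
    · obtain ⟨s, m, hs, hc⟩ := ih (l - 2^k) (r - 2^k) (by omega)
        (by rw [pow_succ] at hr; omega)
      have hsh := dchain_shift 1 hc
      simp only [mul_one] at hsh
      rw [show l - 2^k + 2^k = l by omega, show r - 2^k + 2^k = r by omega] at hsh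
      exact ⟨s, _, by omega, dchain_mono_k (Nat.le_succ k) hsh⟩
    · -- l < 2^k < r
      obtain ⟨s₁, m₁, hs₁, hc₁⟩ := dchain_R0 k l (by omega)
      obtain ⟨s₂, m₂, hs₂, hc₂⟩ := dchain_L0 k (r - 2^k) (by rw [pow_succ] at hr; omega)
      have hsh := dchain_shift 1 hc₂
      simp only [mul_one, Nat.zero_add] at hsh
      rw [show r - 2^k + 2^k = r by omega] at hsh
      have := dchain_concat (dchain_mono_k (Nat.le_succ k) hc₁)
        (dchain_mono_k (Nat.le_succ k) hsh)
      exact ⟨s₁ + s₂, _, by omega, this⟩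

lemma rect_ext (A A' : Rect) (h1 : A.a = A'.a) (h2 : A.b = A'.b) (h3 : A.c = A'.c)
    (h4 : A.d = A'.d) : A = A' := by
  cases A; cases A'; simp_all

lemma finset_consec (S : Finset ℝ) (n : ℕ) (hc : S.card = n + 1) (α β : ℝ)
    (hα : α ∈ S) (hβ : β ∈ S) (hab : α < β) (hsep : ∀ z ∈ S, z ≤ α ∨ β ≤ z) :
    ∃ i : Fin n, ((S.orderIsoOfFin hc) i.castSucc : ℝ) = α ∧
      ((S.orderIsoOfFin hc) i.succ : ℝ) = β := by
  set e := S.orderIsoOfFin hc with he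
  set ia := e.symm ⟨α, hα⟩ with hia
  set ib := e.symm ⟨β, hβ⟩ with hib
  have hea : (e ia : ℝ) = α := by rw [hia, OrderIso.apply_symm_apply]
  have heb : (e ib : ℝ) = β := by rw [hib, OrderIso.apply_symm_apply]
  have hlt : ia < ib := by
    rw [hia, hib]
    apply (e.symm.lt_iff_lt).mpr
    exact Subtype.mk_lt_mk.mpr hab
  have hib_le : (ib : ℕ) ≤ n := by omega
  have hival : (ia : ℕ) < n := by
    have := Fin.lt_iff_val_lt_val.mp hlt
    omega
  refine ⟨⟨(ia : ℕ), hival⟩, ?_, ?_⟩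
  · have : (⟨(ia : ℕ), hival⟩ : Fin n).castSucc = ia := by
      apply Fin.ext; simp
    rw [this, hea]
  · set j : Fin (n+1) := (⟨(ia : ℕ), hival⟩ : Fin n).succ with hj
    have hjv : (j : ℕ) = (ia : ℕ) + 1 := rfl
    have hjle : j ≤ ib := by
      rw [Fin.le_iff_val_le_val, hjv]
      have := Fin.lt_iff_val_lt_val.mp hlt
      omega
    have h1 : (e j : ℝ) ≤ β := by
      rw [← heb]
      exact_mod_cast (e.le_iff_le.mpr hjle)
    have h2 : β ≤ (e j : ℝ) := by
      rcases hsep (e j : ℝ) (e j).2 with hle | hge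
      · exfalso
        have : e j ≤ e ia := by
          apply Subtype.coe_le_coe.mp
          rw [hea]; exact hle
        have : j ≤ ia := e.le_iff_le.mp this
        rw [Fin.le_iff_val_le_val, hjv] at this
        omega
      · exact hge
    exact le_antisymm h1 h2

lemma grid_bound (p : ℝ) (hp : 0 < p) (f : ℝ × ℝ → ℝ) (R : Rect) (hR : R.Valid)
    (F : Finset Rect)
    (hg : ∀ A ∈ F, R.a ≤ A.a ∧ A.a < A.b ∧ A.b ≤ R.b ∧ R.c ≤ A.c ∧ A.c < A.d ∧ A.d ≤ R.d)
    (hx : ∀ A ∈ F, ∀ A' ∈ F, A.b ≤ A'.a ∨ A'.b ≤ A.a ∨ (A.a = A'.a ∧ A.b = A'.b))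
    (hy : ∀ A ∈ F, ∀ A' ∈ F, A.d ≤ A'.c ∨ A'.d ≤ A.c ∨ (A.c = A'.c ∧ A.d = A'.d)) :
    ∑ A ∈ F, ENNReal.ofReal |Rect.inc f A| ^ p ≤ gridVarSum p f R := by
  classical
  set xs : Finset ℝ := insert R.a (insert R.b (F.image Rect.a ∪ F.image Rect.b)) with hxs
  set ys : Finset ℝ := insert R.c (insert R.d (F.image Rect.c ∪ F.image Rect.d)) with hys
  have hxs_mem : ∀ z ∈ xs, R.a ≤ z ∧ z ≤ R.b := by
    intro z hz
    rw [hxs] at hz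
    simp only [Finset.mem_insert, Finset.mem_union, Finset.mem_image] at hz
    rcases hz with rfl | rfl | ⟨A, hA, rfl⟩ | ⟨A, hA, rfl⟩
    · exact ⟨le_refl _, hR.1⟩
    · exact ⟨hR.1, le_refl _⟩
    · obtain ⟨u1, u2, u3, _⟩ := hg A hA; exact ⟨u1, le_trans (le_of_lt u2) u3⟩
    · obtain ⟨u1, u2, u3, _⟩ := hg A hA; exact ⟨le_trans u1 (le_of_lt u2), u3⟩
  have hys_mem : ∀ z ∈ ys, R.c ≤ z ∧ z ≤ R.d := by
    intro z hz
    rw [hys] at hz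
    simp only [Finset.mem_insert, Finset.mem_union, Finset.mem_image] at hz
    rcases hz with rfl | rfl | ⟨A, hA, rfl⟩ | ⟨A, hA, rfl⟩
    · exact ⟨le_refl _, hR.2⟩
    · exact ⟨hR.2, le_refl _⟩
    · obtain ⟨_, _, _, u1, u2, u3⟩ := hg A hA; exact ⟨u1, le_trans (le_of_lt u2) u3⟩
    · obtain ⟨_, _, _, u1, u2, u3⟩ := hg A hA; exact ⟨le_trans u1 (le_of_lt u2), u3⟩
  have hxs_ne : R.a ∈ xs := by rw [hxs]; exact Finset.mem_insert_self _ _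
  have hys_ne : R.c ∈ ys := by rw [hys]; exact Finset.mem_insert_self _ _
  have hxb : R.b ∈ xs := by rw [hxs]; simp
  have hyd : R.d ∈ ys := by rw [hys]; simp
  set n : ℕ := xs.card - 1 with hn
  set m : ℕ := ys.card - 1 with hm
  have hcx : xs.card = n + 1 := by
    rw [hn]
    have : 0 < xs.card := Finset.card_pos.mpr ⟨R.a, hxs_ne⟩
    omega
  have hcy : ys.card = m + 1 := by
    rw [hm]
    have : 0 < ys.card := Finset.card_pos.mpr ⟨R.c, hys_ne⟩
    omega
  set et := xs.orderIsoOfFin hcx with het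
  set es := ys.orderIsoOfFin hcy with hes
  set t : Fin (n+1) → ℝ := fun i => (et i : ℝ) with ht
  set ss : Fin (m+1) → ℝ := fun j => (es j : ℝ) with hss
  have ht_mono : Monotone t := fun i j hij => Subtype.coe_le_coe.mpr (et.le_iff_le.mpr hij)
  have hs_mono : Monotone ss := fun i j hij => Subtype.coe_le_coe.mpr (es.le_iff_le.mpr hij)
  have ht0 : t 0 = R.a := by
    refine le_antisymm ?_ (hxs_mem _ (et 0).2).1
    have : t (et.symm ⟨R.a, hxs_ne⟩) = R.a := by
      rw [ht]; simp
    rw [← this]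
    exact ht_mono (Fin.zero_le _)
  have htl : t (Fin.last n) = R.b := by
    refine le_antisymm (hxs_mem _ (et (Fin.last n)).2).2 ?_
    have : t (et.symm ⟨R.b, hxb⟩) = R.b := by
      rw [ht]; simp
    rw [← this]
    exact ht_mono (Fin.le_last _)
  have hs0 : ss 0 = R.c := by
    refine le_antisymm ?_ (hys_mem _ (es 0).2).1
    have : ss (es.symm ⟨R.c, hys_ne⟩) = R.c := by
      rw [hss]; simp
    rw [← this]
    exact hs_mono (Fin.zero_le _)
  have hsl : ss (Fin.last m) = R.d := by
    refine le_antisymm (hys_mem _ (es (Fin.last m)).2).2 ?_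
    have : ss (es.symm ⟨R.d, hyd⟩) = R.d := by
      rw [hss]; simp
    rw [← this]
    exact hs_mono (Fin.le_last _)
  -- each A ∈ F corresponds to a cell of the grid
  have key : ∀ A ∈ F, ∃ c : Fin n × Fin m,
      t c.1.castSucc = A.a ∧ t c.1.succ = A.b ∧ ss c.2.castSucc = A.c ∧ ss c.2.succ = A.d := by
    intro A hA
    obtain ⟨u1, u2, u3, u4, u5, u6⟩ := hg A hA
    have hAa : A.a ∈ xs := by rw [hxs]; simp; right; right; left; exact ⟨A, hA, rfl⟩
    have hAb : A.b ∈ xs := by rw [hxs]; simp; right; right; right; exact ⟨A, hA, rfl⟩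
    have hAc : A.c ∈ ys := by rw [hys]; simp; right; right; left; exact ⟨A, hA, rfl⟩
    have hAd : A.d ∈ ys := by rw [hys]; simp; right; right; right; exact ⟨A, hA, rfl⟩
    have hsepx : ∀ z ∈ xs, z ≤ A.a ∨ A.b ≤ z := by
      intro z hz
      rw [hxs] at hz
      simp only [Finset.mem_insert, Finset.mem_union, Finset.mem_image] at hz
      rcases hz with rfl | rfl | ⟨A', hA', rfl⟩ | ⟨A', hA', rfl⟩
      · exact Or.inl u1
      · exact Or.inr u3
      · rcases hx A' hA' A hA with h | h | h
        · exact Or.inl (le_trans (le_of_lt (hg A' hA').2.1) h)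
        · exact Or.inr h
        · exact Or.inl (le_of_eq h.1)
      · rcases hx A' hA' A hA with h | h | h
        · exact Or.inl h
        · exact Or.inr (le_trans h (le_of_lt (hg A' hA').2.1))
        · exact Or.inr (le_of_eq h.2.symm)
    have hsepy : ∀ z ∈ ys, z ≤ A.c ∨ A.d ≤ z := by
      intro z hz
      rw [hys] at hz
      simp only [Finset.mem_insert, Finset.mem_union, Finset.mem_image] at hz
      rcases hz with rfl | rfl | ⟨A', hA', rfl⟩ | ⟨A', hA', rfl⟩
      · exact Or.inl u4
      · exact Or.inr u6
      · rcases hy A' hA' A hA with h | h | h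
        · exact Or.inl (le_trans (le_of_lt (hg A' hA').2.2.2.2.1) h)
        · exact Or.inr h
        · exact Or.inl (le_of_eq h.1)
      · rcases hy A' hA' A hA with h | h | h
        · exact Or.inl h
        · exact Or.inr (le_trans h (le_of_lt (hg A' hA').2.2.2.2.1))
        · exact Or.inr (le_of_eq h.2.symm)
    obtain ⟨i, hi1, hi2⟩ := finset_consec xs n hcx A.a A.b hAa hAb u2 hsepx
    obtain ⟨j, hj1, hj2⟩ := finset_consec ys m hcy A.c A.d hAc hAd u5 hsepy
    exact ⟨(i, j), hi1, hi2, hj1, hj2⟩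
  have key' : ∀ (A : {x // x ∈ F}), ∃ c : Fin n × Fin m,
      t c.1.castSucc = A.1.a ∧ t c.1.succ = A.1.b ∧
      ss c.2.castSucc = A.1.c ∧ ss c.2.succ = A.1.d := fun A => key A.1 A.2
  choose φ h1 h2 h3 h4 using key'
  set T : Fin n × Fin m → ℝ≥0∞ := fun c =>
    ENNReal.ofReal |Rect.inc f ⟨t c.1.castSucc, t c.1.succ, ss c.2.castSucc, ss c.2.succ⟩| ^ p
    with hT
  have hterm : ∀ A ∈ F.attach, ENNReal.ofReal |Rect.inc f A.1| ^ p = T (φ A) := by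
    intro A _
    rw [hT]
    simp only
    rw [h1 A, h2 A, h3 A, h4 A]
  have hinj : ∀ A ∈ F.attach, ∀ A' ∈ F.attach, φ A = φ A' → A = A' := by
    intro A _ A' _ heq
    refine Subtype.ext (rect_ext A.1 A'.1 ?_ ?_ ?_ ?_)
    · rw [← h1 A, ← h1 A', heq]
    · rw [← h2 A, ← h2 A', heq]
    · rw [← h3 A, ← h3 A', heq]
    · rw [← h4 A, ← h4 A', heq]
  calc ∑ A ∈ F, ENNReal.ofReal |Rect.inc f A| ^ p
      = ∑ A ∈ F.attach, ENNReal.ofReal |Rect.inc f A.1| ^ p :=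
        (Finset.sum_attach F _).symm
    _ = ∑ A ∈ F.attach, T (φ A) := Finset.sum_congr rfl hterm
    _ = ∑ c ∈ F.attach.image φ, T c := (Finset.sum_image hinj).symm
    _ ≤ ∑ c : Fin n × Fin m, T c := Finset.sum_le_sum_of_subset (Finset.subset_univ _)
    _ = ∑ i : Fin n, ∑ j : Fin m, T (i, j) := Fintype.sum_prod_type T
    _ ≤ gridVarSum p f R := by
        rw [gridVarSum]
        refine le_iSup_of_le n ?_
        refine le_iSup_of_le m ?_
        refine le_iSup_of_le t ?_
        refine le_iSup_of_le ss ?_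
        rw [iSup_pos ht_mono, iSup_pos hs_mono, iSup_pos ht0, iSup_pos htl,
          iSup_pos hs0, iSup_pos hsl]

lemma polylog (α : ℕ) (θ : ℝ) (hθ : 0 < θ) :
    ∃ C : ℝ, 1 ≤ C ∧ ∀ N : ℕ, 1 ≤ N →
      ((Nat.clog 2 (2*N+2) + 2 : ℕ) : ℝ) ^ α ≤ C * (N:ℝ) ^ θ := by
  set r : ℝ := (2:ℝ) ^ θ with hrdef
  have hr : 1 < r := by
    rw [hrdef]
    rw [Real.one_lt_rpow_iff_of_pos (by norm_num)]
    exact Or.inl ⟨by norm_num, hθ⟩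
  have hr0 : 0 < r := lt_trans one_pos hr
  have htend : Filter.Tendsto (fun L : ℕ => ((L+2:ℕ):ℝ)^α / r^(L+2)) Filter.atTop (nhds 0) := by
    have h0 := tendsto_pow_const_div_const_pow_of_one_lt α hr
    exact h0.comp (Filter.tendsto_add_atTop_nat 2)
  have hb : ∀ L : ℕ, 0 ≤ ((L+2:ℕ):ℝ)^α / r^(L+2) := by
    intro L
    positivity
  obtain ⟨L₀, hL₀⟩ := (Filter.tendsto_atTop'.mp htend (Set.Iio 1)
    (Iio_mem_nhds (by norm_num : (0:ℝ) < 1))).imp (fun L₀ h => h)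
  set C₀ : ℝ := 1 + ∑ L ∈ Finset.range (L₀+1), ((L+2:ℕ):ℝ)^α / r^(L+2) with hC₀def
  have hC₀1 : 1 ≤ C₀ := by
    rw [hC₀def]
    have : 0 ≤ ∑ L ∈ Finset.range (L₀+1), ((L+2:ℕ):ℝ)^α / r^(L+2) :=
      Finset.sum_nonneg (fun L _ => hb L)
    linarith
  have hC₀ : ∀ L : ℕ, ((L+2:ℕ):ℝ)^α / r^(L+2) ≤ C₀ := by
    intro L
    by_cases h : L ≤ L₀
    · have := Finset.single_le_sum (f := fun L => ((L+2:ℕ):ℝ)^α / r^(L+2))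
        (fun i _ => hb i) (Finset.mem_range.mpr (by omega : L < L₀+1))
      rw [hC₀def]; linarith
    · have h1 : ((L+2:ℕ):ℝ)^α / r^(L+2) < 1 := by
        have := hL₀ L (by omega)
        simpa using this
      exact le_trans (le_of_lt h1) hC₀1
  have hmain : ∀ L : ℕ, ((L+2:ℕ):ℝ)^α ≤ (C₀ * r^2) * r^L := by
    intro L
    have h1 := hC₀ L
    have h2 : (0:ℝ) < r^(L+2) := pow_pos hr0 _
    rw [div_le_iff₀ h2] at h1
    calc ((L+2:ℕ):ℝ)^α ≤ C₀ * r^(L+2) := h1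
      _ = (C₀ * r^2) * r^L := by ring
  refine ⟨max 1 ((C₀ * r^2) * (8:ℝ)^θ), le_max_left _ _, ?_⟩
  intro N hN
  set L := Nat.clog 2 (2*N+2) with hL
  have hlow : (2:ℕ)^(L-1) < 2*N+2 := Nat.pow_pred_clog_lt_self (b := 2) (x := 2*N+2) (by norm_num) (by omega)
  have h2L : (2:ℕ)^L < 8*N := by
    have : L - 1 + 1 = L := by
      have : 1 ≤ L := by
        rw [hL]
        have := Nat.le_pow_clog (b := 2) (by norm_num) (2*N+2)
        by_contra hc
        simp only [not_le, Nat.lt_one_iff] at hc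
        rw [hc] at this
        omega
      omega
    calc (2:ℕ)^L = 2 * 2^(L-1) := by rw [← pow_succ']; rw [this]
      _ < 2 * (2*N+2) := by omega
      _ ≤ 8*N := by omega
  have hrL : r ^ L ≤ (8:ℝ)^θ * (N:ℝ)^θ := by
    have e1 : r ^ L = ((2:ℝ)^L) ^ θ := by
      rw [hrdef, ← Real.rpow_natCast ((2:ℝ)^θ) L, ← Real.rpow_mul (by norm_num),
        mul_comm, Real.rpow_mul (by norm_num), Real.rpow_natCast]
    rw [e1, ← Real.mul_rpow (by norm_num) (Nat.cast_nonneg N)]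
    apply Real.rpow_le_rpow (by positivity) _ (le_of_lt hθ)
    calc ((2:ℝ)^L) ≤ ((8*N:ℕ):ℝ) := by
          exact_mod_cast le_of_lt h2L
      _ = 8 * (N:ℝ) := by push_cast; ring
  calc ((L + 2 : ℕ):ℝ)^α ≤ (C₀ * r^2) * r^L := hmain L
    _ ≤ (C₀ * r^2) * ((8:ℝ)^θ * (N:ℝ)^θ) := by
        apply mul_le_mul_of_nonneg_left hrL
        positivity
    _ = ((C₀ * r^2) * (8:ℝ)^θ) * (N:ℝ)^θ := by ring
    _ ≤ max 1 ((C₀ * r^2) * (8:ℝ)^θ) * (N:ℝ)^θ := by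
        apply mul_le_mul_of_nonneg_right (le_max_right _ _)
        positivity

lemma count_bound (p : ℝ) (hp : 1 ≤ p) (f : ℝ × ℝ → ℝ) (R : Rect) (hR : R.Valid)
    (F : Finset Rect) (v : ℝ) (hv : 0 < v)
    (hval : ∀ A ∈ F, A.Valid)
    (hsub : ∀ A ∈ F, R.a ≤ A.a ∧ A.b ≤ R.b ∧ R.c ≤ A.c ∧ A.d ≤ R.d)
    (hdisj : (F : Set Rect).Pairwise fun Q Q' => Disjoint Q.openSet Q'.openSet)
    (hbig : ∀ A ∈ F, v ≤ |Rect.inc f A|) :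
    (F.card : ℝ≥0∞) *
        ENNReal.ofReal (v / ((2 * (Nat.clog 2 (2*F.card+2)) + 2 : ℕ):ℝ)^2) ^ p
      ≤ 2 * (((Nat.clog 2 (2*F.card+2) + 1)^2 : ℕ) : ℝ≥0∞) * gridVarSum p f R := by
  classical
  by_cases hN0 : F.card = 0
  · simp [hN0]
  set N := F.card with hNdef
  set U := Nat.clog 2 (2*N+2) with hUdef
  set βr : ℝ := ((2 * U + 2 : ℕ):ℝ)^2 with hβdef
  have hβ1 : (1:ℝ) ≤ βr := by
    rw [hβdef]
    have : (1:ℝ) ≤ ((2 * U + 2 : ℕ):ℝ) := by exact_mod_cast (by omega : 1 ≤ 2*U+2)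
    nlinarith
  have hvβ : 0 < v / βr := by positivity
  have hp0 : (0:ℝ) ≤ p := le_trans zero_le_one hp
  -- nondegeneracy
  have hnd : ∀ A ∈ F, A.a < A.b ∧ A.c < A.d := by
    intro A hA
    apply nondeg_of_inc_ne f A (hval A hA)
    intro h
    have h2 := hbig A hA
    rw [h] at h2
    simp only [abs_zero] at h2
    linarith
  -- x-coordinates
  set xs : Finset ℝ := insert R.a (insert R.b (F.image Rect.a ∪ F.image Rect.b)) with hxs
  set ys : Finset ℝ := insert R.c (insert R.d (F.image Rect.c ∪ F.image Rect.d)) with hys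
  set K : ℕ := xs.card - 1 with hKdef
  set M : ℕ := ys.card - 1 with hMdef
  have hxa : R.a ∈ xs := by rw [hxs]; exact Finset.mem_insert_self _ _
  have hyc : R.c ∈ ys := by rw [hys]; exact Finset.mem_insert_self _ _
  have hcx : xs.card = K + 1 := by
    have : 0 < xs.card := Finset.card_pos.mpr ⟨R.a, hxa⟩
    omega
  have hcy : ys.card = M + 1 := by
    have : 0 < ys.card := Finset.card_pos.mpr ⟨R.c, hyc⟩
    omega
  have hxcard : xs.card ≤ 2*N + 2 := by
    rw [hxs]
    calc (insert R.a (insert R.b (F.image Rect.a ∪ F.image Rect.b))).card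
        ≤ (insert R.b (F.image Rect.a ∪ F.image Rect.b)).card + 1 :=
          Finset.card_insert_le _ _
      _ ≤ (F.image Rect.a ∪ F.image Rect.b).card + 1 + 1 := by
          have := Finset.card_insert_le R.b (F.image Rect.a ∪ F.image Rect.b)
          omega
      _ ≤ 2*N + 2 := by
          have h1 := Finset.card_union_le (F.image Rect.a) (F.image Rect.b)
          have h2 := Finset.card_image_le (s := F) (f := Rect.a)
          have h3 := Finset.card_image_le (s := F) (f := Rect.b)
          omega
  have hycard : ys.card ≤ 2*N + 2 := by
    rw [hys]
    calc (insert R.c (insert R.d (F.image Rect.c ∪ F.image Rect.d))).card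
        ≤ (insert R.d (F.image Rect.c ∪ F.image Rect.d)).card + 1 :=
          Finset.card_insert_le _ _
      _ ≤ (F.image Rect.c ∪ F.image Rect.d).card + 1 + 1 := by
          have := Finset.card_insert_le R.d (F.image Rect.c ∪ F.image Rect.d)
          omega
      _ ≤ 2*N + 2 := by
          have h1 := Finset.card_union_le (F.image Rect.c) (F.image Rect.d)
          have h2 := Finset.card_image_le (s := F) (f := Rect.c)
          have h3 := Finset.card_image_le (s := F) (f := Rect.d)
          omega
  have hpow : 2*N + 2 ≤ 2^U := Nat.le_pow_clog (by norm_num) _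
  have hK2U : K < 2^U := by omega
  have hM2U : M < 2^U := by omega
  set et := xs.orderIsoOfFin hcx with het
  set es := ys.orderIsoOfFin hcy with hes
  set X : ℕ → ℝ := fun i => (et ⟨min i K, by omega⟩ : ℝ) with hX
  set Y : ℕ → ℝ := fun j => (es ⟨min j M, by omega⟩ : ℝ) with hY
  have hXmono : ∀ i j : ℕ, i ≤ j → X i ≤ X j := by
    intro i j hij
    rw [hX]
    exact Subtype.coe_le_coe.mpr (et.le_iff_le.mpr (by
      simp only [Fin.mk_le_mk]
      omega))
  have hYmono : ∀ i j : ℕ, i ≤ j → Y i ≤ Y j := by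
    intro i j hij
    rw [hY]
    exact Subtype.coe_le_coe.mpr (es.le_iff_le.mpr (by
      simp only [Fin.mk_le_mk]
      omega))
  have hXval : ∀ (i : Fin (K+1)), X i.1 = (et i : ℝ) := by
    intro i
    have h : (⟨min i.1 K, by omega⟩ : Fin (K+1)) = i := by
      apply Fin.ext
      simp only [Fin.val_mk]
      have := i.isLt
      omega
    simp only [hX, h]
  have hYval : ∀ (j : Fin (M+1)), Y j.1 = (es j : ℝ) := by
    intro j
    have h : (⟨min j.1 M, by omega⟩ : Fin (M+1)) = j := by
      apply Fin.ext
      simp only [Fin.val_mk]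
      have := j.isLt
      omega
    simp only [hY, h]
  have hXmemRange : ∀ i : ℕ, R.a ≤ X i ∧ X i ≤ R.b := by
    intro i
    have hmem : X i ∈ xs := by
      simp only [hX]
      exact (et ⟨min i K, by omega⟩).2
    rw [hxs] at hmem
    simp only [Finset.mem_insert, Finset.mem_union, Finset.mem_image] at hmem
    rcases hmem with h | h | ⟨A, hA, h⟩ | ⟨A, hA, h⟩
    · rw [h]; exact ⟨le_refl _, hR.1⟩
    · rw [h]; exact ⟨hR.1, le_refl _⟩
    · rw [← h]
      exact ⟨(hsub A hA).1, le_trans (le_of_lt (hnd A hA).1) (hsub A hA).2.1⟩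
    · rw [← h]
      exact ⟨le_trans (hsub A hA).1 (le_of_lt (hnd A hA).1), (hsub A hA).2.1⟩
  have hYmemRange : ∀ j : ℕ, R.c ≤ Y j ∧ Y j ≤ R.d := by
    intro j
    have hmem : Y j ∈ ys := by
      simp only [hY]
      exact (es ⟨min j M, by omega⟩).2
    rw [hys] at hmem
    simp only [Finset.mem_insert, Finset.mem_union, Finset.mem_image] at hmem
    rcases hmem with h | h | ⟨A, hA, h⟩ | ⟨A, hA, h⟩
    · rw [h]; exact ⟨le_refl _, hR.2⟩
    · rw [h]; exact ⟨hR.2, le_refl _⟩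
    · rw [← h]
      exact ⟨(hsub A hA).2.2.1, le_trans (le_of_lt (hnd A hA).2) (hsub A hA).2.2.2⟩
    · rw [← h]
      exact ⟨le_trans (hsub A hA).2.2.1 (le_of_lt (hnd A hA).2), (hsub A hA).2.2.2⟩
  -- selection of a dyadic piece inside each A
  have key : ∀ A : {x // x ∈ F}, ∃ (D : Rect) (ux uy : ℕ),
      ux ≤ U ∧ uy ≤ U ∧ v / βr ≤ |Rect.inc f D| ∧
      (∃ jx : ℕ, D.a = X (jx * 2^ux) ∧ D.b = X ((jx+1) * 2^ux)) ∧
      (∃ jy : ℕ, D.c = Y (jy * 2^uy) ∧ D.d = Y ((jy+1) * 2^uy)) ∧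
      (A.1.a ≤ D.a ∧ D.b ≤ A.1.b) ∧ (A.1.c ≤ D.c ∧ D.d ≤ A.1.d) ∧ D.Valid := by
    rintro ⟨A, hA⟩
    simp only
    have hAa : A.a ∈ xs := by rw [hxs]; simp; right; right; left; exact ⟨A, hA, rfl⟩
    have hAb : A.b ∈ xs := by rw [hxs]; simp; right; right; right; exact ⟨A, hA, rfl⟩
    have hAc : A.c ∈ ys := by rw [hys]; simp; right; right; left; exact ⟨A, hA, rfl⟩
    have hAd : A.d ∈ ys := by rw [hys]; simp; right; right; right; exact ⟨A, hA, rfl⟩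
    set lA := et.symm ⟨A.a, hAa⟩ with hlA
    set rA := et.symm ⟨A.b, hAb⟩ with hrA
    set cA := es.symm ⟨A.c, hAc⟩ with hcA
    set dA := es.symm ⟨A.d, hAd⟩ with hdA
    have hlr : lA < rA := by
      rw [hlA, hrA]
      exact (et.symm.lt_iff_lt).mpr (Subtype.mk_lt_mk.mpr (hnd A hA).1)
    have hcd : cA < dA := by
      rw [hcA, hdA]
      exact (es.symm.lt_iff_lt).mpr (Subtype.mk_lt_mk.mpr (hnd A hA).2)
    have hXl : X lA.1 = A.a := by rw [hXval lA, hlA]; simp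
    have hXr : X rA.1 = A.b := by rw [hXval rA, hrA]; simp
    have hYc : Y cA.1 = A.c := by rw [hYval cA, hcA]; simp
    have hYd : Y dA.1 = A.d := by rw [hYval dA, hdA]; simp
    obtain ⟨sx, mx, hsx, hchx⟩ := dchain_main U lA.1 rA.1
      (le_of_lt (Fin.lt_iff_val_lt_val.mp hlr)) (by omega)
    obtain ⟨sy, my, hsy, hchy⟩ := dchain_main U cA.1 dA.1
      (le_of_lt (Fin.lt_iff_val_lt_val.mp hcd)) (by omega)
    have hsx0 : 0 < sx := by
      rcases Nat.eq_zero_or_pos sx with h | h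
      · exfalso
        have := hchx.1
        have h2 := hchx.2.1
        rw [h] at h2
        rw [this] at h2
        have := Fin.lt_iff_val_lt_val.mp hlr
        omega
      · exact h
    have hsy0 : 0 < sy := by
      rcases Nat.eq_zero_or_pos sy with h | h
      · exfalso
        have := hchy.1
        have h2 := hchy.2.1
        rw [h] at h2
        rw [this] at h2
        have := Fin.lt_iff_val_lt_val.mp hcd
        omega
      · exact h
    -- decomposition of the increment
    have hdec := inc_grid f (fun i => X (mx i)) (fun j => Y (my j)) sx sy
    have hbnd : v ≤ ∑ i ∈ Finset.range sx, ∑ j ∈ Finset.range sy,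
        |Rect.inc f ⟨X (mx i), X (mx (i+1)), Y (my j), Y (my (j+1))⟩| := by
      calc v ≤ |Rect.inc f A| := hbig A hA
        _ = |Rect.inc f ⟨X (mx 0), X (mx sx), Y (my 0), Y (my sy)⟩| := by
            rw [hchx.1, hchx.2.1, hchy.1, hchy.2.1, hXl, hXr, hYc, hYd]
        _ = |∑ i ∈ Finset.range sx, ∑ j ∈ Finset.range sy,
              Rect.inc f ⟨X (mx i), X (mx (i+1)), Y (my j), Y (my (j+1))⟩| := by
            rw [← hdec]
        _ ≤ ∑ i ∈ Finset.range sx, ∑ j ∈ Finset.range sy,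
              |Rect.inc f ⟨X (mx i), X (mx (i+1)), Y (my j), Y (my (j+1))⟩| := by
            refine le_trans (Finset.abs_sum_le_sum_abs _ _) ?_
            exact Finset.sum_le_sum (fun i _ => Finset.abs_sum_le_sum_abs _ _)
    -- a large piece exists
    have hpiece : ∃ i < sx, ∃ j < sy,
        v / βr ≤ |Rect.inc f ⟨X (mx i), X (mx (i+1)), Y (my j), Y (my (j+1))⟩| := by
      by_contra hcon
      push_neg at hcon
      have hlt : ∑ i ∈ Finset.range sx, ∑ j ∈ Finset.range sy,
          |Rect.inc f ⟨X (mx i), X (mx (i+1)), Y (my j), Y (my (j+1))⟩| <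
          ∑ i ∈ Finset.range sx, ∑ j ∈ Finset.range sy, (v / βr) := by
        apply Finset.sum_lt_sum_of_nonempty ⟨0, Finset.mem_range.mpr hsx0⟩
        intro i hi
        apply Finset.sum_lt_sum_of_nonempty ⟨0, Finset.mem_range.mpr hsy0⟩
        intro j hj
        exact hcon i (Finset.mem_range.mp hi) j (Finset.mem_range.mp hj)
      have hsum : ∑ i ∈ Finset.range sx, ∑ j ∈ Finset.range sy, (v / βr)
          = (sx * sy : ℕ) * (v / βr) := by
        rw [Finset.sum_const, Finset.sum_const]
        simp [nsmul_eq_mul]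
        ring
      have hle : ((sx * sy : ℕ):ℝ) * (v / βr) ≤ v := by
        have hss : ((sx * sy : ℕ):ℝ) ≤ βr := by
          rw [hβdef]
          have h1 : sx * sy ≤ (2*U+2)^2 := by nlinarith
          calc ((sx * sy : ℕ):ℝ) ≤ (((2*U+2)^2 : ℕ):ℝ) := by exact_mod_cast h1
            _ = ((2*U+2:ℕ):ℝ)^2 := by push_cast; ring
        calc ((sx * sy : ℕ):ℝ) * (v / βr) ≤ βr * (v / βr) :=
              mul_le_mul_of_nonneg_right hss (le_of_lt hvβ)
          _ = v := by field_simp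
      rw [hsum] at hlt
      linarith
    obtain ⟨i, hi, j, hj, hbigpiece⟩ := hpiece
    obtain ⟨ux, jx, hux, hmx1, hmx2⟩ := hchx.2.2 i hi
    obtain ⟨uy, jy, huy, hmy1, hmy2⟩ := hchy.2.2 j hj
    refine ⟨⟨X (mx i), X (mx (i+1)), Y (my j), Y (my (j+1))⟩, ux, uy, hux, huy,
      hbigpiece, ⟨jx, by rw [hmx1], by rw [hmx2]⟩, ⟨jy, by rw [hmy1], by rw [hmy2]⟩,
      ?_, ?_, ?_⟩
    · constructor
      · rw [← hXl]
        exact hXmono _ _ (dchain_mono hchx 0 i (by omega) (by omega) |>.trans_eq' (by rw [hchx.1]))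
      · rw [← hXr]
        exact hXmono _ _ (by
          have := dchain_mono hchx (i+1) sx (by omega) (by omega)
          rw [hchx.2.1] at this
          exact this)
    · constructor
      · rw [← hYc]
        exact hYmono _ _ (dchain_mono hchy 0 j (by omega) (by omega) |>.trans_eq' (by rw [hchy.1]))
      · rw [← hYd]
        exact hYmono _ _ (by
          have := dchain_mono hchy (j+1) sy (by omega) (by omega)
          rw [hchy.2.1] at this
          exact this)
    · exact ⟨hXmono _ _ (le_of_lt (dchain_step hchx i hi)),
        hYmono _ _ (le_of_lt (dchain_step hchy j hj))⟩
  choose D ux uy hux huy hbigD hjx hjy hcontx hconty hDval using key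
  -- pigeonhole over scales
  set t : Finset (ℕ × ℕ) := Finset.range (U+1) ×ˢ Finset.range (U+1) with htdef
  have htc : t.card = (U+1)^2 := by
    rw [htdef, Finset.card_product, Finset.card_range]; ring
  have hmaps : ∀ A ∈ F.attach, (ux A, uy A) ∈ t := by
    intro A _
    rw [htdef, Finset.mem_product]
    exact ⟨Finset.mem_range.mpr (by have := hux A; omega),
      Finset.mem_range.mpr (by have := huy A; omega)⟩
  have hcard : t.card * (N / t.card) ≤ F.attach.card := by
    rw [Finset.card_attach]
    exact Nat.mul_div_le N t.card |>.trans_eq' (by ring_nf)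
  obtain ⟨σ, hσt, hfib⟩ := Finset.exists_le_card_fiber_of_mul_le_card_of_maps_to hmaps
    (⟨(0,0), by rw [htdef]; simp⟩) hcard
  set F' := F.attach.filter (fun A => (ux A, uy A) = σ) with hF'def
  -- the selected pieces form a grid family
  set Fd := F'.image D with hFddef
  have hDinj : ∀ A ∈ F', ∀ A' ∈ F', D A = D A' → A = A' := by
    intro A hA A' hA' heq
    by_contra hne
    have hne1 : A.1 ≠ A'.1 := fun h => hne (Subtype.ext h)
    have hd := hdisj A.2 A'.2 hne1
    have hsub1 : (D A).openSet ⊆ A.1.openSet := by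
      rw [Rect.openSet, Rect.openSet]
      exact Set.prod_mono (Set.Ioo_subset_Ioo (hcontx A).1 (hcontx A).2)
        (Set.Ioo_subset_Ioo (hconty A).1 (hconty A).2)
    have hsub2 : (D A).openSet ⊆ A'.1.openSet := by
      rw [heq, Rect.openSet, Rect.openSet]
      exact Set.prod_mono (Set.Ioo_subset_Ioo (hcontx A').1 (hcontx A').2)
        (Set.Ioo_subset_Ioo (hconty A').1 (hconty A').2)
    have hnd2 : (D A).a < (D A).b ∧ (D A).c < (D A).d := by
      apply nondeg_of_inc_ne f (D A) (hDval A)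
      intro h
      have h2 := hbigD A
      rw [h] at h2
      simp only [abs_zero] at h2
      linarith
    have hne2 : (D A).openSet.Nonempty := by
      rw [Rect.openSet]
      exact Set.Nonempty.prod (Set.nonempty_Ioo.mpr hnd2.1) (Set.nonempty_Ioo.mpr hnd2.2)
    have := Set.disjoint_left.mp (hd.mono hsub1 hsub2)
    obtain ⟨z, hz⟩ := hne2
    exact this hz hz
  have hcardFd : Fd.card = F'.card := Finset.card_image_of_injOn hDinj
  -- grid bound for the pieces
  have hgrid : ∑ B ∈ Fd, ENNReal.ofReal |Rect.inc f B| ^ p ≤ gridVarSum p f R := by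
    apply grid_bound p (lt_of_lt_of_le zero_lt_one hp) f R hR
    · -- geometry
      intro B hB
      rw [hFddef] at hB
      obtain ⟨A, hA, rfl⟩ := Finset.mem_image.mp hB
      have hnd2 : (D A).a < (D A).b ∧ (D A).c < (D A).d := by
        apply nondeg_of_inc_ne f (D A) (hDval A)
        intro h
        have h2 := hbigD A
        rw [h] at h2
        simp only [abs_zero] at h2
        linarith
      obtain ⟨jx', e1, e2⟩ := hjx A
      obtain ⟨jy', e3, e4⟩ := hjy A
      refine ⟨?_, hnd2.1, ?_, ?_, hnd2.2, ?_⟩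
      · rw [e1]; exact (hXmemRange _).1
      · rw [e2]; exact (hXmemRange _).2
      · rw [e3]; exact (hYmemRange _).1
      · rw [e4]; exact (hYmemRange _).2
    · -- x trichotomy
      intro B hB B' hB'
      rw [hFddef] at hB hB'
      obtain ⟨A, hA, rfl⟩ := Finset.mem_image.mp hB
      obtain ⟨A', hA', rfl⟩ := Finset.mem_image.mp hB'
      have hu : ux A = ux A' := by
        have h1 := (Finset.mem_filter.mp hA).2
        have h2 := (Finset.mem_filter.mp hA').2
        have : (ux A, uy A) = (ux A', uy A') := by rw [h1, h2]
        exact (Prod.mk.injEq _ _ _ _).mp this |>.1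
      obtain ⟨jx1, e1, e2⟩ := hjx A
      obtain ⟨jx2, e3, e4⟩ := hjx A'
      rw [hu] at e1 e2
      rcases lt_trichotomy jx1 jx2 with h | h | h
      · left
        rw [e2, e3]
        exact hXmono _ _ (Nat.mul_le_mul_right _ (by omega))
      · right; right
        rw [e1, e2, e3, e4, h]
        exact ⟨rfl, rfl⟩
      · right; left
        rw [e1, e4]
        exact hXmono _ _ (Nat.mul_le_mul_right _ (by omega))
    · -- y trichotomy
      intro B hB B' hB'
      rw [hFddef] at hB hB'
      obtain ⟨A, hA, rfl⟩ := Finset.mem_image.mp hB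
      obtain ⟨A', hA', rfl⟩ := Finset.mem_image.mp hB'
      have hu : uy A = uy A' := by
        have h1 := (Finset.mem_filter.mp hA).2
        have h2 := (Finset.mem_filter.mp hA').2
        have : (ux A, uy A) = (ux A', uy A') := by rw [h1, h2]
        exact (Prod.mk.injEq _ _ _ _).mp this |>.2
      obtain ⟨jy1, e1, e2⟩ := hjy A
      obtain ⟨jy2, e3, e4⟩ := hjy A'
      rw [hu] at e1 e2
      rcases lt_trichotomy jy1 jy2 with h | h | h
      · left
        rw [e2, e3]
        exact hYmono _ _ (Nat.mul_le_mul_right _ (by omega))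
      · right; right
        rw [e1, e2, e3, e4, h]
        exact ⟨rfl, rfl⟩
      · right; left
        rw [e1, e4]
        exact hYmono _ _ (Nat.mul_le_mul_right _ (by omega))
  -- lower bound for the sum over pieces
  set x : ℝ≥0∞ := ENNReal.ofReal (v / βr) ^ p with hxdef
  have hxle : ∀ B ∈ Fd, x ≤ ENNReal.ofReal |Rect.inc f B| ^ p := by
    intro B hB
    rw [hFddef] at hB
    obtain ⟨A, hA, rfl⟩ := Finset.mem_image.mp hB
    rw [hxdef]
    exact ENNReal.rpow_le_rpow (ENNReal.ofReal_le_ofReal (hbigD A)) hp0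
  have hlower : (F'.card : ℝ≥0∞) * x ≤ gridVarSum p f R := by
    calc (F'.card : ℝ≥0∞) * x = (Fd.card : ℝ≥0∞) * x := by rw [hcardFd]
      _ = Fd.card • x := by rw [nsmul_eq_mul]
      _ ≤ ∑ B ∈ Fd, ENNReal.ofReal |Rect.inc f B| ^ p := Finset.card_nsmul_le_sum Fd _ x hxle
      _ ≤ gridVarSum p f R := hgrid
  -- single rectangle bound
  have hsingle : x ≤ gridVarSum p f R := by
    obtain ⟨A₀, hA₀⟩ := Finset.card_pos.mp (by omega : 0 < F.card)
    have h1 : ∑ B ∈ {A₀}, ENNReal.ofReal |Rect.inc f B| ^ p ≤ gridVarSum p f R := by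
      apply grid_bound p (lt_of_lt_of_le zero_lt_one hp) f R hR
      · intro B hB
        rw [Finset.mem_singleton] at hB
        subst hB
        obtain ⟨w1, w2, w3, w4⟩ := hsub B hA₀
        obtain ⟨w5, w6⟩ := hnd B hA₀
        exact ⟨w1, w5, w2, w3, w6, w4⟩
      · intro B hB B' hB'
        rw [Finset.mem_singleton] at hB hB'
        subst hB; subst hB'
        right; right; exact ⟨rfl, rfl⟩
      · intro B hB B' hB'
        rw [Finset.mem_singleton] at hB hB'
        subst hB; subst hB'
        right; right; exact ⟨rfl, rfl⟩
    rw [Finset.sum_singleton] at h1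
    refine le_trans ?_ h1
    rw [hxdef]
    apply ENNReal.rpow_le_rpow _ hp0
    apply ENNReal.ofReal_le_ofReal
    calc v / βr ≤ v := div_le_self (le_of_lt hv) hβ1
      _ ≤ |Rect.inc f A₀| := hbig A₀ hA₀
  -- combine
  have hNle : N ≤ t.card * (N / t.card) + t.card := by
    have h0 : 0 < t.card := by rw [htc]; positivity
    have := Nat.div_add_mod N t.card
    have := Nat.mod_lt N h0
    omega
  calc (N : ℝ≥0∞) * x
      ≤ ((t.card * (N / t.card) + t.card : ℕ) : ℝ≥0∞) * x := by
        apply mul_le_mul_left (by exact_mod_cast hNle)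
    _ = (t.card : ℝ≥0∞) * (((N / t.card : ℕ) : ℝ≥0∞) * x) + (t.card : ℝ≥0∞) * x := by
        push_cast
        ring
    _ ≤ (t.card : ℝ≥0∞) * gridVarSum p f R + (t.card : ℝ≥0∞) * gridVarSum p f R := by
        apply add_le_add
        · apply mul_le_mul_right
          calc ((N / t.card : ℕ) : ℝ≥0∞) * x ≤ (F'.card : ℝ≥0∞) * x := by
                apply mul_le_mul_left
                exact_mod_cast hfib
            _ ≤ gridVarSum p f R := hlower
        · exact mul_le_mul_right hsingle _
    _ = 2 * (((U + 1)^2 : ℕ) : ℝ≥0∞) * gridVarSum p f R := by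
        rw [htc]
        ring

lemma single_bound (p : ℝ) (hp : 1 ≤ p) (f : ℝ × ℝ → ℝ) (R : Rect) (hR : R.Valid)
    (Q : Rect) (hvalQ : Q.Valid)
    (hsubQ : R.a ≤ Q.a ∧ Q.b ≤ R.b ∧ R.c ≤ Q.c ∧ Q.d ≤ R.d) :
    ENNReal.ofReal |Rect.inc f Q| ^ p ≤ gridVarSum p f R := by
  by_cases h : Rect.inc f Q = 0
  · rw [h]
    simp only [abs_zero, ENNReal.ofReal_zero]
    rw [ENNReal.zero_rpow_of_pos (lt_of_lt_of_le zero_lt_one hp)]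
    exact zero_le
  · have hnd := nondeg_of_inc_ne f Q hvalQ h
    have h1 : ∑ B ∈ {Q}, ENNReal.ofReal |Rect.inc f B| ^ p ≤ gridVarSum p f R := by
      apply grid_bound p (lt_of_lt_of_le zero_lt_one hp) f R hR
      · intro B hB
        rw [Finset.mem_singleton] at hB
        subst hB
        exact ⟨hsubQ.1, hnd.1, hsubQ.2.1, hsubQ.2.2.1, hnd.2, hsubQ.2.2.2⟩
      · intro B hB B' hB'
        rw [Finset.mem_singleton] at hB hB'
        subst hB; subst hB'
        right; right; exact ⟨rfl, rfl⟩
      · intro B hB B' hB'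
        rw [Finset.mem_singleton] at hB hB'
        subst hB; subst hB'
        right; right; exact ⟨rfl, rfl⟩
    rw [Finset.sum_singleton] at h1
    exact h1

lemma count_real (p : ℝ) (hp : 1 ≤ p) (f : ℝ × ℝ → ℝ) (R : Rect) (hR : R.Valid)
    (F : Finset Rect) (v : ℝ) (hv : 0 < v)
    (hval : ∀ A ∈ F, A.Valid)
    (hsub : ∀ A ∈ F, R.a ≤ A.a ∧ A.b ≤ R.b ∧ R.c ≤ A.c ∧ A.d ≤ R.d)
    (hdisj : (F : Set Rect).Pairwise fun Q Q' => Disjoint Q.openSet Q'.openSet)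
    (hbig : ∀ A ∈ F, v ≤ |Rect.inc f A|)
    (hG : gridVarSum p f R ≠ ⊤) :
    (F.card : ℝ) * (v / ((2 * (Nat.clog 2 (2*F.card+2)) + 2 : ℕ):ℝ)^2) ^ p
      ≤ 2 * (((Nat.clog 2 (2*F.card+2) + 1)^2 : ℕ):ℝ) * (gridVarSum p f R).toReal := by
  have h := count_bound p hp f R hR F v hv hval hsub hdisj hbig
  have hβ : (0:ℝ) ≤ v / ((2 * (Nat.clog 2 (2*F.card+2)) + 2 : ℕ):ℝ)^2 := by positivity
  have hfin : (2 : ℝ≥0∞) * (((Nat.clog 2 (2*F.card+2) + 1)^2 : ℕ) : ℝ≥0∞) *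
      gridVarSum p f R ≠ ⊤ := by
    apply ENNReal.mul_ne_top
    · exact ENNReal.mul_ne_top (by simp) (ENNReal.natCast_ne_top _)
    · exact hG
  have h2 := ENNReal.toReal_mono hfin h
  rw [ENNReal.toReal_mul, ENNReal.toReal_mul, ENNReal.toReal_mul] at h2
  rw [ENNReal.toReal_natCast, ENNReal.toReal_ofNat, ENNReal.toReal_natCast] at h2
  rw [← ENNReal.toReal_rpow, ENNReal.toReal_ofReal hβ] at h2
  exact h2

lemma two_pow_rpow (n : ℕ) (y : ℝ) : ((2:ℝ)^n)^y = ((2:ℝ)^y)^n := by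
  rw [← Real.rpow_natCast (2:ℝ) n, ← Real.rpow_mul (by norm_num), mul_comm,
    Real.rpow_mul (by norm_num), Real.rpow_natCast]

lemma my_geom_sum_le {ρ : ℝ} (h0 : 0 ≤ ρ) (h1 : ρ < 1) (n : ℕ) :
    ∑ i ∈ Finset.range n, ρ^i ≤ 1/(1-ρ) := by
  have h2 : 0 < 1 - ρ := by linarith
  rw [geom_sum_eq (ne_of_lt h1)]
  rw [show (ρ^n - 1)/(ρ - 1) = (1 - ρ^n)/(1 - ρ) by
    rw [div_eq_div_iff (by linarith) (by linarith)]; ring]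
  rw [div_le_div_iff_of_pos_right h2]
  have : 0 ≤ ρ^n := pow_nonneg h0 n
  linarith

set_option maxHeartbeats 2000000 in
/-- for every `p ≥ 1` and `ε > 0` there is `c = c(p,ε) ≥ 1` with
`|f|_{(p+ε)-var;R} ≤ c · V_p(f;R)` for every `f` and every rectangle `R ⊆ [0,T]²`. -/
theorem controlled_var_le_const_mul_grid_var (p ε : ℝ) (hp : 1 ≤ p) (hε : 0 < ε) :
    ∃ c : ℝ, 1 ≤ c ∧
      ∀ (T : ℝ), 0 < T → ∀ (f : ℝ × ℝ → ℝ) (R : Rect), R.Valid →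
        R.toSet ⊆ (Rect.mk 0 T 0 T).toSet →
        cVarSum (p + ε) f R ^ (1 / (p + ε)) ≤
          ENNReal.ofReal c * gridVarSum p f R ^ (1 / p) := by
  classical
  have hp0 : (0:ℝ) < p := lt_of_lt_of_le zero_lt_one hp
  set q := p + ε with hqdef
  have hq1 : 1 ≤ q := by rw [hqdef]; linarith
  have hq0 : (0:ℝ) < q := by linarith
  set δ := ε / (2*q) with hδdef
  have hδ0 : 0 < δ := by rw [hδdef]; positivity
  have hδ1 : δ < 1 := by
    rw [hδdef, div_lt_one (by linarith)]
    rw [hqdef]; linarith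
  have h1δ : (0:ℝ) < 1 - δ := by linarith
  set p' := p / (1-δ) with hp'def
  have hp'0 : 0 < p' := by rw [hp'def]; positivity
  have hqδ : q * δ = ε/2 := by
    rw [hδdef]
    field_simp
  have hp'q : p' < q := by
    rw [hp'def, div_lt_iff₀ h1δ]
    have he : q * (1-δ) = q - ε/2 := by rw [mul_sub, mul_one, hqδ]
    rw [he, hqdef]
    linarith
  set m := ⌈p⌉₊ with hmdef
  have hpm : p ≤ (m:ℝ) := Nat.le_ceil p
  obtain ⟨Cδ, hCδ1, hCδ⟩ := polylog (2 + 2*m) δ hδ0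
  have h4p : (0:ℝ) < (4:ℝ)^p := Real.rpow_pos_of_pos (by norm_num) p
  set c₄ := 2 * (4:ℝ)^p * Cδ with hc₄def
  have hc₄pos : 0 < c₄ := by rw [hc₄def]; positivity
  set c₅ := c₄ ^ (1/(1-δ)) with hc₅def
  have hc₅pos : 0 < c₅ := Real.rpow_pos_of_pos hc₄pos _
  have h2p' : (0:ℝ) < (2:ℝ)^p' := Real.rpow_pos_of_pos (by norm_num) p'
  have h2q : (0:ℝ) < (2:ℝ)^q := Real.rpow_pos_of_pos (by norm_num) q
  set ρ := (2:ℝ)^p' / (2:ℝ)^q with hρdef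
  have hρ0 : 0 ≤ ρ := by rw [hρdef]; positivity
  have hρ1 : ρ < 1 := by
    rw [hρdef, div_lt_one h2q]
    exact Real.rpow_lt_rpow_of_exponent_lt one_lt_two hp'q
  have h1ρ : (0:ℝ) < 1 - ρ := by linarith
  set Cfin := c₅ * (2:ℝ)^p' * (1/(1-ρ)) with hCfindef
  have hCfin0 : 0 < Cfin := by rw [hCfindef]; positivity
  refine ⟨max 1 (Cfin ^ (1/q)), le_max_left _ _, ?_⟩
  intro T hT f R hRval hRsub
  by_cases hG : gridVarSum p f R = ⊤
  · rw [hG, ENNReal.top_rpow_of_pos (by positivity : (0:ℝ) < 1/p), ENNReal.mul_top ?hz]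
    · exact le_top
    case hz =>
      rw [← ENNReal.ofReal_zero]
      intro hcon
      have : (max 1 (Cfin ^ (1/q))) ≤ 0 := by
        by_contra hcc
        push_neg at hcc
        have := ENNReal.ofReal_pos.mpr hcc
        rw [hcon] at this
        simp at this
      have : (1:ℝ) ≤ 0 := le_trans (le_max_left _ _) this
      linarith
  -- finite grid variation
  set G := gridVarSum p f R with hGdef
  set Gr := G.toReal with hGr
  have hGr0 : 0 ≤ Gr := ENNReal.toReal_nonneg
  set g := Gr ^ (1/p) with hgdef
  have hg0 : 0 ≤ g := Real.rpow_nonneg hGr0 _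
  have hgp : g ^ p = Gr := by
    rw [hgdef, ← Real.rpow_mul hGr0, one_div_mul_cancel (ne_of_gt hp0), Real.rpow_one]
  -- the per-partition estimate
  have main : ∀ P : Finset Rect, IsPartition R P →
      ∑ Q ∈ P, ENNReal.ofReal |Rect.inc f Q| ^ q ≤ ENNReal.ofReal (Cfin * g^q) := by
    intro P hP
    obtain ⟨hvalP, hdisjP, hcovP⟩ := hP
    have hsubP : ∀ Q ∈ P, R.a ≤ Q.a ∧ Q.b ≤ R.b ∧ R.c ≤ Q.c ∧ Q.d ≤ R.d := by
      intro Q hQ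
      have hsub1 : Q.toSet ⊆ R.toSet := by
        rw [← hcovP]
        exact Set.subset_biUnion_of_mem hQ
      have h1 : (Q.a, Q.c) ∈ Q.toSet := by
        rw [Rect.toSet]
        exact Set.mk_mem_prod (Set.mem_Icc.mpr ⟨le_refl _, (hvalP Q hQ).1⟩)
          (Set.mem_Icc.mpr ⟨le_refl _, (hvalP Q hQ).2⟩)
      have h2 : (Q.b, Q.d) ∈ Q.toSet := by
        rw [Rect.toSet]
        exact Set.mk_mem_prod (Set.mem_Icc.mpr ⟨(hvalP Q hQ).1, le_refl _⟩)
          (Set.mem_Icc.mpr ⟨(hvalP Q hQ).2, le_refl _⟩)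
      have h3 := hsub1 h1
      have h4 := hsub1 h2
      rw [Rect.toSet, Set.mem_prod] at h3 h4
      exact ⟨(Set.mem_Icc.mp h3.1).1, (Set.mem_Icc.mp h4.1).2,
        (Set.mem_Icc.mp h3.2).1, (Set.mem_Icc.mp h4.2).2⟩
    -- step A : every increment is at most g
    have stepA : ∀ Q ∈ P, |Rect.inc f Q| ≤ g := by
      intro Q hQ
      have h1 := single_bound p hp f R hRval Q (hvalP Q hQ) (hsubP Q hQ)
      rw [← hGdef] at h1
      have h2 := ENNReal.toReal_mono hG h1
      rw [← ENNReal.toReal_rpow, ENNReal.toReal_ofReal (abs_nonneg _)] at h2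
      calc |Rect.inc f Q| = (|Rect.inc f Q| ^ p) ^ (1/p) := by
            rw [← Real.rpow_mul (abs_nonneg _), mul_one_div_cancel (ne_of_gt hp0),
              Real.rpow_one]
        _ ≤ Gr ^ (1/p) := Real.rpow_le_rpow (Real.rpow_nonneg (abs_nonneg _) _) h2
            (by positivity)
        _ = g := by rw [hgdef]
    -- restrict to nonzero increments
    set P' := P.filter (fun Q => Rect.inc f Q ≠ 0) with hP'def
    have hsum0 : ∑ Q ∈ P, ENNReal.ofReal |Rect.inc f Q| ^ q
        = ∑ Q ∈ P', ENNReal.ofReal |Rect.inc f Q| ^ q := by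
      rw [hP'def]
      refine (Finset.sum_filter_of_ne ?_).symm
      intro Q hQ hne
      intro hc
      apply hne
      rw [hc]
      simp only [abs_zero, ENNReal.ofReal_zero]
      exact ENNReal.zero_rpow_of_pos hq0
    rcases Finset.eq_empty_or_nonempty P' with hPe | ⟨Q₀, hQ₀⟩
    · rw [hsum0, hPe]
      simp only [Finset.sum_empty]
      exact zero_le
    have hQ₀P : Q₀ ∈ P := Finset.mem_of_mem_filter Q₀ hQ₀
    have hQ₀ne : Rect.inc f Q₀ ≠ 0 := (Finset.mem_filter.mp hQ₀).2
    have hgpos : 0 < g := lt_of_lt_of_le (abs_pos.mpr hQ₀ne) (stepA Q₀ hQ₀P)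
    have hGrpos : 0 < Gr := by rw [← hgp]; positivity
    -- dyadic level of each increment
    set lv : Rect → ℕ := fun Q => Nat.log 2 ⌊g / |Rect.inc f Q|⌋₊ with hlvdef
    have hlv : ∀ Q ∈ P', |Rect.inc f Q| ≤ g / 2^(lv Q) ∧
        g / 2^(lv Q + 1) < |Rect.inc f Q| := by
      intro Q hQ
      have hQP : Q ∈ P := Finset.mem_of_mem_filter Q hQ
      have hane : Rect.inc f Q ≠ 0 := (Finset.mem_filter.mp hQ).2
      have ha0 : 0 < |Rect.inc f Q| := abs_pos.mpr hane
      have hag : |Rect.inc f Q| ≤ g := stepA Q hQP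
      have hr1 : 1 ≤ g / |Rect.inc f Q| := (one_le_div ha0).mpr hag
      have hb1 : 1 ≤ ⌊g / |Rect.inc f Q|⌋₊ := Nat.le_floor (by exact_mod_cast hr1)
      have hlveq : lv Q = Nat.log 2 ⌊g / |Rect.inc f Q|⌋₊ := rfl
      have h2l : 2^(lv Q) ≤ ⌊g / |Rect.inc f Q|⌋₊ := by
        rw [hlveq]
        exact Nat.pow_log_le_self 2 (by omega)
      have h2u : ⌊g / |Rect.inc f Q|⌋₊ < 2^(lv Q + 1) := by
        rw [hlveq]
        exact Nat.lt_pow_succ_log_self (by norm_num) _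
      have hfl : ((⌊g / |Rect.inc f Q|⌋₊ : ℕ):ℝ) ≤ g / |Rect.inc f Q| :=
        Nat.floor_le (by positivity)
      have hfu : g / |Rect.inc f Q| < ((⌊g / |Rect.inc f Q|⌋₊ : ℕ):ℝ) + 1 :=
        Nat.lt_floor_add_one _
      constructor
      · rw [le_div_iff₀ (by positivity : (0:ℝ) < 2^(lv Q))]
        have hchain : ((2:ℝ)^(lv Q)) ≤ g / |Rect.inc f Q| := by
          calc ((2:ℝ)^(lv Q)) = ((2^(lv Q) : ℕ):ℝ) := by push_cast; ring
            _ ≤ ((⌊g / |Rect.inc f Q|⌋₊ : ℕ):ℝ) := by exact_mod_cast h2l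
            _ ≤ g / |Rect.inc f Q| := hfl
        calc |Rect.inc f Q| * 2^(lv Q) = 2^(lv Q) * |Rect.inc f Q| := by ring
          _ ≤ (g/|Rect.inc f Q|) * |Rect.inc f Q| :=
              mul_le_mul_of_nonneg_right hchain (le_of_lt ha0)
          _ = g := by field_simp
      · rw [div_lt_iff₀ (by positivity : (0:ℝ) < 2^(lv Q + 1))]
        have hchain : g / |Rect.inc f Q| < ((2:ℝ)^(lv Q + 1)) := by
          calc g / |Rect.inc f Q| < ((⌊g / |Rect.inc f Q|⌋₊ : ℕ):ℝ) + 1 := hfu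
            _ ≤ ((2^(lv Q + 1) : ℕ):ℝ) := by exact_mod_cast h2u
            _ = ((2:ℝ)^(lv Q + 1)) := by push_cast; ring
        calc g = (g/|Rect.inc f Q|) * |Rect.inc f Q| := by field_simp
          _ < 2^(lv Q + 1) * |Rect.inc f Q| := mul_lt_mul_of_pos_right hchain ha0
          _ = |Rect.inc f Q| * 2^(lv Q + 1) := by ring
    -- fiberwise decomposition over levels
    set K₀ := (P'.sup lv) + 1 with hK₀def
    have hmaps : ∀ Q ∈ P', lv Q ∈ Finset.range K₀ := by
      intro Q hQ
      rw [Finset.mem_range, hK₀def]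
      have := Finset.le_sup (f := lv) hQ
      omega
    have hfibeq := Finset.sum_fiberwise_of_maps_to hmaps
      (fun Q => ENNReal.ofReal |Rect.inc f Q| ^ q)
    -- per-level estimate
    have hklevel : ∀ k, ∑ Q ∈ P'.filter (fun Q => lv Q = k),
        ENNReal.ofReal |Rect.inc f Q| ^ q
        ≤ ENNReal.ofReal (c₅ * (2:ℝ)^p' * g^q * ρ^k) := by
      intro k
      set Fk := P'.filter (fun Q => lv Q = k) with hFkdef
      set Nk := Fk.card with hNkdef
      -- cardinality bound
      have hNkb : (Nk:ℝ) ≤ c₅ * ((2:ℝ)^p')^(k+1) := by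
        rcases Nat.eq_zero_or_pos Nk with hNk0 | hNk1
        · rw [hNk0]
          push_cast
          positivity
        · -- use the counting lemma
          have hcount := count_real p hp f R hRval Fk (g / 2^(k+1))
            (by positivity)
            (fun A hA => hvalP A (Finset.mem_of_mem_filter A
              (Finset.mem_of_mem_filter A hA)))
            (fun A hA => hsubP A (Finset.mem_of_mem_filter A
              (Finset.mem_of_mem_filter A hA)))
            (hdisjP.mono (fun A hA => Finset.mem_coe.mpr
              (Finset.mem_of_mem_filter A (Finset.mem_of_mem_filter A
                (Finset.mem_coe.mp hA)))))
            (fun A hA => by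
              have h1 := (hlv A (Finset.mem_of_mem_filter A hA)).2
              have h2 : lv A = k := (Finset.mem_filter.mp hA).2
              rw [h2] at h1
              exact le_of_lt h1)
            (by rw [← hGdef]; exact hG)
          rw [← hNkdef, ← hGr] at hcount
          set Uk := Nat.clog 2 (2*Nk+2) with hUkdef
          set Wk := ((2 * Uk + 2 : ℕ):ℝ) with hWkdef
          have hWk2 : (0:ℝ) < Wk := by rw [hWkdef]; positivity
          -- transform the left side
          have hlhs : ((g / 2^(k+1)) / Wk^2) ^ p = Gr / ((2^(k+1))^p * (Wk^2)^p) := by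
            rw [Real.div_rpow (by positivity) (by positivity),
              Real.div_rpow hg0 (by positivity), hgp]
            field_simp
          rw [hlhs] at hcount
          -- clear Gr
          have hstep1 : (Nk:ℝ) ≤ 2 * ((Uk+1)^2 : ℕ) * ((2^(k+1))^p * (Wk^2)^p) := by
            have h2' : (0:ℝ) < ((2:ℝ)^(k+1))^p := Real.rpow_pos_of_pos (by positivity) _
            have h3' : (0:ℝ) < (Wk^2)^p := Real.rpow_pos_of_pos (by positivity) _
            have h6' : (0:ℝ) < ((2:ℝ)^(k+1))^p * (Wk^2)^p := mul_pos h2' h3'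
            have hmul := mul_le_mul_of_nonneg_right hcount (le_of_lt h6')
            have heq1 : (Nk:ℝ) * (Gr / (((2:ℝ)^(k+1))^p * (Wk^2)^p)) *
                (((2:ℝ)^(k+1))^p * (Wk^2)^p) = (Nk:ℝ) * Gr := by
              field_simp
            rw [heq1, show 2 * (((Uk+1)^2 : ℕ):ℝ) * Gr * (((2:ℝ)^(k+1))^p * (Wk^2)^p)
              = (2 * (((Uk+1)^2 : ℕ):ℝ) * (((2:ℝ)^(k+1))^p * (Wk^2)^p)) * Gr
              by ring] at hmul
            have := le_of_mul_le_mul_right (by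
              calc (Nk:ℝ) * Gr ≤ _ := hmul) hGrpos
            exact this
          -- polylog bound
          have hpoly : 2 * (((Uk+1)^2 : ℕ):ℝ) * (Wk^2)^p ≤ c₄ * (Nk:ℝ)^δ := by
            have hUk2 : (1:ℝ) ≤ ((Uk + 2 : ℕ):ℝ) := by exact_mod_cast (by omega : 1 ≤ Uk+2)
            have e1 : (((Uk+1)^2 : ℕ):ℝ) ≤ ((Uk+2:ℕ):ℝ)^2 := by
              exact_mod_cast Nat.pow_le_pow_left (by omega : Uk+1 ≤ Uk+2) 2
            have e2 : (Wk^2)^p ≤ (4:ℝ)^p * (((Uk+2:ℕ):ℝ)^2)^p := by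
              rw [← Real.mul_rpow (by norm_num) (by positivity)]
              apply Real.rpow_le_rpow (by positivity) ?_ (le_of_lt hp0)
              rw [hWkdef]
              have hnat : (2*Uk+2)^2 ≤ 4*(Uk+2)^2 := by
                calc (2*Uk+2)^2 = 4*(Uk+1)^2 := by ring
                  _ ≤ 4*(Uk+2)^2 := by
                      have := Nat.pow_le_pow_left (show Uk+1 ≤ Uk+2 by omega) 2
                      omega
              exact_mod_cast hnat
            have e3 : (((Uk+2:ℕ):ℝ)^2)^p ≤ ((Uk+2:ℕ):ℝ)^(2*m) := by
              have h1le : (1:ℝ) ≤ ((Uk+2:ℕ):ℝ)^2 := by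
                calc (1:ℝ) = 1^2 := by norm_num
                  _ ≤ ((Uk+2:ℕ):ℝ)^2 := by
                      apply pow_le_pow_left₀ (by norm_num) hUk2
              calc (((Uk+2:ℕ):ℝ)^2)^p ≤ (((Uk+2:ℕ):ℝ)^2)^(m:ℝ) :=
                    Real.rpow_le_rpow_of_exponent_le h1le hpm
                _ = (((Uk+2:ℕ):ℝ)^2)^(m:ℕ) := Real.rpow_natCast _ m
                _ = ((Uk+2:ℕ):ℝ)^(2*m) := by rw [← pow_mul]
            have e4 : ((Uk+2:ℕ):ℝ)^(2+2*m) ≤ Cδ * (Nk:ℝ)^δ := by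
              rw [hUkdef]
              exact hCδ Nk hNk1
            calc 2 * (((Uk+1)^2 : ℕ):ℝ) * (Wk^2)^p
                ≤ 2 * (((Uk+2:ℕ):ℝ)^2) * ((4:ℝ)^p * (((Uk+2:ℕ):ℝ)^2)^p) := by
                  apply mul_le_mul
                  · exact mul_le_mul_of_nonneg_left e1 (by norm_num)
                  · exact e2
                  · positivity
                  · positivity
              _ ≤ 2 * (((Uk+2:ℕ):ℝ)^2) * ((4:ℝ)^p * ((Uk+2:ℕ):ℝ)^(2*m)) := by
                  apply mul_le_mul_of_nonneg_left
                    (mul_le_mul_of_nonneg_left e3 (by positivity)) (by positivity)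
              _ = 2 * (4:ℝ)^p * ((Uk+2:ℕ):ℝ)^(2+2*m) := by
                  rw [pow_add]
                  ring
              _ ≤ 2 * (4:ℝ)^p * (Cδ * (Nk:ℝ)^δ) := by
                  apply mul_le_mul_of_nonneg_left e4 (by positivity)
              _ = c₄ * (Nk:ℝ)^δ := by rw [hc₄def]; ring
          -- combine
          have hNk3 : (Nk:ℝ) ≤ c₄ * (Nk:ℝ)^δ * (2^(k+1))^p := by
            calc (Nk:ℝ) ≤ 2 * ((Uk+1)^2 : ℕ) * ((2^(k+1))^p * (Wk^2)^p) := hstep1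
              _ = (2 * (((Uk+1)^2 : ℕ):ℝ) * (Wk^2)^p) * (2^(k+1))^p := by ring
              _ ≤ (c₄ * (Nk:ℝ)^δ) * (2^(k+1))^p := by
                  apply mul_le_mul_of_nonneg_right hpoly (by positivity)
          have hNkpos : (0:ℝ) < (Nk:ℝ) := by exact_mod_cast hNk1
          have hNkδpos : (0:ℝ) < (Nk:ℝ)^δ := Real.rpow_pos_of_pos hNkpos _
          have hNk4 : (Nk:ℝ)^(1-δ) ≤ c₄ * (2^(k+1))^p := by
            rw [Real.rpow_sub hNkpos, Real.rpow_one]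
            rw [div_le_iff₀ hNkδpos]
            calc (Nk:ℝ) ≤ c₄ * (Nk:ℝ)^δ * (2^(k+1))^p := hNk3
              _ = c₄ * (2^(k+1))^p * (Nk:ℝ)^δ := by ring
          calc (Nk:ℝ) = ((Nk:ℝ)^(1-δ))^(1/(1-δ)) := by
                rw [← Real.rpow_mul (le_of_lt hNkpos), mul_one_div_cancel (ne_of_gt h1δ),
                  Real.rpow_one]
            _ ≤ (c₄ * (2^(k+1))^p)^(1/(1-δ)) :=
                Real.rpow_le_rpow (Real.rpow_nonneg (le_of_lt hNkpos) _) hNk4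
                  (by positivity)
            _ = c₅ * ((2^(k+1):ℝ)^p)^(1/(1-δ)) := by
                rw [Real.mul_rpow (le_of_lt hc₄pos) (by positivity), hc₅def]
            _ = c₅ * ((2:ℝ)^p')^(k+1) := by
                rw [← Real.rpow_natCast (2:ℝ) (k+1)]
                rw [← Real.rpow_mul (by norm_num : (0:ℝ) ≤ 2),
                  ← Real.rpow_mul (by norm_num : (0:ℝ) ≤ 2)]
                rw [← Real.rpow_natCast ((2:ℝ)^p') (k+1),
                  ← Real.rpow_mul (by norm_num : (0:ℝ) ≤ 2)]
                congr 1
                rw [hp'def]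
                field_simp
      -- sum over the fiber
      have hterm : ∀ Q ∈ Fk, ENNReal.ofReal |Rect.inc f Q| ^ q
          ≤ ENNReal.ofReal ((g / 2^k)^q) := by
        intro Q hQ
        have h1 := (hlv Q (Finset.mem_of_mem_filter Q hQ)).1
        have h2 : lv Q = k := (Finset.mem_filter.mp hQ).2
        rw [h2] at h1
        rw [← ENNReal.ofReal_rpow_of_nonneg (show (0:ℝ) ≤ g/2^k by positivity)
          (le_of_lt hq0)]
        exact ENNReal.rpow_le_rpow (ENNReal.ofReal_le_ofReal h1) (le_of_lt hq0)
      calc ∑ Q ∈ Fk, ENNReal.ofReal |Rect.inc f Q| ^ q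
          ≤ ∑ _Q ∈ Fk, ENNReal.ofReal ((g / 2^k)^q) := Finset.sum_le_sum hterm
        _ = (Nk : ℝ≥0∞) * ENNReal.ofReal ((g / 2^k)^q) := by
            rw [Finset.sum_const, hNkdef, nsmul_eq_mul]
        _ = ENNReal.ofReal ((Nk:ℝ) * (g / 2^k)^q) := by
            rw [ENNReal.ofReal_mul (Nat.cast_nonneg Nk), ENNReal.ofReal_natCast]
        _ ≤ ENNReal.ofReal (c₅ * (2:ℝ)^p' * g^q * ρ^k) := by
            apply ENNReal.ofReal_le_ofReal
            have hgq : (g / 2^k)^q = g^q * (((2:ℝ)^q)^k)⁻¹ := by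
              rw [Real.div_rpow hg0 (by positivity), two_pow_rpow k q, div_eq_mul_inv]
            rw [hgq]
            calc (Nk:ℝ) * (g^q * (((2:ℝ)^q)^k)⁻¹)
                ≤ (c₅ * ((2:ℝ)^p')^(k+1)) * (g^q * (((2:ℝ)^q)^k)⁻¹) := by
                  apply mul_le_mul_of_nonneg_right hNkb (by positivity)
              _ = c₅ * g^q * (((2:ℝ)^p')^(k+1) * (((2:ℝ)^q)^k)⁻¹) := by ring
              _ = c₅ * g^q * ((2:ℝ)^p' * ρ^k) := by
                  congr 1
                  rw [hρdef, div_pow, div_eq_mul_inv, pow_succ]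
                  ring
              _ = c₅ * (2:ℝ)^p' * g^q * ρ^k := by ring
    -- total
    rw [hsum0, ← hfibeq]
    calc ∑ k ∈ Finset.range K₀, ∑ Q ∈ P'.filter (fun Q => lv Q = k),
          ENNReal.ofReal |Rect.inc f Q| ^ q
        ≤ ∑ k ∈ Finset.range K₀, ENNReal.ofReal (c₅ * (2:ℝ)^p' * g^q * ρ^k) :=
          Finset.sum_le_sum (fun k _ => hklevel k)
      _ = ENNReal.ofReal (∑ k ∈ Finset.range K₀, c₅ * (2:ℝ)^p' * g^q * ρ^k) := by
          rw [ENNReal.ofReal_sum_of_nonneg]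
          intro k _
          positivity
      _ ≤ ENNReal.ofReal (Cfin * g^q) := by
          apply ENNReal.ofReal_le_ofReal
          rw [← Finset.mul_sum]
          calc c₅ * (2:ℝ)^p' * g^q * ∑ k ∈ Finset.range K₀, ρ^k
              ≤ c₅ * (2:ℝ)^p' * g^q * (1/(1-ρ)) := by
                apply mul_le_mul_of_nonneg_left (my_geom_sum_le hρ0 hρ1 K₀)
                  (by positivity)
            _ = Cfin * g^q := by rw [hCfindef]; ring
  -- conclude from the supremum
  have hcv : cVarSum q f R ≤ ENNReal.ofReal (Cfin * g^q) := by
    rw [cVarSum]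
    exact iSup₂_le main
  have hq0' : (0:ℝ) ≤ 1/q := by positivity
  calc cVarSum q f R ^ (1/q)
      ≤ (ENNReal.ofReal (Cfin * g^q)) ^ (1/q) := ENNReal.rpow_le_rpow hcv hq0'
    _ = ENNReal.ofReal ((Cfin * g^q) ^ (1/q)) :=
        ENNReal.ofReal_rpow_of_nonneg (by positivity) hq0'
    _ = ENNReal.ofReal (Cfin^(1/q) * g) := by
        rw [Real.mul_rpow (le_of_lt hCfin0) (by positivity)]
        congr 1
        rw [← Real.rpow_mul hg0, mul_one_div_cancel (ne_of_gt hq0), Real.rpow_one]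
    _ = ENNReal.ofReal (Cfin^(1/q)) * ENNReal.ofReal g :=
        ENNReal.ofReal_mul (by positivity)
    _ ≤ ENNReal.ofReal (max 1 (Cfin ^ (1/q))) * gridVarSum p f R ^ (1/p) := by
        apply mul_le_mul'
        · exact ENNReal.ofReal_le_ofReal (le_max_right _ _)
        · rw [hgdef, ← ENNReal.ofReal_rpow_of_nonneg hGr0 (by positivity : (0:ℝ) ≤ 1/p),
            ENNReal.ofReal_toReal hG]
end

section
/- If f : [0,T]^2 → ℝ is continuous and of finite controlled p-variation, then ω(R) := |f|^p_{p-var;R} is a 2D control: it is continuous (as a function of the four corner coordinates of R), vanishes on degenerate rectangles, and is super-additive over finite partitions into essentially disjoint rectangles. -/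
open Set
open scoped ENNReal NNReal

/-- The set `Δ_T × Δ_T` of (coordinates of) rectangles contained in `[0,T]²`. -/
def DeltaSq (T : ℝ) : Set (ℝ × ℝ × ℝ × ℝ) :=
  {x | 0 ≤ x.1 ∧ x.1 ≤ x.2.1 ∧ x.2.1 ≤ T ∧
       0 ≤ x.2.2.1 ∧ x.2.2.1 ≤ x.2.2.2 ∧ x.2.2.2 ≤ T}

/-- `ω` is a 2D control on `[0,T]²`: finite `[0,∞)`-valued, continuous as a function of
the four corner coordinates on `Δ_T × Δ_T`, zero on degenerate rectangles, and
super-additive over finite partitions into essentially disjoint rectangles. -/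
def Is2DControl (T : ℝ) (ω : Rect → ℝ≥0∞) : Prop :=
  (∀ R : Rect, R.toSet ⊆ (Rect.mk 0 T 0 T).toSet → ω R ≠ ⊤) ∧
  ContinuousOn (fun x : ℝ × ℝ × ℝ × ℝ => ω ⟨x.1, x.2.1, x.2.2.1, x.2.2.2⟩) (DeltaSq T) ∧
  (∀ R : Rect, R.Valid → (R.a = R.b ∨ R.c = R.d) → ω R = 0) ∧
  (∀ R : Rect, R.Valid → R.toSet ⊆ (Rect.mk 0 T 0 T).toSet →
    ∀ P : Finset Rect, IsPartition R P → ∑ Q ∈ P, ω Q ≤ ω R)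


namespace CtrlVar

open ENNReal

/-- median of `t` into `[u,v]` -/
noncomputable def med (u v t : ℝ) : ℝ := max u (min v t)

lemma med_le (u v t : ℝ) (h : u ≤ v) : u ≤ med u v t ∧ med u v t ≤ v := by
  constructor
  · exact le_max_left _ _
  · exact max_le h (min_le_left _ _)

lemma med_mono (u v : ℝ) : Monotone (med u v) := fun s t hst => by
  unfold med; exact max_le_max le_rfl (min_le_min le_rfl hst)

/-- the "median clamp" of `Q` into `W` -/
noncomputable def mc (W Q : Rect) : Rect :=
  ⟨med Q.a Q.b W.a, med Q.a Q.b W.b, med Q.c Q.d W.c, med Q.c Q.d W.d⟩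

/-- the "true clamp" (intersection) of `Q` into `W` -/
noncomputable def tc (W Q : Rect) : Rect :=
  ⟨max Q.a W.a, min Q.b W.b, max Q.c W.c, min Q.d W.d⟩

lemma inc_deg (f : ℝ × ℝ → ℝ) (Q : Rect) (h : Q.a = Q.b ∨ Q.c = Q.d) :
    Rect.inc f Q = 0 := by
  rcases h with h | h <;> (unfold Rect.inc; rw [h]; ring)

lemma corner_mem (Q : Rect) (hQ : Q.Valid) :
    (Q.a, Q.c) ∈ Q.toSet ∧ (Q.b, Q.c) ∈ Q.toSet ∧ (Q.a, Q.d) ∈ Q.toSet ∧ (Q.b, Q.d) ∈ Q.toSet := by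
  obtain ⟨h1, h2⟩ := hQ
  refine ⟨⟨⟨le_rfl, h1⟩, ⟨le_rfl, h2⟩⟩, ⟨⟨h1, le_rfl⟩, ⟨le_rfl, h2⟩⟩,
    ⟨⟨le_rfl, h1⟩, ⟨h2, le_rfl⟩⟩, ⟨⟨h1, le_rfl⟩, ⟨h2, le_rfl⟩⟩⟩

lemma toSet_mono {Q R : Rect} (h1 : R.a ≤ Q.a) (h2 : Q.b ≤ R.b) (h3 : R.c ≤ Q.c)
    (h4 : Q.d ≤ R.d) : Q.toSet ⊆ R.toSet :=
  Set.prod_mono (Set.Icc_subset_Icc h1 h2) (Set.Icc_subset_Icc h3 h4)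

lemma coords_of_subset {Q R : Rect} (hQ : Q.Valid) (h : Q.toSet ⊆ R.toSet) :
    R.a ≤ Q.a ∧ Q.b ≤ R.b ∧ R.c ≤ Q.c ∧ Q.d ≤ R.d := by
  obtain ⟨m1, m2, m3, m4⟩ := corner_mem Q hQ
  have h1 := h m1; have h4 := h m4
  exact ⟨h1.1.1, h4.1.2, h1.2.1, h4.2.2⟩

lemma openSet_subset_toSet (Q : Rect) : Q.openSet ⊆ Q.toSet :=
  Set.prod_mono Set.Ioo_subset_Icc_self Set.Ioo_subset_Icc_self

lemma interior_toSet (Q : Rect) : interior Q.toSet = Q.openSet := by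
  unfold Rect.toSet Rect.openSet
  rw [interior_prod_eq, interior_Icc, interior_Icc]

lemma openSet_subset {A Q : Rect} (h : A.toSet ⊆ Q.toSet) : A.openSet ⊆ Q.openSet := by
  rw [← interior_toSet A, ← interior_toSet Q]
  exact interior_mono h

lemma openSet_nonempty {Q : Rect} (hQ : Q.Valid) (h1 : Q.a ≠ Q.b) (h2 : Q.c ≠ Q.d) :
    Q.openSet.Nonempty := by
  refine Set.Nonempty.prod ?_ ?_ <;> rw [Set.nonempty_Ioo]
  · exact lt_of_le_of_ne hQ.1 h1
  · exact lt_of_le_of_ne hQ.2 h2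

lemma toSet_empty {Q : Rect} (h : ¬ Q.Valid) : Q.toSet = ∅ := by
  unfold Rect.Valid at h
  push_neg at h
  rcases le_or_gt Q.a Q.b with h1 | h1
  · unfold Rect.toSet; rw [Set.Icc_eq_empty (not_le.mpr (h h1)), Set.prod_empty]
  · unfold Rect.toSet; rw [Set.Icc_eq_empty (not_le.mpr h1), Set.empty_prod]

/-- the real-valued summand -/
noncomputable def G (p : ℝ) (f : ℝ × ℝ → ℝ) (Q : Rect) : ℝ := |Rect.inc f Q| ^ p

lemma G_nonneg (p : ℝ) (f : ℝ × ℝ → ℝ) (Q : Rect) : 0 ≤ G p f Q :=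
  Real.rpow_nonneg (abs_nonneg _) _

lemma G_deg {p : ℝ} (hp : 0 < p) (f : ℝ × ℝ → ℝ) {Q : Rect} (h : Q.a = Q.b ∨ Q.c = Q.d) :
    G p f Q = 0 := by
  unfold G; rw [inc_deg f Q h, abs_zero, Real.zero_rpow hp.ne']

lemma cVarSum_eq {p : ℝ} (hp : 0 < p) (f : ℝ × ℝ → ℝ) (R : Rect) :
    cVarSum p f R = ⨆ (P : Finset Rect) (_ : IsPartition R P), ENNReal.ofReal (∑ Q ∈ P, G p f Q) := by
  unfold cVarSum
  congr 1; ext P; congr 1; ext hP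
  rw [ENNReal.ofReal_sum_of_nonneg (fun Q _ => G_nonneg p f Q)]
  refine Finset.sum_congr rfl fun Q _ => ?_
  rw [ENNReal.ofReal_rpow_of_nonneg (abs_nonneg _) hp.le]
  rfl

lemma le_cVarSum {p : ℝ} (hp : 0 < p) (f : ℝ × ℝ → ℝ) {R : Rect} {P : Finset Rect}
    (hP : IsPartition R P) : ENNReal.ofReal (∑ Q ∈ P, G p f Q) ≤ cVarSum p f R := by
  rw [cVarSum_eq hp f R]
  exact le_iSup₂ (f := fun P (_ : IsPartition R P) => ENNReal.ofReal (∑ Q ∈ P, G p f Q)) P hP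

lemma cVarSum_le {p : ℝ} (hp : 0 < p) (f : ℝ × ℝ → ℝ) {R : Rect} {c : ℝ≥0∞}
    (h : ∀ P, IsPartition R P → ENNReal.ofReal (∑ Q ∈ P, G p f Q) ≤ c) :
    cVarSum p f R ≤ c := by
  rw [cVarSum_eq hp f R]
  exact iSup₂_le h

lemma isPartition_self {R : Rect} (hR : R.Valid) : IsPartition R {R} := by
  refine ⟨fun Q hQ => ?_, ?_, ?_⟩
  · simp only [Finset.mem_singleton] at hQ; exact hQ ▸ hR
  · simp
  · simp

lemma cVarSum_of_empty {p : ℝ} (hp : 0 < p) (f : ℝ × ℝ → ℝ) {R : Rect} (h : R.toSet = ∅) :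
    cVarSum p f R = 0 := by
  refine le_antisymm (cVarSum_le hp f fun P hP => ?_) (zero_le)
  have hPe : P = ∅ := by
    by_contra hne
    obtain ⟨Q, hQ⟩ := Finset.nonempty_iff_ne_empty.mpr hne
    have hQv := hP.1 Q hQ
    have : Q.toSet ⊆ R.toSet := by
      rw [← hP.2.2]; exact Set.subset_biUnion_of_mem hQ
    rw [h] at this
    exact this (corner_mem Q hQv).1
  simp [hPe]

lemma cVarSum_deg {p : ℝ} (hp : 0 < p) (f : ℝ × ℝ → ℝ) {R : Rect} (hR : R.Valid)
    (h : R.a = R.b ∨ R.c = R.d) : cVarSum p f R = 0 := by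
  refine le_antisymm (cVarSum_le hp f fun P hP => ?_) (zero_le)
  have : ∀ Q ∈ P, G p f Q = 0 := by
    intro Q hQ
    have hQv := hP.1 Q hQ
    have hsub : Q.toSet ⊆ R.toSet := by
      rw [← hP.2.2]; exact Set.subset_biUnion_of_mem hQ
    obtain ⟨m1, m2, m3, m4⟩ := corner_mem Q hQv
    refine G_deg hp f ?_
    rcases h with h | h
    · left
      have e1 := (hsub m1).1; have e2 := (hsub m2).1
      rw [← h] at e1 e2
      simp only [Set.mem_Icc] at e1 e2
      linarith [e1.1, e1.2, e2.1, e2.2]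
    · right
      have e1 := (hsub m1).2; have e2 := (hsub m3).2
      rw [← h] at e1 e2
      simp only [Set.mem_Icc] at e1 e2
      linarith [e1.1, e1.2, e2.1, e2.2]
  rw [Finset.sum_congr rfl this]
  simp

end CtrlVar

namespace CtrlVar

lemma tc_toSet (W Q : Rect) : (tc W Q).toSet = Q.toSet ∩ W.toSet := by
  unfold tc Rect.toSet
  rw [Set.prod_inter_prod, Set.Icc_inter_Icc, Set.Icc_inter_Icc]

lemma tc_openSet (W Q : Rect) : (tc W Q).openSet = Q.openSet ∩ W.openSet := by
  unfold tc Rect.openSet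
  rw [Set.prod_inter_prod, Set.Ioo_inter_Ioo, Set.Ioo_inter_Ioo]

lemma mc_valid {W Q : Rect} (hW : W.Valid) (hQ : Q.Valid) : (mc W Q).Valid :=
  ⟨med_mono Q.a Q.b hW.1, med_mono Q.c Q.d hW.2⟩

lemma mc_subset {W Q : Rect} (hQ : Q.Valid) : (mc W Q).toSet ⊆ Q.toSet := by
  apply toSet_mono
  · exact (med_le Q.a Q.b W.a hQ.1).1
  · exact (med_le Q.a Q.b W.b hQ.1).2
  · exact (med_le Q.c Q.d W.c hQ.2).1
  · exact (med_le Q.c Q.d W.d hQ.2).2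

lemma mc_eq_tc {W Q : Rect} (h : (tc W Q).Valid) : mc W Q = tc W Q := by
  obtain ⟨hx, hy⟩ := h
  unfold tc at hx hy ⊢
  simp only at hx hy
  have h1 : min Q.b W.a = W.a :=
    min_eq_right (le_trans (le_trans (le_max_right _ _) hx) (min_le_left _ _))
  have h2 : max Q.a (min Q.b W.b) = min Q.b W.b :=
    max_eq_right (le_trans (le_max_left _ _) hx)
  have h3 : min Q.d W.c = W.c :=
    min_eq_right (le_trans (le_trans (le_max_right _ _) hy) (min_le_left _ _))
  have h4 : max Q.c (min Q.d W.d) = min Q.d W.d :=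
    max_eq_right (le_trans (le_max_left _ _) hy)
  unfold mc med
  rw [h1, h2, h3, h4]

lemma mc_deg_of_not_valid {W Q : Rect} (hW : W.Valid) (hQ : Q.Valid)
    (h : ¬ (tc W Q).Valid) : (mc W Q).a = (mc W Q).b ∨ (mc W Q).c = (mc W Q).d := by
  unfold Rect.Valid tc at h
  simp only [not_and_or, not_le] at h
  unfold mc med
  rcases h with h | h
  · left
    rcases lt_or_ge Q.b W.a with hb | hb
    · -- Q entirely left of W: min Q.b W.a = Q.b, min Q.b W.b = Q.b
      rw [min_eq_left hb.le, min_eq_left (hb.le.trans hW.1)]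
    · -- then min Q.b W.a ≥ ... we must have W.b < Q.a
      have hwa : W.b < Q.a := by
        rcases lt_or_ge W.b Q.a with h' | h'
        · exact h'
        · exfalso
          have : max Q.a W.a ≤ min Q.b W.b := by
            rw [max_le_iff, le_min_iff, le_min_iff]
            exact ⟨⟨hQ.1, h'⟩, ⟨hb, hW.1⟩⟩
          exact absurd this (not_le.mpr h)
      have e1 : min Q.b W.a < Q.a := lt_of_le_of_lt (min_le_right _ _) (lt_of_le_of_lt hW.1 hwa)
      have e2 : min Q.b W.b < Q.a := lt_of_le_of_lt (min_le_right _ _) hwa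
      rw [max_eq_left e1.le, max_eq_left e2.le]
  · right
    rcases lt_or_ge Q.d W.c with hb | hb
    · rw [min_eq_left hb.le, min_eq_left (hb.le.trans hW.2)]
    · have hwa : W.d < Q.c := by
        rcases lt_or_ge W.d Q.c with h' | h'
        · exact h'
        · exfalso
          have : max Q.c W.c ≤ min Q.d W.d := by
            rw [max_le_iff, le_min_iff, le_min_iff]
            exact ⟨⟨hQ.2, h'⟩, ⟨hb, hW.2⟩⟩
          exact absurd this (not_le.mpr h)
      have e1 : min Q.d W.c < Q.c := lt_of_le_of_lt (min_le_right _ _) (lt_of_le_of_lt hW.2 hwa)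
      have e2 : min Q.d W.d < Q.c := lt_of_le_of_lt (min_le_right _ _) hwa
      rw [max_eq_left e1.le, max_eq_left e2.le]

end CtrlVar

namespace CtrlVar

open scoped Classical

lemma mem_of_mem_partition {S : Rect} {P : Finset Rect} (hP : IsPartition S P) {Q : Rect}
    (hQ : Q ∈ P) : Q.toSet ⊆ S.toSet := by
  rw [← hP.2.2]; exact Set.subset_biUnion_of_mem hQ

lemma isPartition_clamp {S W : Rect} (hW : W.Valid) (hWS : W.toSet ⊆ S.toSet)
    {P : Finset Rect} (hP : IsPartition S P) :
    IsPartition W ((P.filter (fun Q => (tc W Q).Valid)).image (tc W)) := by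
  classical
  refine ⟨?_, ?_, ?_⟩
  · intro A hA
    obtain ⟨Q, hQ, rfl⟩ := Finset.mem_image.mp hA
    exact (Finset.mem_filter.mp hQ).2
  · intro A hA B hB hAB
    obtain ⟨Q1, hQ1, rfl⟩ := Finset.mem_image.mp hA
    obtain ⟨Q2, hQ2, rfl⟩ := Finset.mem_image.mp hB
    have hne : Q1 ≠ Q2 := fun h => hAB (by rw [h])
    have hdis := hP.2.1 (Finset.mem_filter.mp hQ1).1 (Finset.mem_filter.mp hQ2).1 hne
    rw [tc_openSet, tc_openSet]
    exact Disjoint.mono Set.inter_subset_left Set.inter_subset_left hdis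
  · apply subset_antisymm
    · intro x hx
      simp only [Set.mem_iUnion, exists_prop] at hx
      obtain ⟨A, hA, hxA⟩ := hx
      obtain ⟨Q, _, rfl⟩ := Finset.mem_image.mp hA
      rw [tc_toSet] at hxA
      exact hxA.2
    · intro x hx
      have hxS : x ∈ S.toSet := hWS hx
      rw [← hP.2.2] at hxS
      simp only [Set.mem_iUnion, exists_prop] at hxS
      obtain ⟨Q, hQ, hxQ⟩ := hxS
      have hxtc : x ∈ (tc W Q).toSet := by rw [tc_toSet]; exact ⟨hxQ, hx⟩
      have hv : (tc W Q).Valid := by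
        by_contra hnv
        rw [toSet_empty hnv] at hxtc
        exact hxtc
      simp only [Set.mem_iUnion, exists_prop]
      exact ⟨tc W Q, Finset.mem_image_of_mem (tc W)
        ((Finset.mem_filter (p := fun Q => (tc W Q).Valid)).mpr ⟨hQ, hv⟩), hxtc⟩

lemma sum_G_mc_le {p : ℝ} (hp : 0 < p) (f : ℝ × ℝ → ℝ) {S W : Rect} (hW : W.Valid)
    (hWS : W.toSet ⊆ S.toSet) {P : Finset Rect} (hP : IsPartition S P) :
    ENNReal.ofReal (∑ Q ∈ P, G p f (mc W Q)) ≤ cVarSum p f W := by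
  classical
  set P1 := P.filter (fun Q => (tc W Q).Valid) with hP1
  set P2 := P.filter (fun Q => (tc W Q).Valid ∧ (tc W Q).a ≠ (tc W Q).b ∧ (tc W Q).c ≠ (tc W Q).d)
    with hP2
  have hsub : P2 ⊆ P := Finset.filter_subset _ _
  have h1 : ∑ Q ∈ P, G p f (mc W Q) = ∑ Q ∈ P2, G p f (mc W Q) := by
    refine (Finset.sum_subset hsub ?_).symm
    intro Q hQ hQn
    have hQv := hP.1 Q hQ
    by_cases hv : (tc W Q).Valid
    · rw [mc_eq_tc hv]
      apply G_deg hp f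
      simp only [hP2, Finset.mem_filter, hQ, hv, true_and, not_and_or] at hQn
      rcases hQn with h | h
      · exact Or.inl (not_ne_iff.mp h)
      · exact Or.inr (not_ne_iff.mp h)
    · exact G_deg hp f (mc_deg_of_not_valid hW hQv hv)
  have h2 : ∑ Q ∈ P2, G p f (mc W Q) = ∑ Q ∈ P2, G p f (tc W Q) := by
    refine Finset.sum_congr rfl fun Q hQ => ?_
    rw [mc_eq_tc (Finset.mem_filter.mp hQ).2.1]
  have hinj : Set.InjOn (tc W) P2 := by
    intro Q1 hQ1 Q2 hQ2 heq
    by_contra hne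
    have hd1 := (Finset.mem_filter.mp hQ1).2
    have hdis := hP.2.1 (hsub hQ1) (hsub hQ2) hne
    obtain ⟨x, hx⟩ := openSet_nonempty hd1.1 hd1.2.1 hd1.2.2
    have hx1 : x ∈ Q1.openSet := (by rw [tc_openSet] at hx; exact hx.1)
    have hx2 : x ∈ Q2.openSet := (by rw [heq, tc_openSet] at hx; exact hx.1)
    exact Set.disjoint_left.mp hdis hx1 hx2
  have h3 : ∑ Q ∈ P2, G p f (tc W Q) = ∑ A ∈ P2.image (tc W), G p f A :=
    (Finset.sum_image (fun x hx y hy h => hinj hx hy h)).symm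
  have h4 : P2.image (tc W) ⊆ P1.image (tc W) := by
    apply Finset.image_subset_image
    intro Q hQ
    simp only [hP2, Finset.mem_filter] at hQ
    exact Finset.mem_filter.mpr ⟨hQ.1, hQ.2.1⟩
  have h5 : ∑ A ∈ P2.image (tc W), G p f A ≤ ∑ A ∈ P1.image (tc W), G p f A :=
    Finset.sum_le_sum_of_subset_of_nonneg h4 (fun A _ _ => G_nonneg p f A)
  rw [h1, h2, h3]
  exact le_trans (ENNReal.ofReal_le_ofReal h5) (le_cVarSum hp f (isPartition_clamp hW hWS hP))

end CtrlVar

namespace CtrlVar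

lemma disjX {Q R : Rect} (h : Q.b ≤ R.a) : Disjoint Q.openSet R.openSet := by
  rw [Set.disjoint_left]
  rintro ⟨x, y⟩ hx hx'
  obtain ⟨h1, _⟩ := hx
  obtain ⟨h1', _⟩ := hx'
  simp only [Set.mem_Ioo] at h1 h1'
  linarith [h1.2, h1'.1]

lemma disjY {Q R : Rect} (h : Q.d ≤ R.c) : Disjoint Q.openSet R.openSet := by
  rw [Set.disjoint_left]
  rintro ⟨x, y⟩ hx hx'
  obtain ⟨_, h2⟩ := hx
  obtain ⟨_, h2'⟩ := hx'
  simp only [Set.mem_Ioo] at h2 h2'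
  linarith [h2.2, h2'.1]

lemma cover5 {S W : Rect} (hS : S.Valid) (hW : W.Valid) (h1 : S.a ≤ W.a) (h2 : W.b ≤ S.b)
    (h3 : S.c ≤ W.c) (h4 : W.d ≤ S.d) :
    S.toSet = (⟨S.a, W.a, S.c, S.d⟩ : Rect).toSet ∪ ((⟨W.b, S.b, S.c, S.d⟩ : Rect).toSet ∪
      ((⟨W.a, W.b, S.c, W.c⟩ : Rect).toSet ∪ ((⟨W.a, W.b, W.d, S.d⟩ : Rect).toSet ∪ W.toSet))) := by
  ext ⟨x, y⟩
  simp only [Rect.toSet, Set.mem_union, Set.mem_prod, Set.mem_Icc]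
  constructor
  · rintro ⟨⟨hx1, hx2⟩, hy1, hy2⟩
    rcases le_total x W.a with h | h
    · exact Or.inl ⟨⟨hx1, h⟩, hy1, hy2⟩
    rcases le_total W.b x with h' | h'
    · exact Or.inr (Or.inl ⟨⟨h', hx2⟩, hy1, hy2⟩)
    rcases le_total y W.c with hy | hy
    · exact Or.inr (Or.inr (Or.inl ⟨⟨h, h'⟩, hy1, hy⟩))
    rcases le_total W.d y with hy' | hy'
    · exact Or.inr (Or.inr (Or.inr (Or.inl ⟨⟨h, h'⟩, hy', hy2⟩)))
    · exact Or.inr (Or.inr (Or.inr (Or.inr ⟨⟨h, h'⟩, hy, hy'⟩)))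
  · rintro (⟨⟨u1, u2⟩, v1, v2⟩ | ⟨⟨u1, u2⟩, v1, v2⟩ | ⟨⟨u1, u2⟩, v1, v2⟩ |
      ⟨⟨u1, u2⟩, v1, v2⟩ | ⟨⟨u1, u2⟩, v1, v2⟩) <;>
      exact ⟨⟨by linarith [hW.1, hW.2], by linarith [hW.1, hW.2]⟩,
        by linarith [hW.1, hW.2], by linarith [hW.1, hW.2]⟩

lemma cVarSum_mono {p : ℝ} (hp : 0 < p) (f : ℝ × ℝ → ℝ) {S W : Rect} (hS : S.Valid)
    (hW : W.Valid) (h1 : S.a ≤ W.a) (h2 : W.b ≤ S.b) (h3 : S.c ≤ W.c) (h4 : W.d ≤ S.d) :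
    cVarSum p f W ≤ cVarSum p f S := by
  classical
  apply cVarSum_le hp f
  intro P hP
  set FL : Rect := ⟨S.a, W.a, S.c, S.d⟩ with hFL
  set FR : Rect := ⟨W.b, S.b, S.c, S.d⟩ with hFR
  set FB : Rect := ⟨W.a, W.b, S.c, W.c⟩ with hFB
  set FT : Rect := ⟨W.a, W.b, W.d, S.d⟩ with hFT
  set P' : Finset Rect := insert FL (insert FR (insert FB (insert FT P))) with hP'
  have hPsub : ∀ A ∈ P, A.openSet ⊆ W.openSet :=
    fun A hA => openSet_subset (mem_of_mem_partition hP hA)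
  have dLW : Disjoint FL.openSet W.openSet := disjX le_rfl
  have dRW : Disjoint W.openSet FR.openSet := disjX le_rfl
  have dBW : Disjoint FB.openSet W.openSet := disjY le_rfl
  have dTW : Disjoint W.openSet FT.openSet := disjY le_rfl
  have dLR : Disjoint FL.openSet FR.openSet := disjX hW.1
  have dLB : Disjoint FL.openSet FB.openSet := disjX le_rfl
  have dLT : Disjoint FL.openSet FT.openSet := disjX le_rfl
  have dRB : Disjoint FB.openSet FR.openSet := disjX le_rfl
  have dRT : Disjoint FT.openSet FR.openSet := disjX le_rfl
  have dBT : Disjoint FB.openSet FT.openSet := disjY hW.2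
  have hpart : IsPartition S P' := by
    refine ⟨?_, ?_, ?_⟩
    · intro A hA
      simp only [hP', Finset.mem_insert] at hA
      rcases hA with rfl | rfl | rfl | rfl | hA
      · exact ⟨h1, hS.2⟩
      · exact ⟨h2, hS.2⟩
      · exact ⟨hW.1, h3⟩
      · exact ⟨hW.1, h4⟩
      · exact hP.1 A hA
    · intro A hA B hB hne
      simp only [hP', Finset.coe_insert, Set.mem_insert_iff, Finset.mem_coe] at hA hB
      rcases hA with rfl | rfl | rfl | rfl | hA <;> rcases hB with rfl | rfl | rfl | rfl | hB <;>
        first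
          | exact absurd rfl hne
          | exact hP.2.1 hA hB hne
          | exact dLR | exact dLR.symm | exact dLB | exact dLB.symm
          | exact dLT | exact dLT.symm | exact dRB | exact dRB.symm
          | exact dRT | exact dRT.symm | exact dBT | exact dBT.symm
          | exact dLW.mono_right (hPsub _ hB) | exact (dLW.mono_right (hPsub _ hA)).symm
          | exact (dRW.mono_left (hPsub _ hB)).symm | exact dRW.mono_left (hPsub _ hA)
          | exact dBW.mono_right (hPsub _ hB) | exact (dBW.mono_right (hPsub _ hA)).symm
          | exact (dTW.mono_left (hPsub _ hB)).symm | exact dTW.mono_left (hPsub _ hA)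
    · simp only [hP', Finset.set_biUnion_insert]
      rw [hP.2.2, cover5 hS hW h1 h2 h3 h4]
  have hsum : ∑ Q ∈ P, G p f Q ≤ ∑ Q ∈ P', G p f Q := by
    apply Finset.sum_le_sum_of_subset_of_nonneg
    · intro A hA
      simp only [hP', Finset.mem_insert]
      tauto
    · exact fun A _ _ => G_nonneg p f A
  exact le_trans (ENNReal.ofReal_le_ofReal hsum) (le_cVarSum hp f hpart)

end CtrlVar

namespace CtrlVar

lemma cVarSum_ne_top {p T : ℝ} (hp : 0 < p) (hT : 0 < T) (f : ℝ × ℝ → ℝ)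
    (hf : cVarSum p f (Rect.mk 0 T 0 T) ≠ ⊤) (R : Rect)
    (hsub : R.toSet ⊆ (Rect.mk 0 T 0 T).toSet) : cVarSum p f R ≠ ⊤ := by
  by_cases hR : R.Valid
  · obtain ⟨h1, h2, h3, h4⟩ := coords_of_subset hR hsub
    exact ne_top_of_le_ne_top hf (cVarSum_mono hp f ⟨hT.le, hT.le⟩ hR h1 h2 h3 h4)
  · rw [cVarSum_of_empty hp f (toSet_empty hR)]
    exact ENNReal.zero_ne_top

lemma exists_partition_near {p : ℝ} (hp : 0 < p) (f : ℝ × ℝ → ℝ) {Q : Rect} (hQ : Q.Valid)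
    (hfin : cVarSum p f Q ≠ ⊤) {ε : ℝ≥0∞} (hε : ε ≠ 0) :
    ∃ PQ : Finset Rect, IsPartition Q PQ ∧
      cVarSum p f Q ≤ ENNReal.ofReal (∑ A ∈ PQ, G p f A) + ε := by
  by_cases h0 : cVarSum p f Q = 0
  · exact ⟨{Q}, isPartition_self hQ, by
      rw [h0]; exact zero_le⟩
  · rcases le_or_gt (cVarSum p f Q) ε with hle | hlt
    · exact ⟨{Q}, isPartition_self hQ, le_trans hle (by exact le_add_self)⟩
    · have hsub : cVarSum p f Q - ε < cVarSum p f Q := ENNReal.sub_lt_self hfin h0 hε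
      rw [cVarSum_eq hp f Q] at hsub
      rw [lt_iSup_iff] at hsub
      obtain ⟨PQ, hPQ⟩ := hsub
      rw [lt_iSup_iff] at hPQ
      obtain ⟨hpart, hval⟩ := hPQ
      refine ⟨PQ, hpart, ?_⟩
      rw [← cVarSum_eq hp f Q] at hval
      exact tsub_le_iff_right.mp hval.le
  done

lemma superadditive {p T : ℝ} (hp : 0 < p) (hT : 0 < T) (f : ℝ × ℝ → ℝ)
    (hf : cVarSum p f (Rect.mk 0 T 0 T) ≠ ⊤) (R : Rect) (hR : R.Valid)
    (hsub : R.toSet ⊆ (Rect.mk 0 T 0 T).toSet) (P : Finset Rect) (hP : IsPartition R P) :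
    ∑ Q ∈ P, cVarSum p f Q ≤ cVarSum p f R := by
  classical
  apply ENNReal.le_of_forall_pos_le_add
  intro ε hε _
  set N := P.card with hN
  set ε' : ℝ≥0∞ := (ε : ℝ≥0∞) / (N + 1) with hε'
  have hε'0 : ε' ≠ 0 := by
    simp only [hε', ne_eq, ENNReal.div_eq_zero_iff]
    push_neg
    refine ⟨by exact_mod_cast hε.ne', by simp⟩
  have hchoice : ∀ Q : Rect, ∃ PQ : Finset Rect, Q ∈ P → IsPartition Q PQ ∧
      cVarSum p f Q ≤ ENNReal.ofReal (∑ A ∈ PQ, G p f A) + ε' := by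
    intro Q
    by_cases hQ : Q ∈ P
    · have hQv := hP.1 Q hQ
      have hQfin : cVarSum p f Q ≠ ⊤ := by
        apply cVarSum_ne_top hp hT f hf
        exact le_trans (mem_of_mem_partition hP hQ) hsub
      obtain ⟨PQ, h1, h2⟩ := exists_partition_near hp f hQv hQfin hε'0
      exact ⟨PQ, fun _ => ⟨h1, h2⟩⟩
    · exact ⟨∅, fun h => absurd h hQ⟩
  choose PQ hPQ using hchoice
  -- the glued partition
  set P' : Finset Rect := P.biUnion PQ with hP'glue
  have hsubQ : ∀ Q ∈ P, ∀ A ∈ PQ Q, A.toSet ⊆ Q.toSet :=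
    fun Q hQ A hA => mem_of_mem_partition ((hPQ Q hQ).1) hA
  have hpart : IsPartition R P' := by
    refine ⟨?_, ?_, ?_⟩
    · intro A hA
      obtain ⟨Q, hQ, hAQ⟩ := Finset.mem_biUnion.mp hA
      exact ((hPQ Q hQ).1).1 A hAQ
    · intro A hA B hB hne
      simp only [hP'glue, Finset.coe_biUnion, Set.mem_iUnion, Finset.mem_coe] at hA hB
      obtain ⟨Q1, hQ1, hAQ1⟩ := hA
      obtain ⟨Q2, hQ2, hBQ2⟩ := hB
      by_cases hQQ : Q1 = Q2
      · subst hQQ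
        exact ((hPQ Q1 hQ1).1).2.1 hAQ1 hBQ2 hne
      · have hd := hP.2.1 hQ1 hQ2 hQQ
        exact hd.mono (openSet_subset (hsubQ Q1 hQ1 A hAQ1))
          (openSet_subset (hsubQ Q2 hQ2 B hBQ2))
    · rw [← hP.2.2]
      apply subset_antisymm
      · intro x hx
        simp only [Set.mem_iUnion, exists_prop] at hx ⊢
        obtain ⟨A, hA, hxA⟩ := hx
        obtain ⟨Q, hQ, hAQ⟩ := Finset.mem_biUnion.mp hA
        exact ⟨Q, hQ, hsubQ Q hQ A hAQ hxA⟩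
      · intro x hx
        simp only [Set.mem_iUnion, exists_prop] at hx ⊢
        obtain ⟨Q, hQ, hxQ⟩ := hx
        have : x ∈ ⋃ A ∈ PQ Q, A.toSet := by rw [((hPQ Q hQ).1).2.2]; exact hxQ
        simp only [Set.mem_iUnion, exists_prop] at this
        obtain ⟨A, hA, hxA⟩ := this
        exact ⟨A, Finset.mem_biUnion.mpr ⟨Q, hQ, hA⟩, hxA⟩
  -- sum comparison
  set nd : Rect → Prop := fun A => A.a ≠ A.b ∧ A.c ≠ A.d with hnd
  have hsum2 : ∀ Q ∈ P, ∑ A ∈ PQ Q, G p f A = ∑ A ∈ (PQ Q).filter nd, G p f A := by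
    intro Q hQ
    refine (Finset.sum_subset (Finset.filter_subset _ _) ?_).symm
    intro A hA hAn
    simp only [Finset.mem_filter, hA, true_and, hnd, not_and_or] at hAn
    rcases hAn with h | h
    · exact G_deg hp f (Or.inl (not_ne_iff.mp h))
    · exact G_deg hp f (Or.inr (not_ne_iff.mp h))
  have hdisj : (P : Set Rect).PairwiseDisjoint (fun Q => (PQ Q).filter nd) := by
    intro Q1 hQ1 Q2 hQ2 hne
    rw [Function.onFun, Finset.disjoint_left]
    intro A hA1 hA2
    simp only [Finset.mem_filter, hnd] at hA1 hA2
    have hAv := ((hPQ Q1 hQ1).1).1 A hA1.1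
    obtain ⟨x, hx⟩ := openSet_nonempty hAv hA1.2.1 hA1.2.2
    have hd := hP.2.1 hQ1 hQ2 hne
    exact Set.disjoint_left.mp hd (openSet_subset (hsubQ Q1 hQ1 A hA1.1) hx)
      (openSet_subset (hsubQ Q2 hQ2 A hA2.1) hx)
  have hkey : ∑ Q ∈ P, ENNReal.ofReal (∑ A ∈ PQ Q, G p f A)
      ≤ ENNReal.ofReal (∑ A ∈ P', G p f A) := by
    have e1 : ∀ Q ∈ P, ENNReal.ofReal (∑ A ∈ PQ Q, G p f A)
        = ∑ A ∈ (PQ Q).filter nd, ENNReal.ofReal (G p f A) := by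
      intro Q hQ
      rw [hsum2 Q hQ, ENNReal.ofReal_sum_of_nonneg (fun A _ => G_nonneg p f A)]
    rw [Finset.sum_congr rfl e1, ← Finset.sum_biUnion hdisj,
      ENNReal.ofReal_sum_of_nonneg (fun A _ => G_nonneg p f A)]
    apply Finset.sum_le_sum_of_subset_of_nonneg
    · exact Finset.biUnion_mono (fun Q _ => Finset.filter_subset _ _)
    · exact fun A _ _ => zero_le
  calc ∑ Q ∈ P, cVarSum p f Q
      ≤ ∑ Q ∈ P, (ENNReal.ofReal (∑ A ∈ PQ Q, G p f A) + ε') :=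
        Finset.sum_le_sum (fun Q hQ => (hPQ Q hQ).2)
    _ = (∑ Q ∈ P, ENNReal.ofReal (∑ A ∈ PQ Q, G p f A)) + N • ε' := by
        rw [Finset.sum_add_distrib]; congr 1
        rw [Finset.sum_const, hN]
    _ ≤ ENNReal.ofReal (∑ A ∈ P', G p f A) + N • ε' := add_le_add_left hkey _
    _ ≤ cVarSum p f R + N • ε' := add_le_add_left (le_cVarSum hp f hpart) _
    _ ≤ cVarSum p f R + ε := by
        apply add_le_add_right
        rw [nsmul_eq_mul, hε']
        calc (N : ℝ≥0∞) * ((ε : ℝ≥0∞) / (N + 1))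
            ≤ (N + 1) * ((ε : ℝ≥0∞) / (N + 1)) := by
              apply mul_le_mul_left
              exact le_self_add
          _ = ε := by
              rw [ENNReal.mul_div_cancel (by simp)
                (ENNReal.add_ne_top.mpr ⟨ENNReal.natCast_ne_top N, ENNReal.one_ne_top⟩)]
  done

end CtrlVar

namespace CtrlVar

lemma big_compact (T : ℝ) : IsCompact (Rect.mk 0 T 0 T).toSet :=
  isCompact_Icc.prod isCompact_Icc

lemma inc_bound {T : ℝ} {f : ℝ × ℝ → ℝ} {Mf : ℝ}
    (hMf : ∀ x ∈ (Rect.mk 0 T 0 T).toSet, ‖f x‖ ≤ Mf) {Q : Rect} (hQ : Q.Valid)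
    (hsub : Q.toSet ⊆ (Rect.mk 0 T 0 T).toSet) : |Rect.inc f Q| ≤ 4 * Mf := by
  obtain ⟨m1, m2, m3, m4⟩ := corner_mem Q hQ
  have b1 := hMf _ (hsub m1); have b2 := hMf _ (hsub m2)
  have b3 := hMf _ (hsub m3); have b4 := hMf _ (hsub m4)
  rw [Real.norm_eq_abs] at b1 b2 b3 b4
  unfold Rect.inc
  have := abs_le.mp b1; have := abs_le.mp b2; have := abs_le.mp b3; have := abs_le.mp b4
  rw [abs_le]
  constructor <;> [skip; skip] <;>
  · obtain ⟨x1, y1⟩ := abs_le.mp b1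
    obtain ⟨x2, y2⟩ := abs_le.mp b2
    obtain ⟨x3, y3⟩ := abs_le.mp b3
    obtain ⟨x4, y4⟩ := abs_le.mp b4
    linarith

lemma Mf_nonneg {T : ℝ} (hT : 0 < T) {f : ℝ × ℝ → ℝ} {Mf : ℝ}
    (hMf : ∀ x ∈ (Rect.mk 0 T 0 T).toSet, ‖f x‖ ≤ Mf) : 0 ≤ Mf := by
  have : ((0 : ℝ), (0 : ℝ)) ∈ (Rect.mk 0 T 0 T).toSet :=
    ⟨⟨le_rfl, hT.le⟩, ⟨le_rfl, hT.le⟩⟩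
  exact le_trans (norm_nonneg _) (hMf _ this)

/-- Main transfer estimate: a partition of `S` has `G`-sum almost bounded by
the variation over a slightly smaller rectangle `W`. -/
lemma transfer {p T : ℝ} (hp : 1 ≤ p) (hT : 0 < T) (f : ℝ × ℝ → ℝ)
    (hcont : ContinuousOn f (Rect.mk 0 T 0 T).toSet)
    (P : Finset Rect) {ε : ℝ} (hε : 0 < ε) :
    ∃ δ > 0, ∀ S W : Rect, S.Valid → W.Valid → S.toSet ⊆ (Rect.mk 0 T 0 T).toSet →
      S.a ≤ W.a → W.a ≤ S.a + δ → W.b ≤ S.b → S.b ≤ W.b + δ →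
      S.c ≤ W.c → W.c ≤ S.c + δ → W.d ≤ S.d → S.d ≤ W.d + δ →
      IsPartition S P →
      ENNReal.ofReal (∑ Q ∈ P, G p f Q) ≤ cVarSum p f W + ENNReal.ofReal ε := by
  have hp0 : 0 < p := lt_of_lt_of_le one_pos hp
  obtain ⟨Mf, hMf⟩ := (big_compact T).exists_bound_of_continuousOn hcont
  have hMf0 : 0 ≤ Mf := Mf_nonneg hT hMf
  set ε' : ℝ := ε / (P.card + 1) with hε'def
  have hε' : 0 < ε' := by positivity
  -- uniform continuity of rpow on [0, 4Mf+1]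
  have hrpow : UniformContinuousOn (fun x : ℝ => x ^ p) (Set.Icc 0 (4 * Mf + 1)) := by
    apply isCompact_Icc.uniformContinuousOn_of_continuous
    apply ContinuousOn.rpow_const continuousOn_id
    intro x _
    right; linarith
  obtain ⟨κ, hκ0, hκ⟩ := Metric.uniformContinuousOn_iff.mp hrpow ε' hε'
  set κ' : ℝ := min (κ / 2) 1 with hκ'def
  have hκ'0 : 0 < κ' := lt_min (by linarith) one_pos
  have hκ'κ : κ' < κ := lt_of_le_of_lt (min_le_left _ _) (by linarith)
  -- uniform continuity of f
  have hfUC : UniformContinuousOn f (Rect.mk 0 T 0 T).toSet :=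
    (big_compact T).uniformContinuousOn_of_continuous hcont
  obtain ⟨δf, hδf0, hδf⟩ := Metric.uniformContinuousOn_iff.mp hfUC (κ' / 4) (by linarith)
  refine ⟨δf / 2, by linarith, ?_⟩
  intro S W hS hW hSsub ha1 ha2 hb1 hb2 hc1 hc2 hd1 hd2 hP
  set δ : ℝ := δf / 2 with hδdef
  have hWS : W.toSet ⊆ S.toSet := toSet_mono ha1 hb1 hc1 hd1
  have key : ∀ Q ∈ P, G p f Q ≤ G p f (mc W Q) + ε' := by
    intro Q hQ
    have hQv := hP.1 Q hQ
    have hQS : Q.toSet ⊆ S.toSet := mem_of_mem_partition hP hQ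
    have hQbig : Q.toSet ⊆ (Rect.mk 0 T 0 T).toSet := hQS.trans hSsub
    obtain ⟨hqa, hqb, hqc, hqd⟩ := coords_of_subset hQv hQS
    have hmcv : (mc W Q).Valid := mc_valid hW hQv
    have hmcbig : (mc W Q).toSet ⊆ (Rect.mk 0 T 0 T).toSet := (mc_subset hQv).trans hQbig
    -- coordinate closeness
    have hma : Q.a ≤ med Q.a Q.b W.a ∧ med Q.a Q.b W.a ≤ Q.a + δ := by
      refine ⟨le_max_left _ _, max_le (by linarith) (le_trans (min_le_right _ _) (by linarith))⟩
    have hmb : Q.b - δ ≤ med Q.a Q.b W.b ∧ med Q.a Q.b W.b ≤ Q.b := by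
      refine ⟨le_trans (le_min (by linarith) (by linarith)) (le_max_right _ _),
        max_le hQv.1 (min_le_left _ _)⟩
    have hmc : Q.c ≤ med Q.c Q.d W.c ∧ med Q.c Q.d W.c ≤ Q.c + δ := by
      refine ⟨le_max_left _ _, max_le (by linarith) (le_trans (min_le_right _ _) (by linarith))⟩
    have hmd : Q.d - δ ≤ med Q.c Q.d W.d ∧ med Q.c Q.d W.d ≤ Q.d := by
      refine ⟨le_trans (le_min (by linarith) (by linarith)) (le_max_right _ _),
        max_le hQv.2 (min_le_left _ _)⟩
    -- corner memberships
    obtain ⟨q1, q2, q3, q4⟩ := corner_mem Q hQv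
    obtain ⟨w1, w2, w3, w4⟩ := corner_mem (mc W Q) hmcv
    have hq1 := hQbig q1; have hq2 := hQbig q2; have hq3 := hQbig q3; have hq4 := hQbig q4
    have hw1 := hmcbig w1; have hw2 := hmcbig w2; have hw3 := hmcbig w3; have hw4 := hmcbig w4
    -- distances between matched corners
    have hdist : ∀ x1 y1 x2 y2 : ℝ, |x1 - x2| ≤ δ → |y1 - y2| ≤ δ →
        dist ((x1, y1) : ℝ × ℝ) (x2, y2) < δf := by
      intro x1 y1 x2 y2 h1 h2
      rw [Prod.dist_eq]
      apply max_lt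
      · rw [Real.dist_eq]; linarith [hδf0]
      · rw [Real.dist_eq]; linarith [hδf0]
    have e4 : |f (Q.b, Q.d) - f ((mc W Q).b, (mc W Q).d)| ≤ κ' / 4 := by
      have := hδf _ hq4 _ hw4
      rw [Real.dist_eq] at this
      refine (this ?_).le
      exact hdist _ _ _ _ (abs_le.mpr ⟨by simp only [mc]; linarith [hmb.1, hmb.2],
        by simp only [mc]; linarith [hmb.1, hmb.2]⟩)
        (abs_le.mpr ⟨by simp only [mc]; linarith [hmd.1, hmd.2],
        by simp only [mc]; linarith [hmd.1, hmd.2]⟩)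
    have e3 : |f (Q.a, Q.d) - f ((mc W Q).a, (mc W Q).d)| ≤ κ' / 4 := by
      have := hδf _ hq3 _ hw3
      rw [Real.dist_eq] at this
      refine (this ?_).le
      exact hdist _ _ _ _ (abs_le.mpr ⟨by simp only [mc]; linarith [hma.1, hma.2],
        by simp only [mc]; linarith [hma.1, hma.2]⟩)
        (abs_le.mpr ⟨by simp only [mc]; linarith [hmd.1, hmd.2],
        by simp only [mc]; linarith [hmd.1, hmd.2]⟩)
    have e2 : |f (Q.b, Q.c) - f ((mc W Q).b, (mc W Q).c)| ≤ κ' / 4 := by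
      have := hδf _ hq2 _ hw2
      rw [Real.dist_eq] at this
      refine (this ?_).le
      exact hdist _ _ _ _ (abs_le.mpr ⟨by simp only [mc]; linarith [hmb.1, hmb.2],
        by simp only [mc]; linarith [hmb.1, hmb.2]⟩)
        (abs_le.mpr ⟨by simp only [mc]; linarith [hmc.1, hmc.2],
        by simp only [mc]; linarith [hmc.1, hmc.2]⟩)
    have e1 : |f (Q.a, Q.c) - f ((mc W Q).a, (mc W Q).c)| ≤ κ' / 4 := by
      have := hδf _ hq1 _ hw1
      rw [Real.dist_eq] at this
      refine (this ?_).le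
      exact hdist _ _ _ _ (abs_le.mpr ⟨by simp only [mc]; linarith [hma.1, hma.2],
        by simp only [mc]; linarith [hma.1, hma.2]⟩)
        (abs_le.mpr ⟨by simp only [mc]; linarith [hmc.1, hmc.2],
        by simp only [mc]; linarith [hmc.1, hmc.2]⟩)
    -- increments are close
    have hinc : |Rect.inc f Q - Rect.inc f (mc W Q)| ≤ κ' := by
      unfold Rect.inc
      obtain ⟨a1, a2⟩ := abs_le.mp e1
      obtain ⟨b1, b2⟩ := abs_le.mp e2
      obtain ⟨c1, c2⟩ := abs_le.mp e3
      obtain ⟨d1, d2⟩ := abs_le.mp e4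
      rw [abs_le]
      constructor <;> linarith
    have habs := le_trans (abs_abs_sub_abs_le_abs_sub (Rect.inc f Q) (Rect.inc f (mc W Q))) hinc
    have hQmem : |Rect.inc f Q| ∈ Set.Icc (0 : ℝ) (4 * Mf + 1) :=
      ⟨abs_nonneg _, by linarith [inc_bound hMf hQv hQbig]⟩
    have hWmem : |Rect.inc f (mc W Q)| ∈ Set.Icc (0 : ℝ) (4 * Mf + 1) :=
      ⟨abs_nonneg _, by linarith [inc_bound hMf hmcv hmcbig]⟩
    have := hκ _ hQmem _ hWmem (by rw [Real.dist_eq]; exact lt_of_le_of_lt habs hκ'κ)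
    rw [Real.dist_eq] at this
    have := abs_le.mp this.le
    unfold G
    linarith [this.1, this.2]
  have hsum : ∑ Q ∈ P, G p f Q ≤ (∑ Q ∈ P, G p f (mc W Q)) + ε := by
    calc ∑ Q ∈ P, G p f Q ≤ ∑ Q ∈ P, (G p f (mc W Q) + ε') := Finset.sum_le_sum key
      _ = (∑ Q ∈ P, G p f (mc W Q)) + P.card * ε' := by
          rw [Finset.sum_add_distrib, Finset.sum_const, nsmul_eq_mul]
      _ ≤ (∑ Q ∈ P, G p f (mc W Q)) + ε := by
          have h1 : (P.card : ℝ) * ε' ≤ ((P.card : ℝ) + 1) * ε' := by nlinarith [hε'.le]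
          have h2 : ((P.card : ℝ) + 1) * ε' = ε := by
            rw [hε'def]; field_simp
          linarith
  calc ENNReal.ofReal (∑ Q ∈ P, G p f Q)
      ≤ ENNReal.ofReal ((∑ Q ∈ P, G p f (mc W Q)) + ε) := ENNReal.ofReal_le_ofReal hsum
    _ ≤ ENNReal.ofReal (∑ Q ∈ P, G p f (mc W Q)) + ENNReal.ofReal ε := ENNReal.ofReal_add_le
    _ ≤ cVarSum p f W + ENNReal.ofReal ε := by
        apply add_le_add_left
        exact sum_G_mc_le hp0 f hW hWS hP

end CtrlVar

namespace CtrlVar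

lemma ofReal_half_ne_zero {ε : ℝ} (hε : 0 < ε) : ENNReal.ofReal (ε / 2) ≠ 0 := by
  rw [ne_eq, ENNReal.ofReal_eq_zero]
  push_neg
  linarith

lemma shrink {p T : ℝ} (hp : 1 ≤ p) (hT : 0 < T) (f : ℝ × ℝ → ℝ)
    (hcont : ContinuousOn f (Rect.mk 0 T 0 T).toSet)
    (hf : cVarSum p f (Rect.mk 0 T 0 T) ≠ ⊤)
    {S : Rect} (hS : S.Valid) (hSsub : S.toSet ⊆ (Rect.mk 0 T 0 T).toSet) {ε : ℝ} (hε : 0 < ε) :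
    ∃ δ > 0, ∀ W : Rect, W.Valid →
      S.a ≤ W.a → W.a ≤ S.a + δ → W.b ≤ S.b → S.b ≤ W.b + δ →
      S.c ≤ W.c → W.c ≤ S.c + δ → W.d ≤ S.d → S.d ≤ W.d + δ →
      cVarSum p f S ≤ cVarSum p f W + ENNReal.ofReal ε := by
  have hp0 : 0 < p := lt_of_lt_of_le one_pos hp
  have hfin := cVarSum_ne_top hp0 hT f hf S hSsub
  obtain ⟨P, hP, hPval⟩ := exists_partition_near hp0 f hS hfin (ofReal_half_ne_zero hε)
  obtain ⟨δ, hδ0, hδ⟩ := transfer hp hT f hcont P (ε := ε / 2) (by linarith)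
  refine ⟨δ, hδ0, ?_⟩
  intro W hW ha1 ha2 hb1 hb2 hc1 hc2 hd1 hd2
  calc cVarSum p f S ≤ ENNReal.ofReal (∑ A ∈ P, G p f A) + ENNReal.ofReal (ε / 2) := hPval
    _ ≤ (cVarSum p f W + ENNReal.ofReal (ε / 2)) + ENNReal.ofReal (ε / 2) :=
        add_le_add_left (hδ S W hS hW hSsub ha1 ha2 hb1 hb2 hc1 hc2 hd1 hd2 hP) _
    _ = cVarSum p f W + ENNReal.ofReal ε := by
        rw [add_assoc, ← ENNReal.ofReal_add (by linarith) (by linarith)]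
        norm_num

section Strips

variable {p T : ℝ} (hp : 1 ≤ p) (hT : 0 < T) (f : ℝ × ℝ → ℝ)
    (hcont : ContinuousOn f (Rect.mk 0 T 0 T).toSet)
    (hf : cVarSum p f (Rect.mk 0 T 0 T) ≠ ⊤)

/-- two-rectangle partition along a vertical cut -/
lemma isPartition_vcut {S : Rect} (hS : S.Valid) {m : ℝ} (h1 : S.a ≤ m) (h2 : m ≤ S.b) :
    IsPartition S {(⟨S.a, m, S.c, S.d⟩ : Rect), (⟨m, S.b, S.c, S.d⟩ : Rect)} := by
  classical
  refine ⟨?_, ?_, ?_⟩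
  · intro Q hQ
    simp only [Finset.mem_insert, Finset.mem_singleton] at hQ
    rcases hQ with rfl | rfl
    · exact ⟨h1, hS.2⟩
    · exact ⟨h2, hS.2⟩
  · intro A hA B hB hne
    simp only [Finset.coe_insert, Finset.coe_singleton, Set.mem_insert_iff,
      Set.mem_singleton_iff] at hA hB
    rcases hA with rfl | rfl <;> rcases hB with rfl | rfl
    · exact absurd rfl hne
    · exact disjX le_rfl
    · exact (disjX le_rfl).symm
    · exact absurd rfl hne
  · rw [Finset.set_biUnion_insert, Finset.set_biUnion_singleton]
    unfold Rect.toSet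
    rw [← Set.union_prod]
    rw [Set.Icc_union_Icc_eq_Icc h1 h2]

/-- two-rectangle partition along a horizontal cut -/
lemma isPartition_hcut {S : Rect} (hS : S.Valid) {m : ℝ} (h1 : S.c ≤ m) (h2 : m ≤ S.d) :
    IsPartition S {(⟨S.a, S.b, S.c, m⟩ : Rect), (⟨S.a, S.b, m, S.d⟩ : Rect)} := by
  classical
  refine ⟨?_, ?_, ?_⟩
  · intro Q hQ
    simp only [Finset.mem_insert, Finset.mem_singleton] at hQ
    rcases hQ with rfl | rfl
    · exact ⟨hS.1, h1⟩
    · exact ⟨hS.1, h2⟩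
  · intro A hA B hB hne
    simp only [Finset.coe_insert, Finset.coe_singleton, Set.mem_insert_iff,
      Set.mem_singleton_iff] at hA hB
    rcases hA with rfl | rfl <;> rcases hB with rfl | rfl
    · exact absurd rfl hne
    · exact disjY le_rfl
    · exact (disjY le_rfl).symm
    · exact absurd rfl hne
  · rw [Finset.set_biUnion_insert, Finset.set_biUnion_singleton]
    unfold Rect.toSet
    rw [← Set.prod_union]
    rw [Set.Icc_union_Icc_eq_Icc h1 h2]

include hp hT hcont hf

/-- generic strip estimate: if `{W, V}` is a 2-element partition of `S` and
`ω S ≤ ω W + ε` then `ω V ≤ ε`. -/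
lemma strip_of_cut {S W V : Rect} (hSsub : S.toSet ⊆ (Rect.mk 0 T 0 T).toSet) (hS : S.Valid)
    (hWV : W ≠ V) (hpart : IsPartition S {W, V}) {ε : ℝ}
    (hshr : cVarSum p f S ≤ cVarSum p f W + ENNReal.ofReal ε) :
    cVarSum p f V ≤ ENNReal.ofReal ε := by
  have hp0 : 0 < p := lt_of_lt_of_le one_pos hp
  have hsa := superadditive hp0 hT f hf S hS hSsub _ hpart
  rw [Finset.sum_pair hWV] at hsa
  have hWfin : cVarSum p f W ≠ ⊤ := by
    apply cVarSum_ne_top hp0 hT f hf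
    exact (mem_of_mem_partition hpart (by simp)).trans hSsub
  exact (ENNReal.add_le_add_iff_left hWfin).mp (hsa.trans hshr)

lemma stripL {a₀ : ℝ} (ha0 : 0 ≤ a₀) (haT : a₀ ≤ T) {ε : ℝ} (hε : 0 < ε) :
    ∃ δ > 0, ∀ s : ℝ, 0 ≤ s → a₀ - δ ≤ s → s ≤ a₀ →
      cVarSum p f ⟨s, a₀, 0, T⟩ ≤ ENNReal.ofReal ε := by
  have hp0 : 0 < p := lt_of_lt_of_le one_pos hp
  by_cases h0 : a₀ = 0
  · refine ⟨1, one_pos, fun s hs1 hs2 hs3 => ?_⟩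
    have : s = 0 := le_antisymm (h0 ▸ hs3) hs1
    rw [cVarSum_deg hp0 f ⟨by rw [this, h0], hT.le⟩ (Or.inl (by rw [this, h0]))]
    exact zero_le
  · have hS : (⟨0, a₀, 0, T⟩ : Rect).Valid := ⟨ha0, hT.le⟩
    have hSsub : (⟨0, a₀, 0, T⟩ : Rect).toSet ⊆ (Rect.mk 0 T 0 T).toSet :=
      toSet_mono le_rfl haT le_rfl le_rfl
    obtain ⟨δ, hδ0, hδ⟩ := shrink hp hT f hcont hf hS hSsub hε
    refine ⟨δ, hδ0, fun s hs1 hs2 hs3 => ?_⟩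
    have hW : (⟨0, s, 0, T⟩ : Rect).Valid := ⟨hs1, hT.le⟩
    have hWV : (⟨0, s, 0, T⟩ : Rect) ≠ (⟨s, a₀, 0, T⟩ : Rect) := by
      intro h
      injection h with h1 h2
      exact h0 (by rw [← h2, ← h1])
    refine strip_of_cut hp hT f hcont hf hSsub hS hWV
      (isPartition_vcut hS hs1 hs3) ?_
    exact hδ _ hW le_rfl (by linarith) hs3 (by linarith) le_rfl (by linarith) le_rfl (by linarith)

lemma stripR {b₀ : ℝ} (hb0 : 0 ≤ b₀) (hbT : b₀ ≤ T) {ε : ℝ} (hε : 0 < ε) :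
    ∃ δ > 0, ∀ t : ℝ, t ≤ T → t ≤ b₀ + δ → b₀ ≤ t →
      cVarSum p f ⟨b₀, t, 0, T⟩ ≤ ENNReal.ofReal ε := by
  have hp0 : 0 < p := lt_of_lt_of_le one_pos hp
  by_cases h0 : b₀ = T
  · refine ⟨1, one_pos, fun t ht1 ht2 ht3 => ?_⟩
    have : t = b₀ := le_antisymm (h0 ▸ ht1) ht3
    rw [cVarSum_deg hp0 f ⟨by rw [this], hT.le⟩ (Or.inl (by rw [this]))]
    exact zero_le
  · have hS : (⟨b₀, T, 0, T⟩ : Rect).Valid := ⟨hbT, hT.le⟩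
    have hSsub : (⟨b₀, T, 0, T⟩ : Rect).toSet ⊆ (Rect.mk 0 T 0 T).toSet :=
      toSet_mono hb0 le_rfl le_rfl le_rfl
    obtain ⟨δ, hδ0, hδ⟩ := shrink hp hT f hcont hf hS hSsub hε
    refine ⟨δ, hδ0, fun t ht1 ht2 ht3 => ?_⟩
    have hW : (⟨t, T, 0, T⟩ : Rect).Valid := ⟨ht1, hT.le⟩
    have hWV : (⟨t, T, 0, T⟩ : Rect) ≠ (⟨b₀, t, 0, T⟩ : Rect) := by
      intro h
      injection h with h1 h2
      exact h0 (by rw [← h1, ← h2])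
    have hpart : IsPartition (⟨b₀, T, 0, T⟩ : Rect)
        {(⟨b₀, t, 0, T⟩ : Rect), (⟨t, T, 0, T⟩ : Rect)} := isPartition_vcut hS ht3 ht1
    rw [Finset.pair_comm] at hpart
    refine strip_of_cut hp hT f hcont hf hSsub hS hWV hpart ?_
    exact hδ _ hW ht3 (by linarith) le_rfl (by linarith) le_rfl (by linarith) le_rfl (by linarith)

lemma stripB {c₀ : ℝ} (hc0 : 0 ≤ c₀) (hcT : c₀ ≤ T) {ε : ℝ} (hε : 0 < ε) :
    ∃ δ > 0, ∀ s : ℝ, 0 ≤ s → c₀ - δ ≤ s → s ≤ c₀ →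
      cVarSum p f ⟨0, T, s, c₀⟩ ≤ ENNReal.ofReal ε := by
  have hp0 : 0 < p := lt_of_lt_of_le one_pos hp
  by_cases h0 : c₀ = 0
  · refine ⟨1, one_pos, fun s hs1 hs2 hs3 => ?_⟩
    have : s = 0 := le_antisymm (h0 ▸ hs3) hs1
    rw [cVarSum_deg hp0 f ⟨hT.le, by rw [this, h0]⟩ (Or.inr (by rw [this, h0]))]
    exact zero_le
  · have hS : (⟨0, T, 0, c₀⟩ : Rect).Valid := ⟨hT.le, hc0⟩
    have hSsub : (⟨0, T, 0, c₀⟩ : Rect).toSet ⊆ (Rect.mk 0 T 0 T).toSet :=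
      toSet_mono le_rfl le_rfl le_rfl hcT
    obtain ⟨δ, hδ0, hδ⟩ := shrink hp hT f hcont hf hS hSsub hε
    refine ⟨δ, hδ0, fun s hs1 hs2 hs3 => ?_⟩
    have hW : (⟨0, T, 0, s⟩ : Rect).Valid := ⟨hT.le, hs1⟩
    have hWV : (⟨0, T, 0, s⟩ : Rect) ≠ (⟨0, T, s, c₀⟩ : Rect) := by
      intro h
      injection h with h1 h2 h3 h4
      exact h0 (by rw [← h4, ← h3])
    refine strip_of_cut hp hT f hcont hf hSsub hS hWV
      (isPartition_hcut hS hs1 hs3) ?_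
    exact hδ _ hW le_rfl (by linarith) le_rfl (by linarith) le_rfl (by linarith) hs3 (by linarith)

lemma stripT {d₀ : ℝ} (hd0 : 0 ≤ d₀) (hdT : d₀ ≤ T) {ε : ℝ} (hε : 0 < ε) :
    ∃ δ > 0, ∀ t : ℝ, t ≤ T → t ≤ d₀ + δ → d₀ ≤ t →
      cVarSum p f ⟨0, T, d₀, t⟩ ≤ ENNReal.ofReal ε := by
  have hp0 : 0 < p := lt_of_lt_of_le one_pos hp
  by_cases h0 : d₀ = T
  · refine ⟨1, one_pos, fun t ht1 ht2 ht3 => ?_⟩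
    have : t = d₀ := le_antisymm (h0 ▸ ht1) ht3
    rw [cVarSum_deg hp0 f ⟨hT.le, by rw [this]⟩ (Or.inr (by rw [this]))]
    exact zero_le
  · have hS : (⟨0, T, d₀, T⟩ : Rect).Valid := ⟨hT.le, hdT⟩
    have hSsub : (⟨0, T, d₀, T⟩ : Rect).toSet ⊆ (Rect.mk 0 T 0 T).toSet :=
      toSet_mono le_rfl le_rfl hd0 le_rfl
    obtain ⟨δ, hδ0, hδ⟩ := shrink hp hT f hcont hf hS hSsub hε
    refine ⟨δ, hδ0, fun t ht1 ht2 ht3 => ?_⟩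
    have hW : (⟨0, T, t, T⟩ : Rect).Valid := ⟨hT.le, ht1⟩
    have hWV : (⟨0, T, t, T⟩ : Rect) ≠ (⟨0, T, d₀, t⟩ : Rect) := by
      intro h
      injection h with h1 h2 h3 h4
      exact h0 (by rw [← h3, ← h4])
    have hpart : IsPartition (⟨0, T, d₀, T⟩ : Rect)
        {(⟨0, T, d₀, t⟩ : Rect), (⟨0, T, t, T⟩ : Rect)} := isPartition_hcut hS ht3 ht1
    rw [Finset.pair_comm] at hpart
    refine strip_of_cut hp hT f hcont hf hSsub hS hWV hpart ?_
    exact hδ _ hW le_rfl (by linarith) le_rfl (by linarith) ht3 (by linarith) le_rfl (by linarith)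

end Strips

end CtrlVar

namespace CtrlVar

lemma rpow_max4_le {y1 y2 y3 y4 p : ℝ} (h1 : 0 ≤ y1) (h2 : 0 ≤ y2) (h3 : 0 ≤ y3) (h4 : 0 ≤ y4) :
    max (max y1 y2) (max y3 y4) ^ p ≤ y1 ^ p + y2 ^ p + y3 ^ p + y4 ^ p := by
  have n1 := Real.rpow_nonneg h1 p
  have n2 := Real.rpow_nonneg h2 p
  have n3 := Real.rpow_nonneg h3 p
  have n4 := Real.rpow_nonneg h4 p
  rcases max_choice (max y1 y2) (max y3 y4) with h | h <;> rw [h]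
  · rcases max_choice y1 y2 with h' | h' <;> rw [h'] <;> linarith
  · rcases max_choice y3 y4 with h' | h' <;> rw [h'] <;> linarith

/-- the pointwise inequality `(A+B)^p ≤ (1+θ)^p A^p + (1+θ⁻¹)^p B^p`-style estimate -/
lemma rpow_split {p θ X A B : ℝ} (hp : 1 ≤ p) (hθ : 0 < θ) (hX : 0 ≤ X) (hA : 0 ≤ A)
    (hB : 0 ≤ B) (hXAB : X ≤ A + B) :
    X ^ p ≤ (1 + θ) ^ p * A ^ p + (1 + θ⁻¹) ^ p * B ^ p := by
  have hp0 : (0 : ℝ) ≤ p := by linarith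
  have c1 : (0:ℝ) ≤ (1 + θ) ^ p := Real.rpow_nonneg (by linarith) p
  have c2 : (0:ℝ) ≤ (1 + θ⁻¹) ^ p := Real.rpow_nonneg (by positivity) p
  have nA := Real.rpow_nonneg hA p
  have nB := Real.rpow_nonneg hB p
  rcases le_or_gt B (θ * A) with hc | hc
  · have hX' : X ≤ (1 + θ) * A := by linarith
    calc X ^ p ≤ ((1 + θ) * A) ^ p := Real.rpow_le_rpow hX hX' hp0
      _ = (1 + θ) ^ p * A ^ p := Real.mul_rpow (by linarith) hA
      _ ≤ _ := by nlinarith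
  · have hA' : A ≤ θ⁻¹ * B := by
      rw [inv_mul_eq_div, le_div_iff₀ hθ]
      nlinarith
    have hX' : X ≤ (1 + θ⁻¹) * B := by nlinarith
    calc X ^ p ≤ ((1 + θ⁻¹) * B) ^ p := Real.rpow_le_rpow hX hX' hp0
      _ = (1 + θ⁻¹) ^ p * B ^ p := Real.mul_rpow (by positivity) hB
      _ ≤ _ := by nlinarith

lemma usc_decomp {p T : ℝ} (hp : 1 ≤ p) (hT : 0 < T) (f : ℝ × ℝ → ℝ)
    {θ : ℝ} (hθ : 0 < θ) {S R : Rect} (hS : S.Valid) (hR : R.Valid)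
    (h1 : S.a ≤ R.a) (h2 : R.b ≤ S.b) (h3 : S.c ≤ R.c) (h4 : R.d ≤ S.d) :
    cVarSum p f S ≤ ENNReal.ofReal ((1 + θ) ^ p) * cVarSum p f R +
      ENNReal.ofReal ((1 + θ⁻¹) ^ p * 4 ^ p) *
        (cVarSum p f ⟨S.a, R.a, S.c, S.d⟩ + cVarSum p f ⟨R.b, S.b, S.c, S.d⟩ +
         cVarSum p f ⟨R.a, R.b, S.c, R.c⟩ + cVarSum p f ⟨R.a, R.b, R.d, S.d⟩) := by
  have hp0 : 0 < p := lt_of_lt_of_le one_pos hp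
  set FL : Rect := ⟨S.a, R.a, S.c, S.d⟩ with hFL
  set FR : Rect := ⟨R.b, S.b, S.c, S.d⟩ with hFR
  set FB : Rect := ⟨R.a, R.b, S.c, R.c⟩ with hFB
  set FT : Rect := ⟨R.a, R.b, R.d, S.d⟩ with hFT
  have c1 : (0:ℝ) ≤ (1 + θ) ^ p := Real.rpow_nonneg (by linarith) p
  have c2 : (0:ℝ) ≤ (1 + θ⁻¹) ^ p * 4 ^ p := by
    apply mul_nonneg (Real.rpow_nonneg (by positivity) p) (Real.rpow_nonneg (by norm_num) p)
  apply cVarSum_le hp0 f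
  intro P hP
  -- the pointwise estimate
  have key : ∀ Q ∈ P, G p f Q ≤ (1 + θ) ^ p * G p f (mc R Q) +
      ((1 + θ⁻¹) ^ p * 4 ^ p) *
        (G p f (mc FL Q) + G p f (mc FR Q) + G p f (mc FB Q) + G p f (mc FT Q)) := by
    intro Q hQ
    have hQv := hP.1 Q hQ
    obtain ⟨hqa, hqb, hqc, hqd⟩ := coords_of_subset hQv (mem_of_mem_partition hP hQ)
    have m1 : med Q.a Q.b S.a = Q.a :=
      max_eq_left (le_trans (min_le_right _ _) hqa)
    have m2 : med Q.a Q.b S.b = Q.b := by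
      unfold med; rw [min_eq_left hqb]; exact max_eq_right hQv.1
    have m3 : med Q.c Q.d S.c = Q.c :=
      max_eq_left (le_trans (min_le_right _ _) hqc)
    have m4 : med Q.c Q.d S.d = Q.d := by
      unfold med; rw [min_eq_left hqd]; exact max_eq_right hQv.2
    have hid : Rect.inc f Q = Rect.inc f (mc FL Q) + Rect.inc f (mc FR Q) +
        Rect.inc f (mc FB Q) + Rect.inc f (mc FT Q) + Rect.inc f (mc R Q) := by
      show Rect.inc f Q = Rect.inc f (mc ⟨S.a, R.a, S.c, S.d⟩ Q) +
        Rect.inc f (mc ⟨R.b, S.b, S.c, S.d⟩ Q) + Rect.inc f (mc ⟨R.a, R.b, S.c, R.c⟩ Q) +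
        Rect.inc f (mc ⟨R.a, R.b, R.d, S.d⟩ Q) + Rect.inc f (mc R Q)
      unfold mc
      dsimp only
      rw [m1, m2, m3, m4]
      unfold Rect.inc
      dsimp only
      ring
    have htri : |Rect.inc f Q| ≤ |Rect.inc f (mc R Q)| +
        (|Rect.inc f (mc FL Q)| + |Rect.inc f (mc FR Q)| +
         |Rect.inc f (mc FB Q)| + |Rect.inc f (mc FT Q)|) := by
      rw [hid]
      have t1 := abs_add_le (Rect.inc f (mc FL Q)) (Rect.inc f (mc FR Q))
      have t2 := abs_add_le (Rect.inc f (mc FL Q) + Rect.inc f (mc FR Q)) (Rect.inc f (mc FB Q))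
      have t3 := abs_add_le (Rect.inc f (mc FL Q) + Rect.inc f (mc FR Q) + Rect.inc f (mc FB Q))
        (Rect.inc f (mc FT Q))
      have t4 := abs_add_le (Rect.inc f (mc FL Q) + Rect.inc f (mc FR Q) + Rect.inc f (mc FB Q) +
        Rect.inc f (mc FT Q)) (Rect.inc f (mc R Q))
      linarith
    have hsplit := rpow_split (X := |Rect.inc f Q|) (A := |Rect.inc f (mc R Q)|)
      (B := |Rect.inc f (mc FL Q)| + |Rect.inc f (mc FR Q)| +
        |Rect.inc f (mc FB Q)| + |Rect.inc f (mc FT Q)|) hp hθ (abs_nonneg _) (abs_nonneg _)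
      (by positivity) htri
    unfold G
    refine le_trans hsplit ?_
    apply add_le_add_right
    rw [mul_assoc]
    apply mul_le_mul_of_nonneg_left ?_ (Real.rpow_nonneg (by positivity) p)
    -- (y1+y2+y3+y4)^p ≤ 4^p * (y1^p+y2^p+y3^p+y4^p)
    set y1 := |Rect.inc f (mc FL Q)|
    set y2 := |Rect.inc f (mc FR Q)|
    set y3 := |Rect.inc f (mc FB Q)|
    set y4 := |Rect.inc f (mc FT Q)|
    have hy1 : 0 ≤ y1 := abs_nonneg _
    have hy2 : 0 ≤ y2 := abs_nonneg _
    have hy3 : 0 ≤ y3 := abs_nonneg _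
    have hy4 : 0 ≤ y4 := abs_nonneg _
    have hmax : y1 + y2 + y3 + y4 ≤ 4 * max (max y1 y2) (max y3 y4) := by
      have := le_max_left y1 y2
      have := le_max_right y1 y2
      have := le_max_left y3 y4
      have := le_max_right y3 y4
      have := le_max_left (max y1 y2) (max y3 y4)
      have := le_max_right (max y1 y2) (max y3 y4)
      linarith
    calc (y1 + y2 + y3 + y4) ^ p ≤ (4 * max (max y1 y2) (max y3 y4)) ^ p :=
          Real.rpow_le_rpow (by positivity) hmax (by linarith)
      _ = 4 ^ p * max (max y1 y2) (max y3 y4) ^ p :=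
          Real.mul_rpow (by norm_num) (by positivity)
      _ ≤ 4 ^ p * (y1 ^ p + y2 ^ p + y3 ^ p + y4 ^ p) := by
          apply mul_le_mul_of_nonneg_left (rpow_max4_le hy1 hy2 hy3 hy4)
            (Real.rpow_nonneg (by norm_num) p)
  -- sum it up (real side)
  have hsum : ∑ Q ∈ P, G p f Q ≤
      (1 + θ) ^ p * (∑ Q ∈ P, G p f (mc R Q)) +
      ((1 + θ⁻¹) ^ p * 4 ^ p) * ((∑ Q ∈ P, G p f (mc FL Q)) + (∑ Q ∈ P, G p f (mc FR Q)) +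
        (∑ Q ∈ P, G p f (mc FB Q)) + (∑ Q ∈ P, G p f (mc FT Q))) := by
    calc ∑ Q ∈ P, G p f Q
        ≤ ∑ Q ∈ P, ((1 + θ) ^ p * G p f (mc R Q) + ((1 + θ⁻¹) ^ p * 4 ^ p) *
          (G p f (mc FL Q) + G p f (mc FR Q) + G p f (mc FB Q) + G p f (mc FT Q))) :=
          Finset.sum_le_sum key
      _ = _ := by
          rw [Finset.sum_add_distrib, ← Finset.mul_sum, ← Finset.mul_sum]
          congr 1
          congr 1
          rw [Finset.sum_add_distrib, Finset.sum_add_distrib, Finset.sum_add_distrib]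
  -- pass to ENNReal
  have hnn : ∀ W : Rect, (0:ℝ) ≤ ∑ Q ∈ P, G p f (mc W Q) :=
    fun W => Finset.sum_nonneg fun Q _ => G_nonneg p f _
  calc ENNReal.ofReal (∑ Q ∈ P, G p f Q)
      ≤ ENNReal.ofReal ((1 + θ) ^ p * (∑ Q ∈ P, G p f (mc R Q)) +
        ((1 + θ⁻¹) ^ p * 4 ^ p) * ((∑ Q ∈ P, G p f (mc FL Q)) + (∑ Q ∈ P, G p f (mc FR Q)) +
          (∑ Q ∈ P, G p f (mc FB Q)) + (∑ Q ∈ P, G p f (mc FT Q)))) :=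
        ENNReal.ofReal_le_ofReal hsum
    _ ≤ ENNReal.ofReal ((1 + θ) ^ p * (∑ Q ∈ P, G p f (mc R Q))) +
        ENNReal.ofReal (((1 + θ⁻¹) ^ p * 4 ^ p) * ((∑ Q ∈ P, G p f (mc FL Q)) +
          (∑ Q ∈ P, G p f (mc FR Q)) + (∑ Q ∈ P, G p f (mc FB Q)) +
          (∑ Q ∈ P, G p f (mc FT Q)))) := ENNReal.ofReal_add_le
    _ ≤ _ := by
        apply add_le_add
        · rw [ENNReal.ofReal_mul c1]
          apply mul_le_mul_right
          exact sum_G_mc_le hp0 f hR (toSet_mono h1 h2 h3 h4) hP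
        · rw [ENNReal.ofReal_mul c2]
          apply mul_le_mul_right
          have e1 : ENNReal.ofReal ((∑ Q ∈ P, G p f (mc FL Q)) + (∑ Q ∈ P, G p f (mc FR Q)) +
              (∑ Q ∈ P, G p f (mc FB Q)) + (∑ Q ∈ P, G p f (mc FT Q))) ≤
              ENNReal.ofReal (∑ Q ∈ P, G p f (mc FL Q)) +
              ENNReal.ofReal (∑ Q ∈ P, G p f (mc FR Q)) +
              ENNReal.ofReal (∑ Q ∈ P, G p f (mc FB Q)) +
              ENNReal.ofReal (∑ Q ∈ P, G p f (mc FT Q)) := by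
            refine le_trans ENNReal.ofReal_add_le ?_
            refine add_le_add (le_trans ENNReal.ofReal_add_le ?_) le_rfl
            refine add_le_add (le_trans ENNReal.ofReal_add_le ?_) le_rfl
            exact le_rfl
          refine le_trans e1 ?_
          have vFL : FL.Valid := ⟨h1, hS.2⟩
          have vFR : FR.Valid := ⟨h2, hS.2⟩
          have vFB : FB.Valid := ⟨hR.1, h3⟩
          have vFT : FT.Valid := ⟨hR.1, h4⟩
          have sFL : FL.toSet ⊆ S.toSet := toSet_mono le_rfl (hR.1.trans h2) le_rfl le_rfl
          have sFR : FR.toSet ⊆ S.toSet := toSet_mono (h1.trans hR.1) le_rfl le_rfl le_rfl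
          have sFB : FB.toSet ⊆ S.toSet := toSet_mono h1 h2 le_rfl (hR.2.trans h4)
          have sFT : FT.toSet ⊆ S.toSet := toSet_mono h1 h2 (h3.trans hR.2) le_rfl
          exact add_le_add (add_le_add (add_le_add
            (sum_G_mc_le hp0 f vFL sFL hP) (sum_G_mc_le hp0 f vFR sFR hP))
            (sum_G_mc_le hp0 f vFB sFB hP)) (sum_G_mc_le hp0 f vFT sFT hP)

end CtrlVar

namespace CtrlVar

lemma usc_limit {p T : ℝ} (hp : 1 ≤ p) (hT : 0 < T) (f : ℝ × ℝ → ℝ)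
    (hcont : ContinuousOn f (Rect.mk 0 T 0 T).toSet)
    (hf : cVarSum p f (Rect.mk 0 T 0 T) ≠ ⊤)
    {R : Rect} (hR : R.Valid) (hRsub : R.toSet ⊆ (Rect.mk 0 T 0 T).toSet) {ε : ℝ} (hε : 0 < ε) :
    ∃ δ > 0, cVarSum p f ⟨max (R.a - δ) 0, min (R.b + δ) T, max (R.c - δ) 0, min (R.d + δ) T⟩
      ≤ cVarSum p f R + ENNReal.ofReal ε := by
  have hp0 : 0 < p := lt_of_lt_of_le one_pos hp
  obtain ⟨ra1, rb1, rc1, rd1⟩ := coords_of_subset hR hRsub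
  simp only [Rect.toSet] at ra1 rb1 rc1 rd1
  have hfin : cVarSum p f R ≠ ⊤ := cVarSum_ne_top hp0 hT f hf R hRsub
  set r : ℝ := (cVarSum p f R).toReal with hrdef
  have hr0 : 0 ≤ r := ENNReal.toReal_nonneg
  set β : ℝ := ε / (2 * (r + 1)) with hβdef
  have hβ : 0 < β := by positivity
  set θ : ℝ := (1 + β) ^ (p⁻¹ : ℝ) - 1 with hθdef
  have h1β : 1 < (1 + β) ^ (p⁻¹ : ℝ) := by
    rw [Real.one_lt_rpow_iff_of_pos (by linarith)]
    exact Or.inl ⟨by linarith, by positivity⟩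
  have hθ : 0 < θ := by rw [hθdef]; linarith
  have hθpow : (1 + θ) ^ p = 1 + β := by
    have h1 : (1 : ℝ) + θ = (1 + β) ^ (p⁻¹ : ℝ) := by rw [hθdef]; ring
    rw [h1, ← Real.rpow_mul (by linarith : (0:ℝ) ≤ 1 + β),
      inv_mul_cancel₀ (ne_of_gt hp0), Real.rpow_one]
  have hterm1 : ENNReal.ofReal ((1 + θ) ^ p) * cVarSum p f R
      ≤ cVarSum p f R + ENNReal.ofReal (ε / 2) := by
    rw [hθpow, ENNReal.ofReal_add (by norm_num) hβ.le, ENNReal.ofReal_one, add_mul, one_mul]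
    apply add_le_add_right
    conv_lhs => rw [← ENNReal.ofReal_toReal hfin]
    rw [← ENNReal.ofReal_mul hβ.le]
    apply ENNReal.ofReal_le_ofReal
    rw [hβdef, ← hrdef, div_mul_eq_mul_div, div_le_iff₀ (by positivity)]
    nlinarith
  set K : ℝ := (1 + θ⁻¹) ^ p * 4 ^ p with hKdef
  have hK0 : 0 ≤ K := by
    apply mul_nonneg (Real.rpow_nonneg (by positivity) p) (Real.rpow_nonneg (by norm_num) p)
  set ε' : ℝ := ε / (8 * (K + 1)) with hε'def
  have hε' : 0 < ε' := by positivity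
  obtain ⟨δ1, hδ10, hδL⟩ := stripL hp hT f hcont hf ra1 (rb1.trans' hR.1) hε'
  obtain ⟨δ2, hδ20, hδR⟩ := stripR hp hT f hcont hf (ra1.trans hR.1) rb1 hε'
  obtain ⟨δ3, hδ30, hδB⟩ := stripB hp hT f hcont hf rc1 (rd1.trans' hR.2) hε'
  obtain ⟨δ4, hδ40, hδT⟩ := stripT hp hT f hcont hf (rc1.trans hR.2) rd1 hε'
  set δ : ℝ := min (min δ1 δ2) (min δ3 δ4) with hδdef
  have hδ0 : 0 < δ := lt_min (lt_min hδ10 hδ20) (lt_min hδ30 hδ40)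
  have hd1 : δ ≤ δ1 := (min_le_left _ _).trans (min_le_left _ _)
  have hd2 : δ ≤ δ2 := (min_le_left _ _).trans (min_le_right _ _)
  have hd3 : δ ≤ δ3 := (min_le_right _ _).trans (min_le_left _ _)
  have hd4 : δ ≤ δ4 := (min_le_right _ _).trans (min_le_right _ _)
  refine ⟨δ, hδ0, ?_⟩
  set S : Rect := ⟨max (R.a - δ) 0, min (R.b + δ) T, max (R.c - δ) 0, min (R.d + δ) T⟩
    with hSdef
  have hSa : S.a ≤ R.a := max_le (by linarith) ra1
  have hSb : R.b ≤ S.b := le_min (by linarith) rb1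
  have hSc : S.c ≤ R.c := max_le (by linarith) rc1
  have hSd : R.d ≤ S.d := le_min (by linarith) rd1
  have hSa0 : 0 ≤ S.a := le_max_right _ _
  have hSbT : S.b ≤ T := min_le_right _ _
  have hSc0 : 0 ≤ S.c := le_max_right _ _
  have hSdT : S.d ≤ T := min_le_right _ _
  have hSv : S.Valid := ⟨hSa.trans (hR.1.trans hSb), hSc.trans (hR.2.trans hSd)⟩
  have hdec := usc_decomp hp hT f hθ hSv hR hSa hSb hSc hSd
  have bFL : cVarSum p f ⟨S.a, R.a, S.c, S.d⟩ ≤ ENNReal.ofReal ε' := by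
    refine le_trans (cVarSum_mono hp0 f (S := ⟨S.a, R.a, 0, T⟩) (W := ⟨S.a, R.a, S.c, S.d⟩)
      ⟨hSa.trans' le_rfl |>.trans' le_rfl |>.trans_eq rfl |>.trans le_rfl, hT.le⟩
      ⟨hSa, hSv.2⟩ le_rfl le_rfl hSc0 hSdT) ?_
    exact hδL S.a hSa0 (le_trans (by linarith) (le_max_left (R.a - δ) 0)) hSa
  have bFR : cVarSum p f ⟨R.b, S.b, S.c, S.d⟩ ≤ ENNReal.ofReal ε' := by
    refine le_trans (cVarSum_mono hp0 f (S := ⟨R.b, S.b, 0, T⟩) (W := ⟨R.b, S.b, S.c, S.d⟩)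
      ⟨hSb, hT.le⟩ ⟨hSb, hSv.2⟩ le_rfl le_rfl hSc0 hSdT) ?_
    exact hδR S.b hSbT (le_trans (min_le_left _ _) (by linarith)) hSb
  have bFB : cVarSum p f ⟨R.a, R.b, S.c, R.c⟩ ≤ ENNReal.ofReal ε' := by
    refine le_trans (cVarSum_mono hp0 f (S := ⟨0, T, S.c, R.c⟩) (W := ⟨R.a, R.b, S.c, R.c⟩)
      ⟨hT.le, hSc⟩ ⟨hR.1, hSc⟩ ra1 rb1 le_rfl le_rfl) ?_
    exact hδB S.c hSc0 (le_trans (by linarith) (le_max_left (R.c - δ) 0)) hSc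
  have bFT : cVarSum p f ⟨R.a, R.b, R.d, S.d⟩ ≤ ENNReal.ofReal ε' := by
    refine le_trans (cVarSum_mono hp0 f (S := ⟨0, T, R.d, S.d⟩) (W := ⟨R.a, R.b, R.d, S.d⟩)
      ⟨hT.le, hSd⟩ ⟨hR.1, hSd⟩ ra1 rb1 le_rfl le_rfl) ?_
    exact hδT S.d hSdT (le_trans (min_le_left _ _) (by linarith)) hSd
  have hsum4 : cVarSum p f ⟨S.a, R.a, S.c, S.d⟩ + cVarSum p f ⟨R.b, S.b, S.c, S.d⟩ +
      cVarSum p f ⟨R.a, R.b, S.c, R.c⟩ + cVarSum p f ⟨R.a, R.b, R.d, S.d⟩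
      ≤ ENNReal.ofReal (4 * ε') := by
    have : (4 : ℝ) * ε' = ε' + ε' + ε' + ε' := by ring
    rw [this, ENNReal.ofReal_add (by positivity) hε'.le, ENNReal.ofReal_add (by positivity)
      hε'.le, ENNReal.ofReal_add hε'.le hε'.le]
    exact add_le_add (add_le_add (add_le_add bFL bFR) bFB) bFT
  have hterm2 : ENNReal.ofReal K * (cVarSum p f ⟨S.a, R.a, S.c, S.d⟩ +
      cVarSum p f ⟨R.b, S.b, S.c, S.d⟩ + cVarSum p f ⟨R.a, R.b, S.c, R.c⟩ +
      cVarSum p f ⟨R.a, R.b, R.d, S.d⟩) ≤ ENNReal.ofReal (ε / 2) := by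
    refine le_trans (mul_le_mul_right hsum4 _) ?_
    rw [← ENNReal.ofReal_mul hK0]
    apply ENNReal.ofReal_le_ofReal
    have heq : K * (4 * ε') = (K / (K + 1)) * (ε / 2) := by
      rw [hε'def]; field_simp; ring
    rw [heq]
    have hle1 : K / (K + 1) ≤ 1 := by
      rw [div_le_one (by positivity)]; linarith
    nlinarith [div_nonneg hK0 (by positivity : (0:ℝ) ≤ K + 1)]
  calc cVarSum p f S
      ≤ ENNReal.ofReal ((1 + θ) ^ p) * cVarSum p f R + ENNReal.ofReal K *
        (cVarSum p f ⟨S.a, R.a, S.c, S.d⟩ + cVarSum p f ⟨R.b, S.b, S.c, S.d⟩ +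
         cVarSum p f ⟨R.a, R.b, S.c, R.c⟩ + cVarSum p f ⟨R.a, R.b, R.d, S.d⟩) := hdec
    _ ≤ (cVarSum p f R + ENNReal.ofReal (ε / 2)) + ENNReal.ofReal (ε / 2) :=
        add_le_add hterm1 hterm2
    _ = cVarSum p f R + ENNReal.ofReal ε := by
        rw [add_assoc, ← ENNReal.ofReal_add (by linarith) (by linarith)]
        norm_num

lemma dist_fst_le' {α β : Type*} [PseudoMetricSpace α] [PseudoMetricSpace β] (u v : α × β) :
    dist u.1 v.1 ≤ dist u v := by
  rw [Prod.dist_eq]; exact le_max_left _ _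

lemma dist_snd_le' {α β : Type*} [PseudoMetricSpace α] [PseudoMetricSpace β] (u v : α × β) :
    dist u.2 v.2 ≤ dist u v := by
  rw [Prod.dist_eq]; exact le_max_right _ _

end CtrlVar

/-- if `f : [0,T]² → ℝ` is continuous and of finite controlled
`p`-variation, then `ω(R) := |f|^p_{p-var;R}` is a 2D control. -/
theorem controlled_var_is_2D_control (p T : ℝ) (hp : 1 ≤ p) (hT : 0 < T)
    (f : ℝ × ℝ → ℝ) (hcont : ContinuousOn f (Rect.mk 0 T 0 T).toSet)
    (hf : cVarSum p f (Rect.mk 0 T 0 T) ≠ ⊤) :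
    Is2DControl T (fun R => cVarSum p f R) := by
  have hp0 : 0 < p := lt_of_lt_of_le one_pos hp
  refine ⟨fun R hsub => CtrlVar.cVarSum_ne_top hp0 hT f hf R hsub, ?_,
    fun R hR hdeg => CtrlVar.cVarSum_deg hp0 f hR hdeg,
    fun R hR hsub P hP => CtrlVar.superadditive hp0 hT f hf R hR hsub P hP⟩
  -- continuity
  intro x hx
  obtain ⟨hx0, hxab, hxbT, hy0, hycd, hydT⟩ := hx
  set R : Rect := ⟨x.1, x.2.1, x.2.2.1, x.2.2.2⟩ with hRdef
  have hRv : R.Valid := ⟨hxab, hycd⟩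
  have hRsub : R.toSet ⊆ (Rect.mk 0 T 0 T).toSet := CtrlVar.toSet_mono hx0 hxbT hy0 hydT
  have hfinR : cVarSum p f R ≠ ⊤ := CtrlVar.cVarSum_ne_top hp0 hT f hf R hRsub
  show Filter.Tendsto _ _ _
  rw [ENNReal.tendsto_nhds hfinR]
  intro ε hε
  -- real-valued epsilon
  obtain ⟨ε₀, hε₀, hε₀le⟩ : ∃ ε₀ : ℝ, 0 < ε₀ ∧ ENNReal.ofReal ε₀ ≤ ε := by
    by_cases htop : ε = ⊤
    · exact ⟨1, one_pos, by simp [htop]⟩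
    · exact ⟨ε.toReal, ENNReal.toReal_pos hε.ne' htop, (ENNReal.ofReal_toReal htop).le⟩
  -- upper semicontinuity data
  obtain ⟨δu, hδu0, hδu⟩ := CtrlVar.usc_limit hp hT f hcont hf hRv hRsub hε₀
  -- lower semicontinuity data
  have hlsc : ∃ δl > 0, ∀ W : Rect, W.Valid →
      W.a ≤ R.a + δl → R.b - δl ≤ W.b → W.c ≤ R.c + δl → R.d - δl ≤ W.d →
      cVarSum p f R ≤ cVarSum p f W + ENNReal.ofReal ε₀ := by
    by_cases hdeg : R.a = R.b ∨ R.c = R.d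
    · refine ⟨1, one_pos, fun W _ _ _ _ _ => ?_⟩
      rw [CtrlVar.cVarSum_deg hp0 f hRv hdeg]
      exact zero_le
    · push_neg at hdeg
      have hab : R.a < R.b := lt_of_le_of_ne hRv.1 hdeg.1
      have hcd : R.c < R.d := lt_of_le_of_ne hRv.2 hdeg.2
      obtain ⟨δs, hδs0, hδs⟩ := CtrlVar.shrink hp hT f hcont hf hRv hRsub hε₀
      set δl : ℝ := min δs (min ((R.b - R.a) / 4) ((R.d - R.c) / 4)) with hδldef
      have hδl0 : 0 < δl := lt_min hδs0 (lt_min (by linarith) (by linarith))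
      have hδls : δl ≤ δs := min_le_left _ _
      have hδlb : δl ≤ (R.b - R.a) / 4 := (min_le_right _ _).trans (min_le_left _ _)
      have hδld : δl ≤ (R.d - R.c) / 4 := (min_le_right _ _).trans (min_le_right _ _)
      refine ⟨δl, hδl0, fun W hW h1 h2 h3 h4 => ?_⟩
      set V : Rect := ⟨R.a + δl, R.b - δl, R.c + δl, R.d - δl⟩ with hVdef
      have hVv : V.Valid := ⟨by simp only [hVdef]; linarith, by simp only [hVdef]; linarith⟩
      have step1 : cVarSum p f R ≤ cVarSum p f V + ENNReal.ofReal ε₀ :=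
        hδs V hVv (by simp only [hVdef]; linarith) (by simp only [hVdef]; linarith)
          (by simp only [hVdef]; linarith) (by simp only [hVdef]; linarith)
          (by simp only [hVdef]; linarith) (by simp only [hVdef]; linarith)
          (by simp only [hVdef]; linarith) (by simp only [hVdef]; linarith)
      have step2 : cVarSum p f V ≤ cVarSum p f W :=
        CtrlVar.cVarSum_mono hp0 f hW hVv h1 h2 h3 h4
      exact step1.trans (add_le_add_left step2 _)
  obtain ⟨δl, hδl0, hδl⟩ := hlsc
  set δ : ℝ := min δu δl with hδdef
  have hδ0 : 0 < δ := lt_min hδu0 hδl0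
  rw [eventually_nhdsWithin_iff, Metric.eventually_nhds_iff]
  refine ⟨δ, hδ0, ?_⟩
  intro y hdist hy
  obtain ⟨gy0, gyab, gybT, gz0, gzcd, gzdT⟩ := hy
  -- coordinate distances
  have k1 : |y.1 - x.1| < δ := by
    rw [← Real.dist_eq]
    exact lt_of_le_of_lt (CtrlVar.dist_fst_le' y x) hdist
  have k2 : |y.2.1 - x.2.1| < δ := by
    rw [← Real.dist_eq]
    exact lt_of_le_of_lt ((CtrlVar.dist_fst_le' y.2 x.2).trans (CtrlVar.dist_snd_le' y x)) hdist
  have k3 : |y.2.2.1 - x.2.2.1| < δ := by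
    rw [← Real.dist_eq]
    exact lt_of_le_of_lt ((CtrlVar.dist_fst_le' y.2.2 x.2.2).trans
      ((CtrlVar.dist_snd_le' y.2 x.2).trans (CtrlVar.dist_snd_le' y x))) hdist
  have k4 : |y.2.2.2 - x.2.2.2| < δ := by
    rw [← Real.dist_eq]
    exact lt_of_le_of_lt ((CtrlVar.dist_snd_le' y.2.2 x.2.2).trans
      ((CtrlVar.dist_snd_le' y.2 x.2).trans (CtrlVar.dist_snd_le' y x))) hdist
  obtain ⟨k1a, k1b⟩ := abs_lt.mp k1
  obtain ⟨k2a, k2b⟩ := abs_lt.mp k2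
  obtain ⟨k3a, k3b⟩ := abs_lt.mp k3
  obtain ⟨k4a, k4b⟩ := abs_lt.mp k4
  have hδδu : δ ≤ δu := min_le_left _ _
  have hδδl : δ ≤ δl := min_le_right _ _
  set R' : Rect := ⟨y.1, y.2.1, y.2.2.1, y.2.2.2⟩ with hR'def
  have hR'v : R'.Valid := ⟨gyab, gzcd⟩
  -- upper bound
  have hupper : cVarSum p f R' ≤ cVarSum p f R + ENNReal.ofReal ε₀ := by
    refine le_trans (CtrlVar.cVarSum_mono hp0 f (S := ⟨max (R.a - δu) 0, min (R.b + δu) T,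
      max (R.c - δu) 0, min (R.d + δu) T⟩) ?_ hR'v ?_ ?_ ?_ ?_) hδu
    · constructor
      · exact le_trans (max_le (by simp only [hRdef]; linarith) gy0)
          (le_trans gyab (le_min (by simp only [hRdef]; linarith) gybT))
      · exact le_trans (max_le (by simp only [hRdef]; linarith) gz0)
          (le_trans gzcd (le_min (by simp only [hRdef]; linarith) gzdT))
    · exact max_le (by simp only [hRdef]; linarith) gy0
    · exact le_min (by simp only [hRdef]; linarith) gybT
    · exact max_le (by simp only [hRdef]; linarith) gz0
    · exact le_min (by simp only [hRdef]; linarith) gzdT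
  -- lower bound
  have hlower : cVarSum p f R ≤ cVarSum p f R' + ENNReal.ofReal ε₀ :=
    hδl R' hR'v (by simp only [hRdef, hR'def]; linarith) (by simp only [hRdef, hR'def]; linarith)
      (by simp only [hRdef, hR'def]; linarith) (by simp only [hRdef, hR'def]; linarith)
  constructor
  · apply tsub_le_iff_right.mpr
    exact le_trans hlower (add_le_add_right hε₀le _)
  · exact le_trans hupper (add_le_add_right hε₀le _)
end
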